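/- arXiv:1201.6404 — 8 statements merged into one kernel-verified Lean document; each statement's English description precedes it below -/
import Mathlib

section
/- Let c : ℝ^d × ℝ^d → ℝ be continuous and bounded. Let h̄ be a nonnegative function in L^∞(ℝ^d × ℝ^d) with compact support, and let f, g be nonnegative compactly supported functions in L¹(ℝ^d) with equal total mass such that Γ(f,g)^h̄ is nonempty. Then the infimum of I_c over Γ(f,g)^h̄ is attained: there exists h* ∈ Γ(f,g)^h̄ with I_c(h*) ≤ I_c(h) for every h ∈ Γ(f,g)^h̄. -/
open MeasureTheory Filter Set Topology

noncomputable section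

/-- The transportation cost `I_c(h) = ∫∫ c(x,y) h(x,y) dx dy` on `ℝ^d × ℝ^d`. -/
def Icost {d : ℕ} (c h : ((Fin d → ℝ) × (Fin d → ℝ)) → ℝ) : ℝ :=
  ∫ p, c p * h p

/-- `h ∈ Γ(f,g)`: `h` is a nonnegative integrable joint density on `ℝ^d × ℝ^d`
with marginals `f` and `g`. -/
def InGamma {d : ℕ} (f g : (Fin d → ℝ) → ℝ)
    (h : ((Fin d → ℝ) × (Fin d → ℝ)) → ℝ) : Prop :=
  Integrable h volume ∧ (∀ᵐ p ∂volume, 0 ≤ h p) ∧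
    (∀ᵐ x ∂volume, (∫ y, h (x, y)) = f x) ∧
    (∀ᵐ y ∂volume, (∫ x, h (x, y)) = g y)

/-- `h ∈ Γ(f,g)^h̄`: `h ∈ Γ(f,g)` and `h` is dominated by `h̄` a.e. -/
def InGammaBar {d : ℕ} (f g : (Fin d → ℝ) → ℝ)
    (hbar h : ((Fin d → ℝ) × (Fin d → ℝ)) → ℝ) : Prop :=
  InGamma f g h ∧ ∀ᵐ p ∂volume, h p ≤ hbar p

/-- Membership in `L²` from a pointwise a.e. bound on the square by an integrable function. -/
lemma memL2_of_sq_le {α : Type*} [MeasurableSpace α] {μ : Measure α} {h b : α → ℝ}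
    (hm : AEStronglyMeasurable h μ) (hb : Integrable b μ)
    (hdom : ∀ᵐ p ∂μ, h p ^ 2 ≤ b p) : MemLp h 2 μ := by
  rw [memLp_two_iff_integrable_sq hm]
  refine hb.mono' ((hm.mul hm).congr ?_) ?_
  · filter_upwards with p
    simp [pow_two]
  · filter_upwards [hdom] with p hp
    simpa [Real.norm_eq_abs, abs_of_nonneg (sq_nonneg (h p))] using hp

/-- `InGamma` is invariant under a.e. modification. -/
lemma InGamma.congr_ae {d : ℕ} {f g : (Fin d → ℝ) → ℝ}
    {h₁ h₂ : ((Fin d → ℝ) × (Fin d → ℝ)) → ℝ}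
    (hae : h₁ =ᵐ[volume] h₂) (H : InGamma f g h₁) : InGamma f g h₂ := by
  obtain ⟨hint, h0, hm1, hm2⟩ := H
  have haeP : ∀ᵐ p ∂((volume : Measure (Fin d → ℝ)).prod volume), h₁ p = h₂ p := by
    rw [← Measure.volume_eq_prod]; exact hae
  have hsec1 : ∀ᵐ x ∂(volume : Measure (Fin d → ℝ)),
      ∀ᵐ y ∂(volume : Measure (Fin d → ℝ)), h₁ (x, y) = h₂ (x, y) :=
    Measure.ae_ae_of_ae_prod haeP
  have haeswap : ∀ᵐ q ∂((volume : Measure (Fin d → ℝ)).prod volume), h₁ q.swap = h₂ q.swap :=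
    Measure.measurePreserving_swap.quasiMeasurePreserving.ae haeP
  have hsec2 : ∀ᵐ y ∂(volume : Measure (Fin d → ℝ)),
      ∀ᵐ x ∂(volume : Measure (Fin d → ℝ)), h₁ (x, y) = h₂ (x, y) :=
    Measure.ae_ae_of_ae_prod haeswap
  refine ⟨hint.congr hae, ?_, ?_, ?_⟩
  · filter_upwards [h0, hae] with p hp he; rw [← he]; exact hp
  · filter_upwards [hsec1, hm1] with x hx hfx
    rw [← hfx]
    exact integral_congr_ae (hx.mono fun y hy => hy.symm) |>.symm ▸ rfl
  · filter_upwards [hsec2, hm2] with y hy hgy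
    rw [← hgy]
    exact (integral_congr_ae (hy.mono fun x hx => hx)).symm

lemma InGammaBar.congr_ae {d : ℕ} {f g hbar : _} {h₁ h₂ : ((Fin d → ℝ) × (Fin d → ℝ)) → ℝ}
    (hae : h₁ =ᵐ[volume] h₂) (H : InGammaBar f g hbar h₁) : InGammaBar f g hbar h₂ := by
  refine ⟨H.1.congr_ae hae, ?_⟩
  filter_upwards [H.2, hae] with p hp he; rw [← he]; exact hp

set_option maxHeartbeats 2000000 in
/-- **Existence** for optimal transportation with capacity constraints:
if the cost `c` is continuous and bounded, `h̄` is a nonnegative `L^∞` capacity bound with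
compact support, and `f, g` are nonnegative compactly supported integrable marginals of equal
total mass with `Γ(f,g)^h̄ ≠ ∅`, then `I_c` attains its minimum on `Γ(f,g)^h̄`. -/
theorem existence_constrained (d : ℕ)
    (c : ((Fin d → ℝ) × (Fin d → ℝ)) → ℝ)
    (hc_cont : Continuous c) (hc_bdd : ∃ M, ∀ p, |c p| ≤ M)
    (hbar : ((Fin d → ℝ) × (Fin d → ℝ)) → ℝ)
    (hbar_meas : Measurable hbar) (hbar_nonneg : ∀ p, 0 ≤ hbar p)
    (hbar_bdd : ∃ M, ∀ᵐ p ∂volume, hbar p ≤ M)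
    (hbar_supp : HasCompactSupport hbar)
    (f g : (Fin d → ℝ) → ℝ)
    (hf_int : Integrable f volume) (hg_int : Integrable g volume)
    (hf_nonneg : ∀ x, 0 ≤ f x) (hg_nonneg : ∀ y, 0 ≤ g y)
    (hf_supp : HasCompactSupport f) (hg_supp : HasCompactSupport g)
    (hmass : ∫ x, f x = ∫ y, g y)
    (hne : ∃ h, InGammaBar f g hbar h) :
    ∃ hstar, InGammaBar f g hbar hstar ∧
      ∀ h, InGammaBar f g hbar h → Icost c hstar ≤ Icost c h := by
  classical
  obtain ⟨M₀, hM₀⟩ := hbar_bdd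
  obtain ⟨Mc, hMc⟩ := hc_bdd
  set M : ℝ := max M₀ 0 with hMdef
  have hM0 : 0 ≤ M := le_max_right _ _
  have hM : ∀ᵐ p ∂(volume : Measure ((Fin d → ℝ) × (Fin d → ℝ))), hbar p ≤ M := by
    filter_upwards [hM₀] with p hp; exact hp.trans (le_max_left _ _)
  set K : Set ((Fin d → ℝ) × (Fin d → ℝ)) := tsupport hbar with hKdef
  have hKc : IsCompact K := hbar_supp
  have hKm : MeasurableSet K := (isClosed_tsupport hbar).measurableSet
  have hKfin : volume K < ⊤ := hKc.measure_lt_top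
  have hind_int : ∀ C : ℝ, Integrable (K.indicator fun _ => C) volume := fun C =>
    (integrable_indicator_iff hKm).2 (integrableOn_const hKfin.ne)
  have hbar_int : Integrable hbar volume := by
    refine (hind_int M).mono' hbar_meas.aestronglyMeasurable ?_
    filter_upwards [hM] with p hp
    rw [Real.norm_eq_abs, abs_of_nonneg (hbar_nonneg p)]
    by_cases hpK : p ∈ K
    · simpa [Set.indicator_of_mem hpK] using hp
    · simp [Set.indicator_of_notMem hpK, image_eq_zero_of_notMem_tsupport hpK]
  have hsq_bar : ∀ᵐ p ∂(volume : Measure _), hbar p ^ 2 ≤ K.indicator (fun _ => M ^ 2) p := by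
    filter_upwards [hM] with p hp
    by_cases hpK : p ∈ K
    · rw [Set.indicator_of_mem hpK]
      have := hbar_nonneg p; nlinarith
    · rw [Set.indicator_of_notMem hpK, image_eq_zero_of_notMem_tsupport hpK]; norm_num
  have hbar_mem2 : MemLp hbar 2 volume :=
    memL2_of_sq_le hbar_meas.aestronglyMeasurable (hind_int _) hsq_bar
  have vanishK : ∀ h' : ((Fin d → ℝ) × (Fin d → ℝ)) → ℝ,
      (∀ᵐ p ∂volume, 0 ≤ h' p) → (∀ᵐ p ∂volume, h' p ≤ hbar p) →
      ∀ᵐ p ∂volume, p ∉ K → h' p = 0 := by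
    intro h' h0 hle
    filter_upwards [h0, hle] with p hp0 hple hpK
    have hz := image_eq_zero_of_notMem_tsupport (f := hbar) hpK
    linarith [hp0, hple]
  have hmem2_of_feas : ∀ h', (∀ᵐ p ∂volume, 0 ≤ h' p) → (∀ᵐ p ∂volume, h' p ≤ hbar p) →
      AEStronglyMeasurable h' volume → MemLp h' 2 volume := by
    intro h' h0 hle hm
    refine memL2_of_sq_le hm (hind_int (M ^ 2)) ?_
    filter_upwards [h0, hle, hM, vanishK h' h0 hle] with p h0p hlep hMp hv
    by_cases hpK : p ∈ K
    · rw [Set.indicator_of_mem hpK]; nlinarith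
    · rw [Set.indicator_of_notMem hpK, hv hpK]; norm_num
  obtain ⟨r, hKr⟩ := hKc.isBounded.subset_closedBall 0
  set B : Set (Fin d → ℝ) := Metric.closedBall 0 r with hBdef
  have hBm : MeasurableSet B := measurableSet_closedBall
  have hBfin : volume B < ⊤ := (isCompact_closedBall _ _).measure_lt_top
  have hKBB : K ⊆ B ×ˢ B := by
    intro p hp
    have h := hKr hp
    rw [Metric.mem_closedBall, Prod.dist_eq, max_le_iff] at h
    exact ⟨Metric.mem_closedBall.2 h.1, Metric.mem_closedBall.2 h.2⟩
  have hrestrict1 : ∀ s : Set (Fin d → ℝ), MeasurableSet s →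
      (volume : Measure ((Fin d → ℝ) × (Fin d → ℝ))).restrict (s ×ˢ (univ : Set (Fin d → ℝ)))
        = ((volume : Measure (Fin d → ℝ)).restrict s).prod (volume : Measure (Fin d → ℝ)) := by
    intro s hs
    rw [Measure.volume_eq_prod, ← Measure.prod_restrict, Measure.restrict_univ]
  have hrestrict2 : ∀ t : Set (Fin d → ℝ), MeasurableSet t →
      (volume : Measure ((Fin d → ℝ) × (Fin d → ℝ))).restrict ((univ : Set (Fin d → ℝ)) ×ˢ t)
        = (volume : Measure (Fin d → ℝ)).prod ((volume : Measure (Fin d → ℝ)).restrict t) := by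
    intro t ht
    rw [Measure.volume_eq_prod, ← Measure.prod_restrict, Measure.restrict_univ]
  have hstep2 : ∀ h' : ((Fin d → ℝ) × (Fin d → ℝ)) → ℝ, Integrable h' volume →
      ∀ s : Set (Fin d → ℝ), MeasurableSet s →
      ∫ p in s ×ˢ (univ : Set (Fin d → ℝ)), h' p = ∫ x in s, ∫ y, h' (x, y) := by
    intro h' hint s hs
    have h1 := hrestrict1 s hs
    have hint' : Integrable h'
        (((volume : Measure (Fin d → ℝ)).restrict s).prod (volume : Measure (Fin d → ℝ))) := by
      rw [← h1]; exact hint.integrableOn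
    calc ∫ p in s ×ˢ (univ : Set (Fin d → ℝ)), h' p
        = ∫ p, h' p ∂(((volume : Measure (Fin d → ℝ)).restrict s).prod volume) := by rw [← h1]
      _ = ∫ x in s, ∫ y, h' (x, y) := MeasureTheory.integral_prod _ hint'
  have hstep2' : ∀ h' : ((Fin d → ℝ) × (Fin d → ℝ)) → ℝ, Integrable h' volume →
      ∀ t : Set (Fin d → ℝ), MeasurableSet t →
      ∫ p in (univ : Set (Fin d → ℝ)) ×ˢ t, h' p = ∫ y in t, ∫ x, h' (x, y) := by
    intro h' hint t ht
    have h1 := hrestrict2 t ht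
    have hint' : Integrable h'
        ((volume : Measure (Fin d → ℝ)).prod ((volume : Measure (Fin d → ℝ)).restrict t)) := by
      rw [← h1]; exact hint.integrableOn
    calc ∫ p in (univ : Set (Fin d → ℝ)) ×ˢ t, h' p
        = ∫ p, h' p ∂((volume : Measure (Fin d → ℝ)).prod ((volume : Measure (Fin d → ℝ)).restrict t)) := by
          rw [← h1]
      _ = ∫ y in t, ∫ x, h' (x, y) := MeasureTheory.integral_prod_symm _ hint'
  have hstep1 : ∀ h' : ((Fin d → ℝ) × (Fin d → ℝ)) → ℝ,
      (∀ᵐ p ∂(volume : Measure _), p ∉ K → h' p = 0) →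
      ∀ s : Set (Fin d → ℝ), MeasurableSet s →
      ∫ p in s ×ˢ B, h' p = ∫ p in s ×ˢ (univ : Set (Fin d → ℝ)), h' p := by
    intro h' hv s hs
    rw [← integral_indicator (hs.prod hBm), ← integral_indicator (hs.prod MeasurableSet.univ)]
    refine integral_congr_ae ?_
    filter_upwards [hv] with p hp
    by_cases h1 : p.1 ∈ s
    · by_cases h2 : p.2 ∈ B
      · simp [Set.indicator_apply, Set.mem_prod, h1, h2]
      · have hz : h' p = 0 := hp fun hK => h2 (hKBB hK).2
        simp [Set.indicator_apply, Set.mem_prod, h1, h2, hz]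
    · simp [Set.indicator_apply, Set.mem_prod, h1]
  have hstep1' : ∀ h' : ((Fin d → ℝ) × (Fin d → ℝ)) → ℝ,
      (∀ᵐ p ∂(volume : Measure _), p ∉ K → h' p = 0) →
      ∀ t : Set (Fin d → ℝ), MeasurableSet t →
      ∫ p in B ×ˢ t, h' p = ∫ p in (univ : Set (Fin d → ℝ)) ×ˢ t, h' p := by
    intro h' hv t ht
    rw [← integral_indicator (hBm.prod ht), ← integral_indicator (MeasurableSet.univ.prod ht)]
    refine integral_congr_ae ?_
    filter_upwards [hv] with p hp
    by_cases h2 : p.2 ∈ t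
    · by_cases h1 : p.1 ∈ B
      · simp [Set.indicator_apply, Set.mem_prod, h1, h2]
      · have hz : h' p = 0 := hp fun hK => h1 (hKBB hK).1
        simp [Set.indicator_apply, Set.mem_prod, h1, h2, hz]
    · simp [Set.indicator_apply, Set.mem_prod, h2]
  -- the Hilbert space `L²` and the weak-star machinery
  set Hsp := Lp ℝ 2 (volume : Measure ((Fin d → ℝ) × (Fin d → ℝ))) with hHdef
  set reprL : WeakDual ℝ Hsp → Hsp :=
    fun L => (InnerProductSpace.toDual ℝ Hsp).symm (WeakDual.toStrongDual L) with hreprdef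
  have hLapp : ∀ (L : WeakDual ℝ Hsp) (ψ : Hsp), L ψ = @inner ℝ _ _ (reprL L) ψ := by
    intro L ψ
    have h1 : WeakDual.toStrongDual L = InnerProductSpace.toDual ℝ Hsp (reprL L) :=
      (LinearIsometryEquiv.apply_symm_apply _ _).symm
    calc L ψ = (WeakDual.toStrongDual L) ψ := rfl
      _ = (InnerProductSpace.toDual ℝ Hsp (reprL L)) ψ := by rw [h1]
      _ = @inner ℝ _ _ (reprL L) ψ := InnerProductSpace.toDual_apply_apply
  have hLind : ∀ (L : WeakDual ℝ Hsp) {s : Set ((Fin d → ℝ) × (Fin d → ℝ))}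
      (hs : MeasurableSet s) (hμs : volume s ≠ ⊤),
      L (indicatorConstLp 2 hs hμs (1 : ℝ)) = ∫ p in s, (reprL L : _ → ℝ) p := by
    intro L s hs hμs
    rw [hLapp, real_inner_comm, L2.inner_indicatorConstLp_one hs hμs]
  have hprodfin : ∀ s : Set (Fin d → ℝ), volume s < ⊤ → volume (s ×ˢ B) ≠ ⊤ := by
    intro s hμs
    rw [Measure.volume_eq_prod, Measure.prod_prod]
    exact (ENNReal.mul_lt_top hμs hBfin).ne
  have hprodfin' : ∀ t : Set (Fin d → ℝ), volume t < ⊤ → volume (B ×ˢ t) ≠ ⊤ := by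
    intro t hμt
    rw [Measure.volume_eq_prod, Measure.prod_prod]
    exact (ENNReal.mul_lt_top hBfin hμt).ne
  set T : Set (WeakDual ℝ Hsp) := {L | InGammaBar f g hbar (⇑(reprL L))} with hTdef
  set Cset : Set (WeakDual ℝ Hsp) := {L |
    (∀ (s : Set ((Fin d → ℝ) × (Fin d → ℝ))) (hs : MeasurableSet s) (hμs : volume s ≠ ⊤),
        0 ≤ L (indicatorConstLp 2 hs hμs (1 : ℝ))) ∧
    (∀ (s : Set ((Fin d → ℝ) × (Fin d → ℝ))) (hs : MeasurableSet s) (hμs : volume s ≠ ⊤),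
        L (indicatorConstLp 2 hs hμs (1 : ℝ)) ≤ ∫ p in s, hbar p) ∧
    (∀ (s : Set (Fin d → ℝ)) (hs : MeasurableSet s) (hμs : volume s < ⊤),
        L (indicatorConstLp 2 (hs.prod hBm) (hprodfin s hμs) (1 : ℝ)) = ∫ x in s, f x) ∧
    (∀ (t : Set (Fin d → ℝ)) (ht : MeasurableSet t) (hμt : volume t < ⊤),
        L (indicatorConstLp 2 (hBm.prod ht) (hprodfin' t hμt) (1 : ℝ)) = ∫ y in t, g y)}
    with hCdef
  -- The feasible set agrees with the evaluation-defined set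
  have hT_eq : T = Cset := by
    ext L
    set hl : ((Fin d → ℝ) × (Fin d → ℝ)) → ℝ := ⇑(reprL L) with hldef
    constructor
    · rintro ⟨⟨hint, h0, hm1, hm2⟩, hle⟩
      have hv := vanishK hl h0 hle
      refine ⟨?_, ?_, ?_, ?_⟩
      · intro s hs hμs
        rw [hLind L hs hμs]
        exact integral_nonneg_of_ae (ae_restrict_of_ae h0)
      · intro s hs hμs
        rw [hLind L hs hμs]
        exact integral_mono_ae hint.integrableOn hbar_int.integrableOn (ae_restrict_of_ae hle)
      · intro s hs hμs
        rw [hLind L (hs.prod hBm) (hprodfin s hμs), hstep1 hl hv s hs, hstep2 hl hint s hs]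
        exact setIntegral_congr_ae hs (hm1.mono fun x hx _ => hx)
      · intro t ht hμt
        rw [hLind L (hBm.prod ht) (hprodfin' t hμt), hstep1' hl hv t ht,
          hstep2' hl hint t ht]
        exact setIntegral_congr_ae ht (hm2.mono fun y hy _ => hy)
    · rintro ⟨C1, C2, C3, C4⟩
      have hl_meas : AEStronglyMeasurable hl volume := Lp.aestronglyMeasurable (reprL L)
      have hfin : ∀ s : Set ((Fin d → ℝ) × (Fin d → ℝ)), MeasurableSet s → volume s < ⊤ →
          IntegrableOn hl s volume := by
        intro s hs hμs
        have hm2' : MemLp hl 2 ((volume : Measure _).restrict s) := (Lp.memLp (reprL L)).restrict s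
        haveI : IsFiniteMeasure ((volume : Measure ((Fin d → ℝ) × (Fin d → ℝ))).restrict s) :=
          ⟨by rwa [Measure.restrict_apply_univ]⟩
        exact hm2'.integrable one_le_two
      have h0 : ∀ᵐ p ∂(volume : Measure _), 0 ≤ hl p := by
        refine ae_nonneg_of_forall_setIntegral_nonneg_of_sigmaFinite hfin ?_
        intro s hs hμs
        rw [← hLind L hs hμs.ne]
        exact C1 s hs hμs.ne
      have hle : ∀ᵐ p ∂(volume : Measure _), hl p ≤ hbar p := by
        have hsub : ∀ᵐ p ∂(volume : Measure _), 0 ≤ hbar p - hl p := by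
          refine ae_nonneg_of_forall_setIntegral_nonneg_of_sigmaFinite
            (fun s hs hμs => hbar_int.integrableOn.sub (hfin s hs hμs)) ?_
          intro s hs hμs
          rw [integral_sub hbar_int.integrableOn (hfin s hs hμs)]
          have hC := C2 s hs hμs.ne
          rw [hLind L hs hμs.ne] at hC
          linarith
        filter_upwards [hsub] with p hp; linarith
      have hint : Integrable hl volume := by
        refine hbar_int.mono' hl_meas ?_
        filter_upwards [h0, hle] with p a b
        rw [Real.norm_eq_abs, abs_of_nonneg a]; exact b
      have hv := vanishK hl h0 hle
      have hintprod : Integrable hl ((volume : Measure (Fin d → ℝ)).prod volume) := by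
        rw [← Measure.volume_eq_prod]; exact hint
      have hm1 : ∀ᵐ x ∂(volume : Measure (Fin d → ℝ)), (∫ y, hl (x, y)) = f x := by
        have : (fun x => ∫ y, hl (x, y)) =ᵐ[volume] f := by
          refine ae_eq_of_forall_setIntegral_eq_of_sigmaFinite
            (fun s hs hμs => hintprod.integral_prod_left.integrableOn)
            (fun s hs hμs => hf_int.integrableOn) ?_
          intro s hs hμs
          rw [← hstep2 hl hint s hs, ← hstep1 hl hv s hs,
            ← hLind L (hs.prod hBm) (hprodfin s hμs)]
          exact C3 s hs hμs
        filter_upwards [this] with x hx; simpa using hx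
      have hm2 : ∀ᵐ y ∂(volume : Measure (Fin d → ℝ)), (∫ x, hl (x, y)) = g y := by
        have : (fun y => ∫ x, hl (x, y)) =ᵐ[volume] g := by
          refine ae_eq_of_forall_setIntegral_eq_of_sigmaFinite
            (fun t ht hμt => hintprod.integral_prod_right.integrableOn)
            (fun t ht hμt => hg_int.integrableOn) ?_
          intro t ht hμt
          rw [← hstep2' hl hint t ht, ← hstep1' hl hv t ht,
            ← hLind L (hBm.prod ht) (hprodfin' t hμt)]
          exact C4 t ht hμt
        filter_upwards [this] with y hy; simpa using hy
      exact ⟨⟨hint, h0, hm1, hm2⟩, hle⟩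
  have hT_closed : IsClosed T := by
    rw [hT_eq]
    have hCeq : Cset =
        (⋂ (s : Set ((Fin d → ℝ) × (Fin d → ℝ))) (hs : MeasurableSet s) (hμs : volume s ≠ ⊤),
          {L : WeakDual ℝ Hsp | 0 ≤ L (indicatorConstLp 2 hs hμs (1 : ℝ))}) ∩
        ((⋂ (s : Set ((Fin d → ℝ) × (Fin d → ℝ))) (hs : MeasurableSet s) (hμs : volume s ≠ ⊤),
          {L : WeakDual ℝ Hsp | L (indicatorConstLp 2 hs hμs (1 : ℝ)) ≤ ∫ p in s, hbar p}) ∩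
        ((⋂ (s : Set (Fin d → ℝ)) (hs : MeasurableSet s) (hμs : volume s < ⊤),
          {L : WeakDual ℝ Hsp |
            L (indicatorConstLp 2 (hs.prod hBm) (hprodfin s hμs) (1 : ℝ)) = ∫ x in s, f x}) ∩
        (⋂ (t : Set (Fin d → ℝ)) (ht : MeasurableSet t) (hμt : volume t < ⊤),
          {L : WeakDual ℝ Hsp |
            L (indicatorConstLp 2 (hBm.prod ht) (hprodfin' t hμt) (1 : ℝ)) = ∫ y in t, g y}))) := by
      ext L
      simp only [hCdef, Set.mem_setOf_eq, Set.mem_inter_iff, Set.mem_iInter]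
    rw [hCeq]
    refine IsClosed.inter ?_ (IsClosed.inter ?_ (IsClosed.inter ?_ ?_))
    · exact isClosed_iInter fun s => isClosed_iInter fun hs => isClosed_iInter fun hμs =>
        isClosed_le continuous_const (WeakDual.eval_continuous _)
    · exact isClosed_iInter fun s => isClosed_iInter fun hs => isClosed_iInter fun hμs =>
        isClosed_le (WeakDual.eval_continuous _) continuous_const
    · exact isClosed_iInter fun s => isClosed_iInter fun hs => isClosed_iInter fun hμs =>
        isClosed_eq (WeakDual.eval_continuous _) continuous_const
    · exact isClosed_iInter fun t => isClosed_iInter fun ht => isClosed_iInter fun hμt =>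
        isClosed_eq (WeakDual.eval_continuous _) continuous_const
  -- boundedness and compactness
  set hbarLp : Hsp := hbar_mem2.toLp hbar with hbarLpdef
  set R : ℝ := ‖hbarLp‖ with hRdef
  have hT_bdd : T ⊆ WeakDual.toStrongDual ⁻¹' Metric.closedBall 0 R := by
    intro L hL
    obtain ⟨⟨hint, h0, _, _⟩, hle⟩ := hL
    have h1 : ‖WeakDual.toStrongDual L‖ = ‖reprL L‖ := by
      rw [show WeakDual.toStrongDual L = InnerProductSpace.toDual ℝ Hsp (reprL L) from
        (LinearIsometryEquiv.apply_symm_apply _ _).symm]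
      exact (InnerProductSpace.toDual ℝ Hsp).norm_map _
    have h2 : eLpNorm (⇑(reprL L)) 2 volume ≤ eLpNorm (⇑hbarLp) 2 volume := by
      refine eLpNorm_mono_ae ?_
      filter_upwards [h0, hle, hbar_mem2.coeFn_toLp] with p a b hc
      rw [Real.norm_eq_abs, Real.norm_eq_abs, abs_of_nonneg a]
      calc (reprL L : _ → ℝ) p ≤ hbar p := b
        _ = |hbar p| := (abs_of_nonneg (hbar_nonneg p)).symm
        _ = |(hbarLp : _ → ℝ) p| := by rw [hc]
    rw [Set.mem_preimage, mem_closedBall_zero_iff, h1, hRdef, Lp.norm_def, Lp.norm_def]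
    exact ENNReal.toReal_mono (Lp.eLpNorm_ne_top hbarLp) h2
  have hT_cpt : IsCompact T :=
    (WeakDual.isCompact_closedBall (0 : StrongDual ℝ Hsp) R).of_isClosed_subset
      hT_closed hT_bdd
  -- nonemptiness
  obtain ⟨h₀, hfeas₀⟩ := hne
  have h₀mem2 : MemLp h₀ 2 volume :=
    hmem2_of_feas h₀ hfeas₀.1.2.1 hfeas₀.2 hfeas₀.1.1.aestronglyMeasurable
  have hT_ne : T.Nonempty := by
    refine ⟨StrongDual.toWeakDual (InnerProductSpace.toDual ℝ Hsp (h₀mem2.toLp h₀)), ?_⟩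
    have hrepr₀ : reprL (StrongDual.toWeakDual
        (InnerProductSpace.toDual ℝ Hsp (h₀mem2.toLp h₀))) = h₀mem2.toLp h₀ := by
      simp [hreprdef]
    show InGammaBar f g hbar _
    rw [hrepr₀]
    exact hfeas₀.congr_ae h₀mem2.coeFn_toLp.symm
  -- the objective functional
  have cK_mem2 : MemLp (K.indicator c) 2 volume := by
    refine memL2_of_sq_le (hc_cont.measurable.indicator hKm).aestronglyMeasurable
      (hind_int (Mc ^ 2)) ?_
    filter_upwards with p
    by_cases hpK : p ∈ K
    · rw [Set.indicator_of_mem hpK, Set.indicator_of_mem hpK]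
      have h1 := hMc p; have h2 := abs_nonneg (c p)
      nlinarith [sq_abs (c p)]
    · rw [Set.indicator_of_notMem hpK, Set.indicator_of_notMem hpK]; norm_num
  set cKLp : Hsp := cK_mem2.toLp _ with hcKdef
  have hIcost_eq : ∀ h' : ((Fin d → ℝ) × (Fin d → ℝ)) → ℝ, Integrable h' volume →
      (∀ᵐ p ∂volume, 0 ≤ h' p) → (∀ᵐ p ∂volume, h' p ≤ hbar p) →
      Icost c h' = ∫ p, h' p * (cKLp : _ → ℝ) p := by
    intro h' hint h0 hle
    refine integral_congr_ae ?_
    filter_upwards [vanishK h' h0 hle, cK_mem2.coeFn_toLp] with p hv hcp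
    rw [hcp]
    by_cases hpK : p ∈ K
    · rw [Set.indicator_of_mem hpK]; ring
    · rw [Set.indicator_of_notMem hpK, hv hpK]; ring
  have hFval : ∀ L ∈ T, L cKLp = Icost c (⇑(reprL L)) := by
    intro L hL
    obtain ⟨⟨hint, h0, _, _⟩, hle⟩ := hL
    rw [hLapp, hIcost_eq _ hint h0 hle, L2.inner_def]
    refine integral_congr_ae ?_
    filter_upwards with p
    simp [RCLike.inner_apply, conj_trivial, mul_comm]
  -- conclusion via the extreme value theorem
  obtain ⟨L₀, hL₀T, hL₀min⟩ :=
    hT_cpt.exists_isMinOn hT_ne (WeakDual.eval_continuous cKLp).continuousOn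
  refine ⟨⇑(reprL L₀), hL₀T, ?_⟩
  intro h hh
  have hh2 : MemLp h 2 volume := hmem2_of_feas h hh.1.2.1 hh.2 hh.1.1.aestronglyMeasurable
  set Lh : WeakDual ℝ Hsp :=
    StrongDual.toWeakDual (InnerProductSpace.toDual ℝ Hsp (hh2.toLp h)) with hLhdef
  have hreprh : reprL Lh = hh2.toLp h := by simp [hreprdef, hLhdef]
  have hLhT : Lh ∈ T := by
    show InGammaBar f g hbar _
    rw [hreprh]
    exact hh.congr_ae hh2.coeFn_toLp.symm
  have e1 : Icost c (⇑(reprL L₀)) = L₀ cKLp := (hFval L₀ hL₀T).symm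
  have e2 : Lh cKLp = Icost c (⇑(reprL Lh)) := hFval Lh hLhT
  have e3 : Icost c (⇑(reprL Lh)) = Icost c h := by
    unfold Icost
    refine integral_congr_ae ?_
    have hae : ⇑(reprL Lh) =ᵐ[volume] h := by rw [hreprh]; exact hh2.coeFn_toLp
    filter_upwards [hae] with p hp
    rw [hp]
  have hmin : L₀ cKLp ≤ Lh cKLp := hL₀min hLhT
  linarith [e1, e2, e3, hmin]
end
end

section
/- Let c : ℝ^d × ℝ^d → ℝ be continuous and bounded, and let h̄ be a nonnegative function in L^∞(ℝ^d × ℝ^d) with compact support. Let h be a nonnegative, compactly supported function in L¹(ℝ^d × ℝ^d) with marginals h_X(x) = ∫ h(x,y) dy and h_Y(y) = ∫ h(x,y) dx, and suppose h minimizes I_c over Γ(h_X, h_Y)^h̄. Let A, B ⊆ ℝ^d be Borel sets and set h̃ := h·1_{A×B}, the restriction of h to the rectangular set A × B, with marginals h̃_X, h̃_Y. Then h̃ minimizes I_c over Γ(h̃_X, h̃_Y)^h̄. -/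
open MeasureTheory Filter Set Topology

lemma aux_fiber_zero {α β : Type*} [MeasurableSpace α] [MeasurableSpace β]
    {μ : Measure α} {ν : Measure β} [SigmaFinite μ] [SigmaFinite ν]
    {k : α × β → ℝ} (hk : Integrable k (μ.prod ν))
    (hknn : ∀ᵐ p ∂μ.prod ν, 0 ≤ k p) {A : Set α} (hA : MeasurableSet A)
    (hzero : ∀ᵐ x ∂μ, x ∉ A → (∫ y, k (x, y) ∂ν) = 0) :
    ∀ᵐ p ∂μ.prod ν, p.1 ∉ A → k p = 0 := by
  obtain ⟨k₀, hk₀sm, hkk₀⟩ := hk.aestronglyMeasurable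
  have hmeasset : MeasurableSet {p : α × β | p.1 ∉ A → k₀ p = 0} := by
    have hset : {p : α × β | p.1 ∉ A → k₀ p = 0}
        = (Prod.fst ⁻¹' A) ∪ (k₀ ⁻¹' {0}) := by
      ext p; by_cases hp : p.1 ∈ A <;> simp [hp]
    rw [hset]
    exact (measurable_fst hA).union (hk₀sm.measurable (measurableSet_singleton 0))
  have h₀ : ∀ᵐ p ∂μ.prod ν, p.1 ∉ A → k₀ p = 0 := by
    rw [Measure.ae_prod_iff_ae_ae hmeasset]
    filter_upwards [hzero, hk.prod_right_ae, Measure.ae_ae_of_ae_prod hknn,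
      Measure.ae_ae_of_ae_prod hkk₀] with x hx hint hnn heq
    by_cases hxA : x ∈ A
    · filter_upwards with y hy; exact absurd hxA hy
    · have hz : (fun y => k (x, y)) =ᵐ[ν] 0 :=
        (integral_eq_zero_iff_of_nonneg_ae hnn hint).mp (hx hxA)
      filter_upwards [hz, heq] with y h1 h2 _
      rw [← h2]; exact h1
  filter_upwards [h₀, hkk₀] with p h1 h2 hp
  rw [h2]; exact h1 hp

lemma aux_fiber_zero' {α β : Type*} [MeasurableSpace α] [MeasurableSpace β]
    {μ : Measure α} {ν : Measure β} [SigmaFinite μ] [SigmaFinite ν]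
    {k : α × β → ℝ} (hk : Integrable k (μ.prod ν))
    (hknn : ∀ᵐ p ∂μ.prod ν, 0 ≤ k p) {B : Set β} (hB : MeasurableSet B)
    (hzero : ∀ᵐ y ∂ν, y ∉ B → (∫ x, k (x, y) ∂μ) = 0) :
    ∀ᵐ p ∂μ.prod ν, p.2 ∉ B → k p = 0 := by
  have hnn' : ∀ᵐ q ∂ν.prod μ, 0 ≤ (k ∘ Prod.swap) q :=
    (Measure.measurePreserving_swap.quasiMeasurePreserving.ae hknn :)
  have h1 := aux_fiber_zero hk.swap hnn' hB hzero
  have h2 := Measure.measurePreserving_swap.quasiMeasurePreserving.ae h1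
  filter_upwards [h2] with p hp
  exact hp

noncomputable section

/-- **Constrained optimality is inherited by restriction to rectangular sets** (Lemma 5.1):
if `h` minimizes `I_c` among densities with its own marginals dominated by `h̄`, then for Borel
sets `A, B ⊆ ℝ^d` the restriction `h̃ = h·1_{A×B}` minimizes `I_c` among densities with the
marginals of `h̃` dominated by `h̄`. -/
theorem restriction_inherits_optimality (d : ℕ)
    (c : ((Fin d → ℝ) × (Fin d → ℝ)) → ℝ)
    (hc_cont : Continuous c) (hc_bdd : ∃ M, ∀ p, |c p| ≤ M)
    (hbar : ((Fin d → ℝ) × (Fin d → ℝ)) → ℝ)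
    (hbar_meas : Measurable hbar) (hbar_nonneg : ∀ p, 0 ≤ hbar p)
    (hbar_bdd : ∃ M, ∀ᵐ p ∂volume, hbar p ≤ M)
    (hbar_supp : HasCompactSupport hbar)
    (h : ((Fin d → ℝ) × (Fin d → ℝ)) → ℝ)
    (h_int : Integrable h volume) (h_nonneg : ∀ᵐ p ∂volume, 0 ≤ h p)
    (h_supp : HasCompactSupport h)
    (hmem : InGammaBar (fun x => ∫ y, h (x, y)) (fun y => ∫ x, h (x, y)) hbar h)
    (hopt : ∀ k, InGammaBar (fun x => ∫ y, h (x, y)) (fun y => ∫ x, h (x, y)) hbar k →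
      Icost c h ≤ Icost c k)
    (A B : Set (Fin d → ℝ)) (hA : MeasurableSet A) (hB : MeasurableSet B) :
    InGammaBar (fun x => ∫ y, (A ×ˢ B).indicator h (x, y))
        (fun y => ∫ x, (A ×ˢ B).indicator h (x, y)) hbar ((A ×ˢ B).indicator h) ∧
      ∀ k, InGammaBar (fun x => ∫ y, (A ×ˢ B).indicator h (x, y))
          (fun y => ∫ x, (A ×ˢ B).indicator h (x, y)) hbar k →
        Icost c ((A ×ˢ B).indicator h) ≤ Icost c k := by
  classical
  set S : Set ((Fin d → ℝ) × (Fin d → ℝ)) := A ×ˢ B with hS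
  set ht : ((Fin d → ℝ) × (Fin d → ℝ)) → ℝ := S.indicator h with hht
  have hSmeas : MeasurableSet S := hA.prod hB
  have ht_int : Integrable ht volume := h_int.indicator hSmeas
  have ht_nonneg : ∀ᵐ p ∂volume, 0 ≤ ht p := by
    filter_upwards [h_nonneg] with p hp
    exact Set.indicator_apply_nonneg fun _ => hp
  have ht_le : ∀ᵐ p ∂volume, ht p ≤ hbar p := by
    filter_upwards [hmem.2] with p hp
    by_cases hpS : p ∈ S
    · simpa [hht, Set.indicator_of_mem hpS] using hp
    · simpa [hht, Set.indicator_of_notMem hpS] using hbar_nonneg p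
  have ht_mem : InGammaBar (fun x => ∫ y, ht (x, y)) (fun y => ∫ x, ht (x, y)) hbar ht :=
    ⟨⟨ht_int, ht_nonneg, Eventually.of_forall fun _ => rfl,
      Eventually.of_forall fun _ => rfl⟩, ht_le⟩
  refine ⟨ht_mem, ?_⟩
  intro k hk
  obtain ⟨⟨k_int, k_nn, k_mx, k_my⟩, k_le⟩ := hk
  have hvol : (volume : Measure ((Fin d → ℝ) × (Fin d → ℝ)))
      = (volume : Measure (Fin d → ℝ)).prod volume := rfl
  -- prod-measure versions
  have k_int' : Integrable k ((volume : Measure (Fin d → ℝ)).prod volume) := by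
    rwa [hvol] at k_int
  have k_nn' : ∀ᵐ p ∂(volume : Measure (Fin d → ℝ)).prod volume, 0 ≤ k p := by
    rwa [hvol] at k_nn
  have h_int' : Integrable h ((volume : Measure (Fin d → ℝ)).prod volume) := by
    rwa [hvol] at h_int
  have ht_int' : Integrable ht ((volume : Measure (Fin d → ℝ)).prod volume) := by
    rwa [hvol] at ht_int
  -- k vanishes a.e. outside S
  have kzero : ∀ᵐ p ∂volume, p ∉ S → k p = 0 := by
    have hzx : ∀ᵐ x ∂(volume : Measure (Fin d → ℝ)), x ∉ A → (∫ y, k (x, y)) = 0 := by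
      filter_upwards [k_mx] with x hx hxA
      rw [hx]
      have : ∀ y, ht (x, y) = 0 := fun y =>
        Set.indicator_of_notMem (by simp [hS, hxA]) _
      simp [this]
    have hzy : ∀ᵐ y ∂(volume : Measure (Fin d → ℝ)), y ∉ B → (∫ x, k (x, y)) = 0 := by
      filter_upwards [k_my] with y hy hyB
      rw [hy]
      have : ∀ x, ht (x, y) = 0 := fun x =>
        Set.indicator_of_notMem (by simp [hS, hyB]) _
      simp [this]
    have h1 := aux_fiber_zero k_int' k_nn' hA hzx
    have h2 := aux_fiber_zero' k_int' k_nn' hB hzy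
    rw [hvol]
    filter_upwards [h1, h2] with p hp1 hp2 hpS
    by_cases hc : p.1 ∈ A
    · exact hp2 fun h2 => hpS ⟨hc, h2⟩
    · exact hp1 hc
  -- the competitor for h
  set h' : ((Fin d → ℝ) × (Fin d → ℝ)) → ℝ := fun p => h p - ht p + k p with hh'
  have h'_int : Integrable h' volume := (h_int.sub ht_int).add k_int
  have h'_nn : ∀ᵐ p ∂volume, 0 ≤ h' p := by
    filter_upwards [h_nonneg, k_nn, kzero] with p h1 h3 h5
    by_cases hpS : p ∈ S
    · simp only [hh', hht, Set.indicator_of_mem hpS]; linarith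
    · simp only [hh', hht, Set.indicator_of_notMem hpS, h5 hpS]; linarith
  have h'_le : ∀ᵐ p ∂volume, h' p ≤ hbar p := by
    filter_upwards [hmem.2, k_le, kzero] with p h2 h4 h5
    by_cases hpS : p ∈ S
    · simp only [hh', hht, Set.indicator_of_mem hpS]; linarith
    · simp only [hh', hht, Set.indicator_of_notMem hpS, h5 hpS]; linarith
  have h'_mx : ∀ᵐ x ∂(volume : Measure (Fin d → ℝ)),
      (∫ y, h' (x, y)) = ∫ y, h (x, y) := by
    filter_upwards [h_int'.prod_right_ae, ht_int'.prod_right_ae, k_int'.prod_right_ae,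
      k_mx] with x i1 i2 i3 e
    have e1 : (∫ y, h (x, y) - ht (x, y) + k (x, y))
        = (∫ y, h (x, y) - ht (x, y)) + ∫ y, k (x, y) := integral_add (i1.sub i2) i3
    have e2 : (∫ y, h (x, y) - ht (x, y))
        = (∫ y, h (x, y)) - ∫ y, ht (x, y) := integral_sub i1 i2
    calc (∫ y, h' (x, y)) = ∫ y, h (x, y) - ht (x, y) + k (x, y) := rfl
      _ = _ := by rw [e1, e2, e]; ring
  have h'_my : ∀ᵐ y ∂(volume : Measure (Fin d → ℝ)),
      (∫ x, h' (x, y)) = ∫ x, h (x, y) := by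
    filter_upwards [h_int'.prod_left_ae, ht_int'.prod_left_ae, k_int'.prod_left_ae,
      k_my] with y i1 i2 i3 e
    have e1 : (∫ x, h (x, y) - ht (x, y) + k (x, y))
        = (∫ x, h (x, y) - ht (x, y)) + ∫ x, k (x, y) := integral_add (i1.sub i2) i3
    have e2 : (∫ x, h (x, y) - ht (x, y))
        = (∫ x, h (x, y)) - ∫ x, ht (x, y) := integral_sub i1 i2
    calc (∫ x, h' (x, y)) = ∫ x, h (x, y) - ht (x, y) + k (x, y) := rfl
      _ = _ := by rw [e1, e2, e]; ring
  have hcomp : InGammaBar (fun x => ∫ y, h (x, y)) (fun y => ∫ x, h (x, y)) hbar h' :=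
    ⟨⟨h'_int, h'_nn, h'_mx, h'_my⟩, h'_le⟩
  have key := hopt h' hcomp
  -- cost linearity
  obtain ⟨M, hM⟩ := hc_bdd
  have cmul : ∀ f : ((Fin d → ℝ) × (Fin d → ℝ)) → ℝ, Integrable f volume →
      Integrable (fun p => c p * f p) volume := fun f hf =>
    hf.bdd_mul (c := M) hc_cont.aestronglyMeasurable (Eventually.of_forall fun p => by
      rw [Real.norm_eq_abs]; exact hM p)
  have hsplit : Icost c h' = Icost c h - Icost c ht + Icost c k := by
    have e1 : (∫ p, c p * h p - c p * ht p + c p * k p)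
        = (∫ p, c p * h p - c p * ht p) + ∫ p, c p * k p :=
      integral_add ((cmul h h_int).sub (cmul ht ht_int)) (cmul k k_int)
    have e2 : (∫ p, c p * h p - c p * ht p)
        = (∫ p, c p * h p) - ∫ p, c p * ht p :=
      integral_sub (cmul h h_int) (cmul ht ht_int)
    calc Icost c h' = ∫ p, c p * h p - c p * ht p + c p * k p := by
          unfold Icost; congr 1; funext p; simp only [hh']; ring
      _ = _ := by rw [e1, e2]; rfl
  rw [hsplit] at key
  linarith
end
end

section
/- Let X, Y be Borel subsets of [-1/2,1/2]^d ⊂ ℝ^d of strictly positive Lebesgue measure. Let f ∈ L¹(X) and g ∈ L¹(Y) (not necessarily nonnegative) have the same total mass m := ∫_X f = ∫_Y g ∈ ℝ, and suppose ‖f‖_{L^∞(X)} < ε and ‖g‖_{L^∞(Y)} < ε. Then there exists h ∈ L¹(X × Y) whose marginals are f and g (i.e. ∫_Y h(x,y) dy = f(x) for a.e. x ∈ X and ∫_X h(x,y) dx = g(y) for a.e. y ∈ Y) and which satisfies ‖h‖_{L^∞(X×Y)} < 3ε·(1/L^d(X) + 1/L^d(Y)), where L^d denotes d-dimensional Lebesgue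 measure. -/
open MeasureTheory Filter Set Topology

noncomputable section

/-- The cube `[-1/2, 1/2]^d ⊆ ℝ^d`. -/
def cube (d : ℕ) : Set (Fin d → ℝ) :=
  Set.Icc (fun _ => -(1/2 : ℝ)) (fun _ => (1/2 : ℝ))

/-- **Gluing lemma** (Lemma 7.2): given Borel subsets `X, Y` of the cube of positive measure
and signed marginals `f ∈ L¹(X)`, `g ∈ L¹(Y)` of equal total mass with `‖f‖_∞, ‖g‖_∞ < ε`,
there is a joint density `h ∈ L¹(X × Y)` with marginals `f` and `g` and
`‖h‖_{L^∞(X×Y)} < 3ε(1/L^d(X) + 1/L^d(Y))`. -/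
theorem small_marginals_glue (d : ℕ) (X Y : Set (Fin d → ℝ))
    (hX_meas : MeasurableSet X) (hY_meas : MeasurableSet Y)
    (hX_sub : X ⊆ cube d) (hY_sub : Y ⊆ cube d)
    (hX_pos : 0 < volume X) (hY_pos : 0 < volume Y)
    (f g : (Fin d → ℝ) → ℝ) (ε m : ℝ)
    (hf_int : IntegrableOn f X volume) (hg_int : IntegrableOn g Y volume)
    (hf_mass : ∫ x in X, f x = m) (hg_mass : ∫ y in Y, g y = m)
    (hf_bdd : eLpNorm f ⊤ (volume.restrict X) < ENNReal.ofReal ε)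
    (hg_bdd : eLpNorm g ⊤ (volume.restrict Y) < ENNReal.ofReal ε) :
    ∃ h : ((Fin d → ℝ) × (Fin d → ℝ)) → ℝ,
      IntegrableOn h (X ×ˢ Y) volume ∧
      (∀ᵐ x ∂volume.restrict X, (∫ y in Y, h (x, y)) = f x) ∧
      (∀ᵐ y ∂volume.restrict Y, (∫ x in X, h (x, y)) = g y) ∧
      eLpNorm h ⊤ (volume.restrict (X ×ˢ Y)) <
        ENNReal.ofReal (3 * ε * (1 / (volume X).toReal + 1 / (volume Y).toReal)) := by
  -- finiteness of the measures
  have hcube : volume (cube d) < ⊤ := (isCompact_Icc).measure_lt_top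
  have hXfin : volume X < ⊤ := lt_of_le_of_lt (measure_mono hX_sub) hcube
  have hYfin : volume Y < ⊤ := lt_of_le_of_lt (measure_mono hY_sub) hcube
  set vX : ℝ := (volume X).toReal with hvX
  set vY : ℝ := (volume Y).toReal with hvY
  have hvXpos : 0 < vX := ENNReal.toReal_pos hX_pos.ne' hXfin.ne
  have hvYpos : 0 < vY := ENNReal.toReal_pos hY_pos.ne' hYfin.ne
  haveI : IsFiniteMeasure (volume.restrict X) :=
    ⟨by rw [Measure.restrict_apply_univ]; exact hXfin⟩
  haveI : IsFiniteMeasure (volume.restrict Y) :=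
    ⟨by rw [Measure.restrict_apply_univ]; exact hYfin⟩
  have hεpos : 0 < ε := by
    by_contra hc
    push_neg at hc
    rw [ENNReal.ofReal_eq_zero.2 hc] at hf_bdd
    exact (not_lt_of_ge zero_le) hf_bdd
  -- pointwise a.e. bounds
  have hfae : ∀ᵐ x ∂volume.restrict X, ‖f x‖ ≤ ε := by
    rw [eLpNorm_exponent_top, eLpNormEssSup] at hf_bdd
    filter_upwards [ae_lt_of_essSup_lt hf_bdd] with x hx
    rw [← ofReal_norm] at hx
    exact (ENNReal.ofReal_lt_ofReal_iff_of_nonneg (norm_nonneg _)).1 hx |>.le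
  have hgae : ∀ᵐ y ∂volume.restrict Y, ‖g y‖ ≤ ε := by
    rw [eLpNorm_exponent_top, eLpNormEssSup] at hg_bdd
    filter_upwards [ae_lt_of_essSup_lt hg_bdd] with x hx
    rw [← ofReal_norm] at hx
    exact (ENNReal.ofReal_lt_ofReal_iff_of_nonneg (norm_nonneg _)).1 hx |>.le
  have hm : |m| ≤ ε * vX := by
    have := norm_integral_le_of_norm_le_const (μ := volume.restrict X) (C := ε) hfae
    rw [hf_mass, measureReal_restrict_apply_univ, measureReal_def] at this
    simpa [Real.norm_eq_abs] using this
  -- the density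
  set h : ((Fin d → ℝ) × (Fin d → ℝ)) → ℝ :=
    fun z => f z.1 / vY + g z.2 / vX - m / (vX * vY) with hh
  have hrestr : volume.restrict (X ×ˢ Y)
      = (volume.restrict X).prod (volume.restrict Y) := by
    have := Measure.prod_restrict (μ := (volume : Measure (Fin d → ℝ)))
      (ν := (volume : Measure (Fin d → ℝ))) X Y
    rw [← MeasureTheory.Measure.volume_eq_prod] at this
    exact this.symm
  -- integrability
  have i1 : Integrable (fun z : ((Fin d → ℝ) × (Fin d → ℝ)) => f z.1 / vY)
      ((volume.restrict X).prod (volume.restrict Y)) := by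
    have := (hf_int.mul_prod (integrable_const (μ := volume.restrict Y) (1:ℝ))).div_const vY
    simpa using this
  have i2 : Integrable (fun z : ((Fin d → ℝ) × (Fin d → ℝ)) => g z.2 / vX)
      ((volume.restrict X).prod (volume.restrict Y)) := by
    have := ((integrable_const (μ := volume.restrict X) (1:ℝ)).mul_prod hg_int).div_const vX
    simpa using this
  have hint : Integrable h ((volume.restrict X).prod (volume.restrict Y)) :=
    (i1.add i2).sub (integrable_const _)
  refine ⟨h, ?_, ?_, ?_, ?_⟩
  · rw [IntegrableOn, hrestr]; exact hint
  · -- first marginal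
    refine Eventually.of_forall fun x => ?_
    have ig : Integrable (fun y => g y / vX) (volume.restrict Y) := hg_int.div_const vX
    have ic1 : Integrable (fun _ : (Fin d → ℝ) => f x / vY) (volume.restrict Y) :=
      integrable_const _
    have ic2 : Integrable (fun _ : (Fin d → ℝ) => m / (vX * vY)) (volume.restrict Y) :=
      integrable_const _
    have isum : Integrable (fun y => f x / vY + g y / vX) (volume.restrict Y) := ic1.add ig
    rw [hh]
    simp only
    rw [integral_sub isum ic2, integral_add ic1 ig, integral_const, integral_const,
      integral_div, hg_mass, measureReal_restrict_apply_univ, measureReal_def, ← hvY]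
    simp only [smul_eq_mul]
    field_simp
    ring
  · -- second marginal
    refine Eventually.of_forall fun y => ?_
    have if' : Integrable (fun x => f x / vY) (volume.restrict X) := hf_int.div_const vY
    have ic1 : Integrable (fun _ : (Fin d → ℝ) => g y / vX) (volume.restrict X) :=
      integrable_const _
    have ic2 : Integrable (fun _ : (Fin d → ℝ) => m / (vX * vY)) (volume.restrict X) :=
      integrable_const _
    have isum : Integrable (fun x => f x / vY + g y / vX) (volume.restrict X) := if'.add ic1
    rw [hh]
    simp only
    rw [integral_sub isum ic2, integral_add if' ic1, integral_const, integral_const,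
      integral_div, hf_mass, measureReal_restrict_apply_univ, measureReal_def, ← hvX]
    simp only [smul_eq_mul]
    field_simp
    ring
  · -- the sup bound
    have hfae' : ∀ᵐ z ∂(volume.restrict X).prod (volume.restrict Y), ‖f z.1‖ ≤ ε :=
      Measure.quasiMeasurePreserving_fst.ae hfae
    have hgae' : ∀ᵐ z ∂(volume.restrict X).prod (volume.restrict Y), ‖g z.2‖ ≤ ε :=
      Measure.quasiMeasurePreserving_snd.ae hgae
    have hbound : ∀ᵐ z ∂(volume.restrict X).prod (volume.restrict Y),
        ‖h z‖ ≤ ε / vX + 2 * (ε / vY) := by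
      filter_upwards [hfae', hgae'] with z h1 h2
      have : ‖h z‖ ≤ ‖f z.1‖ / vY + ‖g z.2‖ / vX + |m| / (vX * vY) := by
        rw [hh]
        simp only [Real.norm_eq_abs]
        calc |f z.1 / vY + g z.2 / vX - m / (vX * vY)|
            ≤ |f z.1 / vY + g z.2 / vX| + |m / (vX * vY)| := abs_sub _ _
          _ ≤ |f z.1 / vY| + |g z.2 / vX| + |m / (vX * vY)| := by
              gcongr; exact abs_add_le _ _
          _ = |f z.1| / vY + |g z.2| / vX + |m| / (vX * vY) := by
              rw [abs_div, abs_div, abs_div, abs_of_pos hvYpos, abs_of_pos hvXpos,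
                abs_of_pos (mul_pos hvXpos hvYpos)]
      refine this.trans ?_
      have h3 : |m| / (vX * vY) ≤ ε / vY := by
        rw [div_le_div_iff₀ (mul_pos hvXpos hvYpos) hvYpos]
        nlinarith
      have h4 : ‖f z.1‖ / vY ≤ ε / vY := by gcongr
      have h5 : ‖g z.2‖ / vX ≤ ε / vX := by gcongr
      nlinarith [h3, h4, h5]
    rw [eLpNorm_exponent_top, hrestr]
    refine lt_of_le_of_lt (eLpNormEssSup_le_of_ae_bound hbound) ?_
    rw [ENNReal.ofReal_lt_ofReal_iff]
    · have h1 : 0 < ε / vX := div_pos hεpos hvXpos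
      have h2 : 0 < ε / vY := div_pos hεpos hvYpos
      have : 3 * ε * (1 / vX + 1 / vY) = 3 * (ε / vX) + 3 * (ε / vY) := by ring
      rw [this]
      have : ε / vX + 2 * (ε / vY) = (ε / vX) + 2 * (ε / vY) := by ring
      rw [this]
      linarith
    · positivity
end
end

section
/- Let Q = [-1/2,1/2]^d × [-1/2,1/2]^d ⊂ ℝ^d × ℝ^d and let c̃(x,y) = x·y (the Euclidean dot product). Let 0 < r < R be real numbers and let 0 < δ < min(r, R−r). Then there exists a measurable function h^δ : Q → ℝ with r−δ ≤ h^δ(x,y) ≤ r+δ for all (x,y) ∈ Q (in particular 0 ≤ h^δ ≤ R), whose marginals equal those of the constant function r (i.e. ∫_{[-1/2,1/2]^d} h^δ(x,y) dy = r for a.e. x and ∫_{[-1/2,1/2]^d} h^δ(x,y) dx = r for a.e. y), and such that ∫_Q x·y · h^δ(x,y) dx dy < ∫_Q x·y · r dx dy. In other words, a constant density strictly between 0 and the capacity bound is never optimal for the cost x·y among densities on Q with the same (constant) marginals that are bounded above by R. -/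
open MeasureTheory Filter Set Topology

noncomputable section

namespace Aux

abbrev I : Set ℝ := Set.Icc (-(1/2:ℝ)) (1/2)

lemma int_one : ∫ _ in I, (1:ℝ) = 1 := by
  simp [Real.volume_Icc]; norm_num

lemma int_id : ∫ t in I, t = 0 := by
  rw [MeasureTheory.integral_Icc_eq_integral_Ioc,
    ← intervalIntegral.integral_of_le (by norm_num : (-(1/2:ℝ)) ≤ 1/2)]
  rw [integral_id]; norm_num

lemma int_sq : ∫ t in I, t * t = 1/12 := by
  have : ∀ t : ℝ, t * t = t ^ 2 := fun t => (sq t).symm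
  simp_rw [this]
  rw [MeasureTheory.integral_Icc_eq_integral_Ioc,
    ← intervalIntegral.integral_of_le (by norm_num : (-(1/2:ℝ)) ≤ 1/2)]
  rw [integral_pow]; norm_num

lemma cube_eq_pi (d : ℕ) : cube d = Set.pi Set.univ (fun _ : Fin d => I) :=
  (Set.pi_univ_Icc _ _).symm

lemma cube_integral_prod (d : ℕ) (f : Fin d → ℝ → ℝ) :
    ∫ x in cube d, ∏ i, f i (x i) = ∏ i, ∫ t in I, f i t := by
  rw [cube_eq_pi, ← integral_indicator (MeasurableSet.univ_pi fun _ => measurableSet_Icc)]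
  have h : ∀ x : Fin d → ℝ, (Set.pi Set.univ fun _ => I).indicator
      (fun x => ∏ i, f i (x i)) x = ∏ i, I.indicator (f i) (x i) := by
    intro x
    by_cases hx : x ∈ Set.pi Set.univ fun _ => I
    · rw [Set.indicator_of_mem hx]
      exact Finset.prod_congr rfl fun i _ =>
        (Set.indicator_of_mem (hx i (Set.mem_univ i)) _).symm
    · rw [Set.indicator_of_notMem hx]
      obtain ⟨i, hi⟩ : ∃ i, x i ∉ I := by
        by_contra hcon; push_neg at hcon
        exact hx fun i _ => hcon i
      exact (Finset.prod_eq_zero (Finset.mem_univ i)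
        (by simp [Set.indicator_of_notMem hi])).symm
  simp_rw [h]
  rw [MeasureTheory.integral_fintype_prod_volume_eq_prod (ι := Fin d)
    (f := fun i => I.indicator (f i))]
  exact Finset.prod_congr rfl fun i _ => integral_indicator measurableSet_Icc

lemma cube_int_coord (d : ℕ) (j : Fin d) : ∫ x in cube d, x j = 0 := by
  have h : ∀ x : Fin d → ℝ, x j = ∏ i, (if i = j then x i else 1) := by
    intro x; rw [Finset.prod_ite_eq']; simp
  simp_rw [h]
  rw [cube_integral_prod d (fun i t => if i = j then t else 1)]
  exact Finset.prod_eq_zero (Finset.mem_univ j) (by simp [int_id])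

lemma cube_int_coord_mul (d : ℕ) (j k : Fin d) :
    ∫ x in cube d, x j * x k = if j = k then 1/12 else 0 := by
  have h : ∀ x : Fin d → ℝ, x j * x k
      = ∏ i, ((if i = j then x i else 1) * (if i = k then x i else 1)) := by
    intro x; rw [Finset.prod_mul_distrib, Finset.prod_ite_eq', Finset.prod_ite_eq']; simp
  simp_rw [h]
  rw [cube_integral_prod d (fun i t => (if i = j then t else 1) * (if i = k then t else 1))]
  have hval : ∀ i : Fin d, (∫ t in I, (if i = j then t else 1) * (if i = k then t else 1))
      = if i = j then (if i = k then (1/12:ℝ) else 0) else (if i = k then 0 else 1) := by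
    intro i
    rcases eq_or_ne i j with h1 | h1
    · subst h1
      rcases eq_or_ne i k with h2 | h2
      · subst h2; simp [int_sq]
      · simp [h2, int_id]
    · rcases eq_or_ne i k with h2 | h2
      · subst h2; simp [h1, int_id]
      · simp only [if_neg h1, if_neg h2, one_mul]
        exact int_one
  simp_rw [hval]
  by_cases hjk : j = k
  · subst hjk
    simp only [if_pos rfl]
    have h2 : ∀ i : Fin d,
        (if i = j then (if i = j then (1/12:ℝ) else 0) else (if i = j then 0 else 1))
        = if i = j then (1/12:ℝ) else 1 := by intro i; by_cases h : i = j <;> simp [h]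
    rw [Finset.prod_congr rfl fun i _ => h2 i, Finset.prod_ite_eq']
    simp
  · rw [if_neg hjk]
    exact Finset.prod_eq_zero (Finset.mem_univ j) (by simp [hjk])

lemma volume_cube (d : ℕ) : volume (cube d) = 1 := by
  rw [cube_eq_pi, volume_pi_pi]
  simp [Real.volume_Icc]; norm_num

lemma isCompact_cube (d : ℕ) : IsCompact (cube d) := isCompact_Icc

end Aux

open Aux

/-- **A constant density strictly between 0 and the capacity bound is never optimal for the
cost `x·y`** (Lemma 6.1): for `0 < r < R` and `0 < δ < min(r, R-r)` there is a density `h^δ`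
on `Q = [-1/2,1/2]^d × [-1/2,1/2]^d` with values in `[r-δ, r+δ]`, whose marginals are the
constant `r`, and with strictly smaller cost `∫_Q x·y h^δ < ∫_Q x·y r`. -/
theorem constant_density_not_optimal (d : ℕ) (hd : 0 < d) (r R δ : ℝ)
    (hr : 0 < r) (hrR : r < R) (hδ_pos : 0 < δ) (hδ : δ < min r (R - r)) :
    ∃ hδfun : ((Fin d → ℝ) × (Fin d → ℝ)) → ℝ,
      Measurable hδfun ∧
      (∀ p ∈ cube d ×ˢ cube d, r - δ ≤ hδfun p ∧ hδfun p ≤ r + δ) ∧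
      (∀ᵐ x ∂volume.restrict (cube d), (∫ y in cube d, hδfun (x, y)) = r) ∧
      (∀ᵐ y ∂volume.restrict (cube d), (∫ x in cube d, hδfun (x, y)) = r) ∧
      (∫ p in cube d ×ˢ cube d, (∑ i, p.1 i * p.2 i) * hδfun p) <
        ∫ p in cube d ×ˢ cube d, (∑ i, p.1 i * p.2 i) * r := by
  set i0 : Fin d := ⟨0, hd⟩ with hi0
  set c : ℝ := 4 * δ with hc
  set μ : Measure (Fin d → ℝ) := volume.restrict (cube d) with hμ
  -- integrability of continuous functions on the cube
  have hInt : ∀ f : (Fin d → ℝ) → ℝ, Continuous f → Integrable f μ := fun f hf =>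
    hf.continuousOn.integrableOn_compact (isCompact_cube d)
  have hcoord : ∀ j : Fin d, Continuous fun x : Fin d → ℝ => x j := fun j => continuous_apply j
  -- the product measure identity
  have hQ : (volume : Measure ((Fin d → ℝ) × (Fin d → ℝ))).restrict (cube d ×ˢ cube d)
      = μ.prod μ := by
    rw [hμ, Measure.prod_restrict, ← Measure.volume_eq_prod]
  -- the main integral computation
  have main : ∀ s : ℝ,
      (∫ p : (Fin d → ℝ) × (Fin d → ℝ),
        (∑ i, p.1 i * p.2 i) * (r - s * (p.1 i0 * p.2 i0)) ∂(μ.prod μ))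
      = -s * (1/12) * (1/12) := by
    intro s
    have hexp : (fun p : (Fin d → ℝ) × (Fin d → ℝ) =>
        (∑ i, p.1 i * p.2 i) * (r - s * (p.1 i0 * p.2 i0)))
        = fun p => ∑ i, ((p.1 i * r) * p.2 i
            + ((-s) * (p.1 i * p.1 i0)) * (p.2 i * p.2 i0)) := by
      funext p
      rw [Finset.sum_mul]
      exact Finset.sum_congr rfl fun i _ => by ring
    rw [hexp]
    have hint1 : ∀ i : Fin d, Integrable
        (fun p : (Fin d → ℝ) × (Fin d → ℝ) => (p.1 i * r) * p.2 i) (μ.prod μ) :=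
      fun i => Integrable.mul_prod (hInt _ ((hcoord i).mul continuous_const)) (hInt _ (hcoord i))
    have hint2 : ∀ i : Fin d, Integrable
        (fun p : (Fin d → ℝ) × (Fin d → ℝ) =>
          ((-s) * (p.1 i * p.1 i0)) * (p.2 i * p.2 i0)) (μ.prod μ) :=
      fun i => Integrable.mul_prod (hInt _ (continuous_const.mul ((hcoord i).mul (hcoord i0))))
        (hInt _ ((hcoord i).mul (hcoord i0)))
    rw [integral_finset_sum (μ := μ.prod μ) Finset.univ
      (f := fun (i : Fin d) (p : (Fin d → ℝ) × (Fin d → ℝ)) =>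
        p.1 i * r * p.2 i + -s * (p.1 i * p.1 i0) * (p.2 i * p.2 i0))
      (fun i _ => (hint1 i).add (hint2 i))]
    have hterm : ∀ i : Fin d,
        (∫ p : (Fin d → ℝ) × (Fin d → ℝ),
          ((p.1 i * r) * p.2 i + ((-s) * (p.1 i * p.1 i0)) * (p.2 i * p.2 i0)) ∂(μ.prod μ))
        = (if i = i0 then -s * (1/12) * (1/12) else 0) := by
      intro i
      rw [integral_add (hint1 i) (hint2 i)]
      rw [integral_prod_mul (μ := μ) (ν := μ) (f := fun x => x i * r) (g := fun y => y i),
        integral_prod_mul (μ := μ) (ν := μ) (f := fun x => (-s) * (x i * x i0))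
          (g := fun y => y i * y i0)]
      rw [integral_mul_const, integral_const_mul]
      rw [hμ, cube_int_coord d i, cube_int_coord_mul d i i0]
      by_cases h : i = i0 <;> simp [h] <;> ring
    rw [Finset.sum_congr rfl fun i _ => hterm i, Finset.sum_ite_eq' Finset.univ i0]
    simp
  -- the candidate density
  refine ⟨fun p => r - c * (p.1 i0 * p.2 i0), ?_, ?_, ?_, ?_, ?_⟩
  · fun_prop
  · rintro ⟨x, y⟩ ⟨hx, hy⟩
    have hx1 : -(1/2 : ℝ) ≤ x i0 := hx.1 i0
    have hx2 : x i0 ≤ (1/2 : ℝ) := hx.2 i0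
    have hy1 : -(1/2 : ℝ) ≤ y i0 := hy.1 i0
    have hy2 : y i0 ≤ (1/2 : ℝ) := hy.2 i0
    have h4 : x i0 * y i0 ≤ 1/4 := by nlinarith
    have h5 : -(1/4) ≤ x i0 * y i0 := by nlinarith
    simp only [hc]
    constructor <;> nlinarith
  · refine Filter.Eventually.of_forall fun x => ?_
    have h1 : IntegrableOn (fun _ : Fin d → ℝ => r) (cube d) := by
      refine integrableOn_const ?_
      rw [volume_cube]; exact ENNReal.one_ne_top
    have h2 : IntegrableOn (fun y : Fin d → ℝ => c * (x i0 * y i0)) (cube d) :=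
      (continuous_const.mul (continuous_const.mul (hcoord i0))).continuousOn.integrableOn_compact
        (isCompact_cube d)
    rw [integral_sub h1 h2]
    have : (fun y : Fin d → ℝ => c * (x i0 * y i0)) = fun y => (c * x i0) * y i0 := by
      funext y; ring
    rw [this, integral_const_mul, cube_int_coord d i0, setIntegral_const, measureReal_def, volume_cube]
    simp
  · refine Filter.Eventually.of_forall fun y => ?_
    have h1 : IntegrableOn (fun _ : Fin d → ℝ => r) (cube d) := by
      refine integrableOn_const ?_
      rw [volume_cube]; exact ENNReal.one_ne_top
    have h2 : IntegrableOn (fun x : Fin d → ℝ => c * (x i0 * y i0)) (cube d) :=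
      (continuous_const.mul ((hcoord i0).mul continuous_const)).continuousOn.integrableOn_compact
        (isCompact_cube d)
    rw [integral_sub h1 h2]
    have : (fun x : Fin d → ℝ => c * (x i0 * y i0)) = fun x => (c * y i0) * x i0 := by
      funext x; ring
    rw [this, integral_const_mul, cube_int_coord d i0, setIntegral_const, measureReal_def, volume_cube]
    simp
  · have hL : (∫ p in cube d ×ˢ cube d,
        (∑ i, p.1 i * p.2 i) * (r - c * (p.1 i0 * p.2 i0)))
        = -c * (1/12) * (1/12) := by
      rw [show (volume : Measure ((Fin d → ℝ) × (Fin d → ℝ))).restrict (cube d ×ˢ cube d)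
        = μ.prod μ from hQ]
      exact main c
    have hR : (∫ p in cube d ×ˢ cube d, (∑ i, p.1 i * p.2 i) * r) = 0 := by
      rw [show (volume : Measure ((Fin d → ℝ) × (Fin d → ℝ))).restrict (cube d ×ˢ cube d)
        = μ.prod μ from hQ]
      have h0 : (fun p : (Fin d → ℝ) × (Fin d → ℝ) => (∑ i, p.1 i * p.2 i) * r)
          = fun p => (∑ i, p.1 i * p.2 i) * (r - (0:ℝ) * (p.1 i0 * p.2 i0)) := by
        funext p; ring
      rw [h0, main 0]; ring
    rw [hL, hR]
    nlinarith
end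
end

section
/- Let c : ℝ^d × ℝ^d → ℝ be continuous and bounded, let h̄ be a nonnegative function in L^∞(ℝ^d × ℝ^d) with compact support, and let f, g be nonnegative compactly supported functions in L¹(ℝ^d) with equal total mass such that Γ(f,g)^h̄ is nonempty. Suppose h ∈ Γ(f,g)^h̄ minimizes I_c over Γ(f,g)^h̄. Fix any (x₀,y₀) ∈ ℝ^d × ℝ^d and any integer n ≥ 1, and let h_n(x,y) := h(x₀ + x/n, y₀ + y/n) and h̄_n(x,y) := h̄(x₀ + x/n, y₀ + y/n) on Q. Then h_n minimizes the functional k ↦ ∫_Q c(x₀ + x/n, y₀ + y/n)·k(x,y) dx dy among all nonnegative k ∈ L¹(Q) with the same marginals as h_n (i.e. ∫ k(x,y) dy = ∫ h_n(x,y) dy for a.e. x ∈ [-1/2,1/2]^d and ∫ k(x,y) dx = ∫ h_n(x,y) dx for a.e. y ∈ [-1/2,1/2]^d) and with k ≤ h̄_n a.e. on Q. -/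
open MeasureTheory Filter Set Topology

noncomputable section

section Aux

open Module

variable {E : Type*} [NormedAddCommGroup E] [NormedSpace ℝ E] [MeasurableSpace E] [BorelSpace E]
  [FiniteDimensional ℝ E] (μ : Measure E) [μ.IsAddHaarMeasure]

lemma covA {R : ℝ} (hR : 0 < R) (z₀ : E) (G : E → ℝ) :
    ∫ x, G (z₀ + R⁻¹ • x) ∂μ = R ^ (finrank ℝ E) * ∫ x, G x ∂μ := by
  have h1 := Measure.integral_comp_inv_smul μ (fun u => G (z₀ + u)) R
  rw [abs_of_nonneg (pow_nonneg hR.le _)] at h1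
  rw [show (fun x => G (z₀ + R⁻¹ • x)) = fun x => (fun u => G (z₀ + u)) (R⁻¹ • x) from rfl] at *
  rw [h1, integral_add_left_eq_self (μ := μ) G z₀, smul_eq_mul]

lemma covB {R : ℝ} (hR : 0 < R) (z₀ : E) (G : E → ℝ) :
    ∫ x, G (R • (x - z₀)) ∂μ = (R ^ (finrank ℝ E))⁻¹ * ∫ x, G x ∂μ := by
  have h1 := Measure.integral_comp_smul μ G R
  rw [abs_of_nonneg (inv_nonneg.2 (pow_nonneg hR.le _))] at h1
  have h2 : ∫ x, (fun u => G (R • u)) (x + (-z₀)) ∂μ = ∫ x, G (R • x) ∂μ :=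
    integral_add_right_eq_self (μ := μ) (fun u => G (R • u)) (-z₀)
  simp only [sub_eq_add_neg]
  rw [h2, h1, smul_eq_mul]

lemma qmpAff {R : ℝ} (hR : R ≠ 0) (z₀ : E) :
    Measure.QuasiMeasurePreserving (fun x => R • (x - z₀)) μ μ := by
  have h1 : MeasurePreserving (fun x : E => x - z₀) μ μ := by
    simpa [sub_eq_add_neg] using measurePreserving_add_right μ (-z₀)
  have h2 : Measure.QuasiMeasurePreserving (fun x : E => R • x) μ μ := by
    refine ⟨measurable_const_smul R, ?_⟩
    rw [Measure.map_addHaar_smul μ hR]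
    exact Measure.smul_absolutelyContinuous
  exact h2.comp h1.quasiMeasurePreserving

lemma intCompAff {R : ℝ} (hR : R ≠ 0) (z₀ : E) {G : E → ℝ} (hG : Integrable G μ) :
    Integrable (fun x => G (R • (x - z₀))) μ := by
  have h1 : MeasurePreserving (fun x : E => x - z₀) μ μ := by
    simpa [sub_eq_add_neg] using measurePreserving_add_right μ (-z₀)
  have h2 : Integrable (fun x => G (R • x)) μ := hG.comp_smul hR
  exact (h1.integrable_comp h2.aestronglyMeasurable).2 h2

end Aux

instance volume_prod_isAddHaar (d : ℕ) :
    (volume : Measure ((Fin d → ℝ) × (Fin d → ℝ))).IsAddHaarMeasure := by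
  rw [Measure.volume_eq_prod]; exact Measure.prod.instIsAddHaarMeasure _ _

/-- **Optimality is inherited by the blow-up sequence** (Proposition 5.2, before Taylor
expansion): if `h` minimizes `I_c` over `Γ(f,g)^h̄`, then for any point `z = (x₀,y₀)` and any
`n ≥ 1`, the blow-up `h_n(p) = h(z + p/n)` minimizes `k ↦ ∫_Q c(z + p/n) k(p) dp` among
nonnegative `k ∈ L¹(Q)` with the same marginals as `h_n` and `k ≤ h̄_n` a.e. on `Q`. -/
theorem blowup_inherits_optimality (d : ℕ)
    (c : ((Fin d → ℝ) × (Fin d → ℝ)) → ℝ)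
    (hc_cont : Continuous c) (hc_bdd : ∃ M, ∀ p, |c p| ≤ M)
    (hbar : ((Fin d → ℝ) × (Fin d → ℝ)) → ℝ)
    (hbar_meas : Measurable hbar) (hbar_nonneg : ∀ p, 0 ≤ hbar p)
    (hbar_bdd : ∃ M, ∀ᵐ p ∂volume, hbar p ≤ M)
    (hbar_supp : HasCompactSupport hbar)
    (f g : (Fin d → ℝ) → ℝ)
    (hf_int : Integrable f volume) (hg_int : Integrable g volume)
    (hf_nonneg : ∀ x, 0 ≤ f x) (hg_nonneg : ∀ y, 0 ≤ g y)
    (hf_supp : HasCompactSupport f) (hg_supp : HasCompactSupport g)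
    (hmass : ∫ x, f x = ∫ y, g y)
    (h : ((Fin d → ℝ) × (Fin d → ℝ)) → ℝ)
    (hmem : InGammaBar f g hbar h)
    (hopt : ∀ k, InGammaBar f g hbar k → Icost c h ≤ Icost c k)
    (z : (Fin d → ℝ) × (Fin d → ℝ)) (n : ℕ) (hn : 1 ≤ n) :
    ∀ k : ((Fin d → ℝ) × (Fin d → ℝ)) → ℝ,
      IntegrableOn k (cube d ×ˢ cube d) volume →
      (∀ᵐ p ∂volume.restrict (cube d ×ˢ cube d), 0 ≤ k p) →
      (∀ᵐ x ∂volume.restrict (cube d),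
        (∫ y in cube d, k (x, y)) = ∫ y in cube d, h (z + (n : ℝ)⁻¹ • (x, y))) →
      (∀ᵐ y ∂volume.restrict (cube d),
        (∫ x in cube d, k (x, y)) = ∫ x in cube d, h (z + (n : ℝ)⁻¹ • (x, y))) →
      (∀ᵐ p ∂volume.restrict (cube d ×ˢ cube d), k p ≤ hbar (z + (n : ℝ)⁻¹ • p)) →
      (∫ p in cube d ×ˢ cube d, c (z + (n : ℝ)⁻¹ • p) * h (z + (n : ℝ)⁻¹ • p)) ≤
        ∫ p in cube d ×ˢ cube d, c (z + (n : ℝ)⁻¹ • p) * k p := by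
  classical
  intro k hk_int hk_nonneg hk_marg1 hk_marg2 hk_le
  have hnpos : (0 : ℝ) < (n : ℝ) := by exact_mod_cast hn
  have hn0 : ((n : ℝ)) ≠ 0 := hnpos.ne'
  have hcm : MeasurableSet (cube d) := measurableSet_Icc
  set Q : Set ((Fin d → ℝ) × (Fin d → ℝ)) := cube d ×ˢ cube d with hQdef
  have hQm : MeasurableSet Q := hcm.prod hcm
  set Φ : ((Fin d → ℝ) × (Fin d → ℝ)) → ((Fin d → ℝ) × (Fin d → ℝ)) :=
    fun q => (n : ℝ) • (q - z) with hΦdef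
  have hψΦ : ∀ q, z + (n : ℝ)⁻¹ • (Φ q) = q := by
    intro q
    simp [hΦdef, smul_smul, inv_mul_cancel₀ hn0]
  set kt : ((Fin d → ℝ) × (Fin d → ℝ)) → ℝ :=
    fun q => if Φ q ∈ Q then k (Φ q) else h q with hktdef
  set S : Set ((Fin d → ℝ) × (Fin d → ℝ)) := Φ ⁻¹' Q with hSdef
  have hΦmeas : Measurable Φ := (measurable_id.sub_const z).const_smul ((n : ℝ))
  have hSm : MeasurableSet S := hΦmeas hQm
  have hΦqmp : Measure.QuasiMeasurePreserving Φ volume volume := qmpAff volume hn0 z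
  have hh_int : Integrable h volume := hmem.1.1
  -- integrability of kt
  have hkQ : Integrable (Q.indicator k) volume := by
    rw [integrable_indicator_iff hQm]; exact hk_int
  have hcomp : Integrable (fun q => Q.indicator k (Φ q)) volume := intCompAff volume hn0 z hkQ
  have hkt_eq : kt = fun q => Q.indicator k (Φ q) + Sᶜ.indicator h q := by
    funext q
    by_cases hq : Φ q ∈ Q
    · simp [hktdef, hq, Set.indicator_of_mem hq, Set.indicator_of_notMem (by simpa [hSdef] using hq : q ∉ Sᶜ)]
    · simp [hktdef, hq, Set.indicator_of_notMem hq, Set.indicator_of_mem (by simpa [hSdef] using hq : q ∈ Sᶜ)]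
  have hkt_int : Integrable kt volume := by
    rw [hkt_eq]; exact hcomp.add (hh_int.indicator hSm.compl)
  -- nonnegativity of kt
  have hkt_nonneg : ∀ᵐ q ∂(volume : Measure ((Fin d → ℝ) × (Fin d → ℝ))), 0 ≤ kt q := by
    filter_upwards [hΦqmp.ae ((ae_restrict_iff' hQm).1 hk_nonneg), hmem.1.2.1] with q h1 h2
    by_cases hq : Φ q ∈ Q
    · simpa [hktdef, hq] using h1 hq
    · simpa [hktdef, hq] using h2
  -- domination
  have hkt_le : ∀ᵐ q ∂(volume : Measure ((Fin d → ℝ) × (Fin d → ℝ))), kt q ≤ hbar q := by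
    filter_upwards [hΦqmp.ae ((ae_restrict_iff' hQm).1 hk_le), hmem.2] with q h1 h2
    by_cases hq : Φ q ∈ Q
    · have := h1 hq
      rw [hψΦ q] at this
      simpa [hktdef, hq] using this
    · simpa [hktdef, hq] using h2
  have hrestr : (volume : Measure ((Fin d → ℝ) × (Fin d → ℝ))).restrict Q
      = ((volume : Measure (Fin d → ℝ)).restrict (cube d)).prod
        ((volume : Measure (Fin d → ℝ)).restrict (cube d)) := by
    rw [Measure.volume_eq_prod, Measure.prod_restrict]
  have hk_int' : Integrable k (((volume : Measure (Fin d → ℝ)).restrict (cube d)).prod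
      ((volume : Measure (Fin d → ℝ)).restrict (cube d))) := by
    rw [← hrestr]; exact hk_int
  have hh_int' : Integrable h ((volume : Measure (Fin d → ℝ)).prod
      (volume : Measure (Fin d → ℝ))) := by
    rw [← Measure.volume_eq_prod]; exact hh_int
  -- marginal 1
  have hmarg1 : ∀ᵐ x ∂(volume : Measure (Fin d → ℝ)), (∫ y, kt (x, y)) = f x := by
    have hk_slice : ∀ᵐ x ∂((volume : Measure (Fin d → ℝ)).restrict (cube d)),
        Integrable (fun v => k (x, v)) (volume.restrict (cube d)) := hk_int'.prod_right_ae
    have hh_slice : ∀ᵐ x ∂(volume : Measure (Fin d → ℝ)),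
        Integrable (fun y => h (x, y)) volume := hh_int'.prod_right_ae
    have Hae := (qmpAff (volume : Measure (Fin d → ℝ)) hn0 z.1).ae
      ((ae_restrict_iff' hcm).1 (hk_slice.and hk_marg1))
    filter_upwards [Hae, hh_slice, hmem.1.2.2.1] with x hx hhx hfx
    by_cases hxA : (n : ℝ) • (x - z.1) ∈ cube d
    · obtain ⟨hint, heq⟩ := hx hxA
      set a : Fin d → ℝ := (n : ℝ) • (x - z.1) with ha
      set B : Set (Fin d → ℝ) := (fun y => (n : ℝ) • (y - z.2)) ⁻¹' (cube d) with hB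
      have hBm : MeasurableSet B := ((measurable_id.sub_const z.2).const_smul ((n : ℝ))) hcm
      have hkt_sl : (fun y => kt (x, y)) = fun y =>
          (cube d).indicator (fun v => k (a, v)) ((n : ℝ) • (y - z.2))
          + Bᶜ.indicator (fun y => h (x, y)) y := by
        funext y
        have hco : Φ (x, y) = (a, (n : ℝ) • (y - z.2)) := rfl
        by_cases hy : (n : ℝ) • (y - z.2) ∈ cube d
        · have hmem' : Φ (x, y) ∈ Q := by rw [hco]; exact Set.mem_prod.2 ⟨hxA, hy⟩
          have hyB : y ∉ Bᶜ := fun hc => hc hy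
          rw [show kt (x, y) = k (Φ (x, y)) by simp [hktdef, hmem'], hco,
            Set.indicator_of_mem hy, Set.indicator_of_notMem hyB, add_zero]
        · have hmem' : Φ (x, y) ∉ Q := by
            rw [hco]; exact fun hc => hy hc.2
          rw [show kt (x, y) = h (x, y) by simp [hktdef, hmem'],
            Set.indicator_of_notMem hy, Set.indicator_of_mem (show y ∈ Bᶜ from hy), zero_add]
      have hG_int : Integrable ((cube d).indicator fun v => k (a, v)) volume := by
        rw [integrable_indicator_iff hcm]; exact hint
      have hGc_int : Integrable
          (fun y => (cube d).indicator (fun v => k (a, v)) ((n : ℝ) • (y - z.2))) volume :=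
        intCompAff volume hn0 z.2 hG_int
      have hHc_int : Integrable (Bᶜ.indicator fun y => h (x, y)) volume :=
        hhx.indicator hBm.compl
      rw [hkt_sl, integral_add hGc_int hHc_int]
      have e1 : (∫ y, (cube d).indicator (fun v => k (a, v)) ((n : ℝ) • (y - z.2)))
          = ((n : ℝ) ^ (Module.finrank ℝ (Fin d → ℝ)))⁻¹
            * ∫ v, (cube d).indicator (fun v => k (a, v)) v :=
        covB volume hnpos z.2 _
      rw [integral_indicator hcm] at e1
      rw [e1, heq]
      have e3 : (∫ v in cube d, h (z + (n : ℝ)⁻¹ • ((a : Fin d → ℝ), v)))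
          = ∫ v, B.indicator (fun y => h (x, y)) (z.2 + (n : ℝ)⁻¹ • v) := by
        rw [← integral_indicator hcm]
        congr 1
        funext v
        by_cases hv : v ∈ cube d
        · have hvB : z.2 + (n : ℝ)⁻¹ • v ∈ B := by
            simp only [hB, Set.mem_preimage, add_sub_cancel_left, smul_smul,
              mul_inv_cancel₀ hn0, one_smul]
            exact hv
          have e2 : z + (n : ℝ)⁻¹ • ((a : Fin d → ℝ), v) = (x, z.2 + (n : ℝ)⁻¹ • v) := by
            have h1 : z.1 + (n : ℝ)⁻¹ • a = x := by
              rw [ha, smul_smul, inv_mul_cancel₀ hn0, one_smul, add_sub_cancel]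
            exact Prod.ext h1 rfl
          rw [Set.indicator_of_mem hv, Set.indicator_of_mem hvB, e2]
        · have hvB : z.2 + (n : ℝ)⁻¹ • v ∉ B := by
            simp only [hB, Set.mem_preimage, add_sub_cancel_left, smul_smul,
              mul_inv_cancel₀ hn0, one_smul]
            exact hv
          rw [Set.indicator_of_notMem hv, Set.indicator_of_notMem hvB]
      have e4 : (∫ v, B.indicator (fun y => h (x, y)) (z.2 + (n : ℝ)⁻¹ • v))
          = (n : ℝ) ^ (Module.finrank ℝ (Fin d → ℝ))
            * ∫ y, B.indicator (fun y => h (x, y)) y :=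
        covA volume hnpos z.2 _
      rw [e3, e4, inv_mul_cancel_left₀ (pow_ne_zero _ hn0)]
      have hIB : Integrable (B.indicator fun y => h (x, y)) volume := hhx.indicator hBm
      rw [← integral_add hIB hHc_int]
      rw [show (fun y => B.indicator (fun y => h (x, y)) y
            + Bᶜ.indicator (fun y => h (x, y)) y) = fun y => h (x, y) by
          funext y; exact congrFun (Set.indicator_self_add_compl B _) y]
      exact hfx
    · have hall : ∀ y, kt (x, y) = h (x, y) := by
        intro y
        have hmem' : Φ (x, y) ∉ Q := fun hc => hxA hc.1
        simp [hktdef, hmem']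
      simp only [hall]
      exact hfx
  -- marginal 2
  have hmarg2 : ∀ᵐ y ∂(volume : Measure (Fin d → ℝ)), (∫ x, kt (x, y)) = g y := by
    have hk_slice : ∀ᵐ y ∂((volume : Measure (Fin d → ℝ)).restrict (cube d)),
        Integrable (fun u => k (u, y)) (volume.restrict (cube d)) := hk_int'.prod_left_ae
    have hh_slice : ∀ᵐ y ∂(volume : Measure (Fin d → ℝ)),
        Integrable (fun u => h (u, y)) volume := hh_int'.prod_left_ae
    have Hae := (qmpAff (volume : Measure (Fin d → ℝ)) hn0 z.2).ae
      ((ae_restrict_iff' hcm).1 (hk_slice.and hk_marg2))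
    filter_upwards [Hae, hh_slice, hmem.1.2.2.2] with y hy hhy hgy
    by_cases hyB : (n : ℝ) • (y - z.2) ∈ cube d
    · obtain ⟨hint, heq⟩ := hy hyB
      set b : Fin d → ℝ := (n : ℝ) • (y - z.2) with hb
      set A : Set (Fin d → ℝ) := (fun x => (n : ℝ) • (x - z.1)) ⁻¹' (cube d) with hA
      have hAm : MeasurableSet A := ((measurable_id.sub_const z.1).const_smul ((n : ℝ))) hcm
      have hkt_sl : (fun x => kt (x, y)) = fun x =>
          (cube d).indicator (fun u => k (u, b)) ((n : ℝ) • (x - z.1))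
          + Aᶜ.indicator (fun x => h (x, y)) x := by
        funext x
        have hco : Φ (x, y) = ((n : ℝ) • (x - z.1), b) := rfl
        by_cases hx : (n : ℝ) • (x - z.1) ∈ cube d
        · have hmem' : Φ (x, y) ∈ Q := by rw [hco]; exact Set.mem_prod.2 ⟨hx, hyB⟩
          have hxA : x ∉ Aᶜ := fun hc => hc hx
          rw [show kt (x, y) = k (Φ (x, y)) by simp [hktdef, hmem'], hco,
            Set.indicator_of_mem hx, Set.indicator_of_notMem hxA, add_zero]
        · have hmem' : Φ (x, y) ∉ Q := by
            rw [hco]; exact fun hc => hx hc.1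
          rw [show kt (x, y) = h (x, y) by simp [hktdef, hmem'],
            Set.indicator_of_notMem hx, Set.indicator_of_mem (show x ∈ Aᶜ from hx), zero_add]
      have hG_int : Integrable ((cube d).indicator fun u => k (u, b)) volume := by
        rw [integrable_indicator_iff hcm]; exact hint
      have hGc_int : Integrable
          (fun x => (cube d).indicator (fun u => k (u, b)) ((n : ℝ) • (x - z.1))) volume :=
        intCompAff volume hn0 z.1 hG_int
      have hHc_int : Integrable (Aᶜ.indicator fun x => h (x, y)) volume :=
        hhy.indicator hAm.compl
      rw [hkt_sl, integral_add hGc_int hHc_int]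
      have e1 : (∫ x, (cube d).indicator (fun u => k (u, b)) ((n : ℝ) • (x - z.1)))
          = ((n : ℝ) ^ (Module.finrank ℝ (Fin d → ℝ)))⁻¹
            * ∫ u, (cube d).indicator (fun u => k (u, b)) u :=
        covB volume hnpos z.1 _
      rw [integral_indicator hcm] at e1
      rw [e1, heq]
      have e3 : (∫ u in cube d, h (z + (n : ℝ)⁻¹ • (u, (b : Fin d → ℝ))))
          = ∫ u, A.indicator (fun x => h (x, y)) (z.1 + (n : ℝ)⁻¹ • u) := by
        rw [← integral_indicator hcm]
        congr 1
        funext u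
        by_cases hu : u ∈ cube d
        · have huA : z.1 + (n : ℝ)⁻¹ • u ∈ A := by
            simp only [hA, Set.mem_preimage, add_sub_cancel_left, smul_smul,
              mul_inv_cancel₀ hn0, one_smul]
            exact hu
          have e2 : z + (n : ℝ)⁻¹ • (u, (b : Fin d → ℝ)) = (z.1 + (n : ℝ)⁻¹ • u, y) := by
            have h1 : z.2 + (n : ℝ)⁻¹ • b = y := by
              rw [hb, smul_smul, inv_mul_cancel₀ hn0, one_smul, add_sub_cancel]
            exact Prod.ext rfl h1
          rw [Set.indicator_of_mem hu, Set.indicator_of_mem huA, e2]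
        · have huA : z.1 + (n : ℝ)⁻¹ • u ∉ A := by
            simp only [hA, Set.mem_preimage, add_sub_cancel_left, smul_smul,
              mul_inv_cancel₀ hn0, one_smul]
            exact hu
          rw [Set.indicator_of_notMem hu, Set.indicator_of_notMem huA]
      have e4 : (∫ u, A.indicator (fun x => h (x, y)) (z.1 + (n : ℝ)⁻¹ • u))
          = (n : ℝ) ^ (Module.finrank ℝ (Fin d → ℝ))
            * ∫ x, A.indicator (fun x => h (x, y)) x :=
        covA volume hnpos z.1 _
      rw [e3, e4, inv_mul_cancel_left₀ (pow_ne_zero _ hn0)]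
      have hIA : Integrable (A.indicator fun x => h (x, y)) volume := hhy.indicator hAm
      rw [← integral_add hIA hHc_int]
      rw [show (fun x => A.indicator (fun x => h (x, y)) x
            + Aᶜ.indicator (fun x => h (x, y)) x) = fun x => h (x, y) by
          funext x; exact congrFun (Set.indicator_self_add_compl A _) x]
      exact hgy
    · have hall : ∀ x, kt (x, y) = h (x, y) := by
        intro x
        have hmem' : Φ (x, y) ∉ Q := fun hc => hyB hc.2
        simp [hktdef, hmem']
      simp only [hall]
      exact hgy
  have hkt_mem : InGammaBar f g hbar kt := ⟨⟨hkt_int, hkt_nonneg, hmarg1, hmarg2⟩, hkt_le⟩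
  have hkey : Icost c h ≤ Icost c kt := hopt kt hkt_mem
  -- conclude
  obtain ⟨M, hM⟩ := hc_bdd
  have hc_meas : AEStronglyMeasurable c volume := hc_cont.aestronglyMeasurable
  have hMnorm : ∃ C, ∀ p, ‖c p‖ ≤ C := ⟨M, fun p => by simpa [Real.norm_eq_abs] using hM p⟩
  have hch : Integrable (fun p => c p * h p) volume := hh_int.bdd_mul hc_meas (ae_of_all _ hMnorm.choose_spec)
  have hckt : Integrable (fun p => c p * kt p) volume := hkt_int.bdd_mul hc_meas (ae_of_all _ hMnorm.choose_spec)
  have hsplit_h := integral_add_compl hSm hch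
  have hsplit_kt := integral_add_compl hSm hckt
  have heqc : (∫ q in Sᶜ, c q * kt q) = ∫ q in Sᶜ, c q * h q := by
    refine setIntegral_congr_fun hSm.compl (fun q hq => ?_)
    have hq' : Φ q ∉ Q := hq
    simp [hktdef, hq']
  have heqS : (∫ q in S, c q * kt q) = ∫ q in S, c q * k (Φ q) := by
    refine setIntegral_congr_fun hSm (fun q hq => ?_)
    have hq' : Φ q ∈ Q := hq
    simp [hktdef, hq']
  have hstep : (∫ q in S, c q * h q) ≤ ∫ q in S, c q * k (Φ q) := by
    have hI : (∫ p, c p * h p) ≤ ∫ p, c p * kt p := hkey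
    linarith [hsplit_h, hsplit_kt, heqc, heqS]
  have covL : (∫ q in S, c q * h q)
      = ((n : ℝ) ^ (Module.finrank ℝ ((Fin d → ℝ) × (Fin d → ℝ))))⁻¹
        * ∫ p in Q, c (z + (n : ℝ)⁻¹ • p) * h (z + (n : ℝ)⁻¹ • p) := by
    rw [← integral_indicator hSm, ← integral_indicator hQm]
    have e : ∀ q, S.indicator (fun q => c q * h q) q
        = Q.indicator (fun p => c (z + (n : ℝ)⁻¹ • p) * h (z + (n : ℝ)⁻¹ • p)) (Φ q) := by
      intro q
      by_cases hq : Φ q ∈ Q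
      · rw [Set.indicator_of_mem (show q ∈ S from hq), Set.indicator_of_mem hq, hψΦ q]
      · rw [Set.indicator_of_notMem (show q ∉ S from hq), Set.indicator_of_notMem hq]
    simp_rw [e, hΦdef]
    exact covB volume hnpos z _
  have covR : (∫ q in S, c q * k (Φ q))
      = ((n : ℝ) ^ (Module.finrank ℝ ((Fin d → ℝ) × (Fin d → ℝ))))⁻¹
        * ∫ p in Q, c (z + (n : ℝ)⁻¹ • p) * k p := by
    rw [← integral_indicator hSm, ← integral_indicator hQm]
    have e : ∀ q, S.indicator (fun q => c q * k (Φ q)) q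
        = Q.indicator (fun p => c (z + (n : ℝ)⁻¹ • p) * k p) (Φ q) := by
      intro q
      by_cases hq : Φ q ∈ Q
      · rw [Set.indicator_of_mem (show q ∈ S from hq), Set.indicator_of_mem hq, hψΦ q]
      · rw [Set.indicator_of_notMem (show q ∉ S from hq), Set.indicator_of_notMem hq]
    simp_rw [e, hΦdef]
    exact covB volume hnpos z _
  rw [covL, covR] at hstep
  have hpow : (0 : ℝ) < ((n : ℝ) ^ (Module.finrank ℝ ((Fin d → ℝ) × (Fin d → ℝ))))⁻¹ := by
    positivity
  exact (mul_le_mul_iff_of_pos_left hpow).mp hstep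
end
end

section
/- Let h̄ be a nonnegative function in L^∞(ℝ^d × ℝ^d) with compact support, and let f, g be nonnegative compactly supported functions in L¹(ℝ^d) with equal total mass. Let h ∈ Γ(f,g)^h̄. Suppose that for almost every (x₀,y₀) ∈ ℝ^d × ℝ^d which is a common Lebesgue point of h and h̄, the constant function h(x₀,y₀) on Q minimizes the functional k ↦ ∫_Q x·y · k(x,y) dx dy among all nonnegative k ∈ L¹(Q) whose two marginals both equal the constant h(x₀,y₀) on [-1/2,1/2]^d and which satisfy k ≤ h̄(x₀,y₀) a.e. on Q. Then h is geometrically extreme: there exists a Lebesgue-measurable set W ⊆ ℝ^d × ℝ^d with h = h̄·1_W almost everywhere. -/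
open MeasureTheory Filter Set Topology

noncomputable section

/-- `z` is a Lebesgue point of `k`: the averages of `|k - k z|` over balls
`B_r(z)` tend to `0` as `r → 0⁺`. -/
def LebPoint {α : Type*} [MeasurableSpace α] [PseudoMetricSpace α]
    (μ : Measure α) (k : α → ℝ) (z : α) : Prop :=
  Tendsto (fun r : ℝ => ⨍ w in Metric.ball z r, |k w - k z| ∂μ)
    (nhdsWithin 0 (Set.Ioi 0)) (nhds 0)

namespace GeomAux

noncomputable def sgn (t : ℝ) : ℝ := if 0 ≤ t then 1 else -1

lemma sgn_vals (t : ℝ) : sgn t = 1 ∨ sgn t = -1 := by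
  unfold sgn; split_ifs <;> simp

lemma sgn_meas : Measurable sgn :=
  Measurable.ite (measurableSet_le measurable_const measurable_id)
    measurable_const measurable_const

lemma norm_sgn (t : ℝ) : ‖sgn t‖ ≤ 1 := by
  rcases sgn_vals t with h | h <;> simp [h]

def II : Set ℝ := Icc (-(1/2) : ℝ) (1/2)

lemma II_meas : MeasurableSet II := measurableSet_Icc

lemma J1 : ∫ _t in II, (1:ℝ) = 1 := by
  simp [II, Real.volume_Icc]; norm_num

lemma J2 : ∫ t in II, t = 0 := by
  rw [II, MeasureTheory.integral_Icc_eq_integral_Ioc,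
    ← intervalIntegral.integral_of_le (by norm_num : (-(1/2):ℝ) ≤ 1/2),
    integral_id]
  norm_num

lemma hsplit : Ico (-(1/2):ℝ) 0 ∪ Icc 0 (1/2) = II :=
  Ico_union_Icc_eq_Icc (by norm_num) (by norm_num)

lemma hdisj : Disjoint (Ico (-(1/2):ℝ) 0) (Icc (0:ℝ) (1/2)) := by
  rw [Set.disjoint_left]
  rintro a ⟨_, h2⟩ ⟨h3, _⟩
  exact absurd h3 (not_le.2 h2)

lemma intOn_sgn {s : Set ℝ} (hs : volume s ≠ ⊤) : IntegrableOn sgn s := by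
  refine Measure.integrableOn_of_bounded (M := 1) hs sgn_meas.aestronglyMeasurable ?_
  exact ae_of_all _ fun t => norm_sgn t

lemma intOn_mul_sgn : IntegrableOn (fun t => t * sgn t) II := by
  refine Measure.integrableOn_of_bounded (M := 1/2) (by simp [II, Real.volume_Icc]) ((measurable_id.mul sgn_meas).aestronglyMeasurable) ?_
  filter_upwards [ae_restrict_mem II_meas] with t ht
  have h1 : |t| ≤ 1/2 := abs_le.2 ⟨ht.1, ht.2⟩
  calc ‖t * sgn t‖ = |t| * ‖sgn t‖ := by rw [norm_mul]; rfl
    _ ≤ (1/2) * 1 := by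
        apply mul_le_mul h1 (norm_sgn t) (norm_nonneg _) (by norm_num)
    _ = 1/2 := by norm_num

lemma J3 : ∫ t in II, sgn t = 0 := by
  rw [← hsplit, setIntegral_union hdisj measurableSet_Icc
    ((intOn_sgn (by simp [Real.volume_Ico])))
    ((intOn_sgn (by simp [Real.volume_Icc])))]
  have e1 : ∫ t in Ico (-(1/2):ℝ) 0, sgn t = -(1/2) := by
    rw [setIntegral_congr_fun measurableSet_Ico
      (fun t ht => show sgn t = -1 from if_neg (not_le.2 ht.2))]
    simp [Real.volume_Ico]
  have e2 : ∫ t in Icc (0:ℝ) (1/2), sgn t = 1/2 := by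
    rw [setIntegral_congr_fun measurableSet_Icc
      (fun t ht => show sgn t = 1 from if_pos ht.1)]
    simp [Real.volume_Icc]
  rw [e1, e2]; ring

lemma J4 : ∫ t in II, t * sgn t = 1/4 := by
  rw [← hsplit, setIntegral_union hdisj measurableSet_Icc
    (intOn_mul_sgn.mono_set (by rw [← hsplit]; exact subset_union_left))
    (intOn_mul_sgn.mono_set (by rw [← hsplit]; exact subset_union_right))]
  have e1 : ∫ t in Ico (-(1/2):ℝ) 0, t * sgn t = 1/8 := by
    rw [setIntegral_congr_fun measurableSet_Ico
      (fun t ht => show t * sgn t = -t by rw [sgn, if_neg (not_le.2 ht.2)]; ring)]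
    rw [integral_Ico_eq_integral_Ioo, ← MeasureTheory.integral_Ioc_eq_integral_Ioo,
      ← intervalIntegral.integral_of_le (by norm_num : (-(1/2):ℝ) ≤ 0)]
    rw [intervalIntegral.integral_neg, integral_id]
    norm_num
  have e2 : ∫ t in Icc (0:ℝ) (1/2), t * sgn t = 1/8 := by
    rw [setIntegral_congr_fun measurableSet_Icc
      (fun t ht => show t * sgn t = t by rw [sgn, if_pos ht.1]; ring)]
    rw [MeasureTheory.integral_Icc_eq_integral_Ioc,
      ← intervalIntegral.integral_of_le (by norm_num : (0:ℝ) ≤ 1/2),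
      integral_id]
    norm_num
  rw [e1, e2]; norm_num

variable {d : ℕ}

lemma mem_cube {x : Fin d → ℝ} : x ∈ cube d ↔ ∀ i, x i ∈ II := by
  constructor
  · exact fun hx i => ⟨hx.1 i, hx.2 i⟩
  · exact fun hx => ⟨fun i => (hx i).1, fun i => (hx i).2⟩

lemma cube_meas : MeasurableSet (cube d) := measurableSet_Icc

lemma cube_volume : volume (cube d) = 1 := by
  rw [cube, Real.volume_Icc_pi]
  norm_num

lemma cube_prod_integral (f : Fin d → ℝ → ℝ) :
    ∫ x in cube d, ∏ i, f i (x i) = ∏ i, ∫ t in II, f i t := by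
  rw [← integral_indicator cube_meas]
  have hind : (cube d).indicator (fun x => ∏ i, f i (x i))
      = fun x => ∏ i, II.indicator (f i) (x i) := by
    funext x
    by_cases hx : x ∈ cube d
    · rw [indicator_of_mem hx]
      exact Finset.prod_congr rfl fun i _ => (indicator_of_mem (mem_cube.1 hx i) _).symm
    · rw [indicator_of_notMem hx]
      obtain ⟨i, hi⟩ : ∃ i, x i ∉ II := by
        by_contra hc; push_neg at hc; exact hx (mem_cube.2 hc)
      exact (Finset.prod_eq_zero (Finset.mem_univ i) (indicator_of_notMem hi _)).symm
  rw [hind, MeasureTheory.volume_pi, MeasureTheory.integral_fintype_prod_eq_prod (ι := Fin d)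
    (fun i => II.indicator (f i))]
  exact Finset.prod_congr rfl fun i _ => integral_indicator II_meas

lemma cube_integral_coord (j : Fin d) (φ : ℝ → ℝ) :
    ∫ x in cube d, φ (x j) = ∫ t in II, φ t := by
  have h1 : ∀ x : Fin d → ℝ, φ (x j) = ∏ i, (if i = j then φ (x i) else 1) := by
    intro x
    rw [Finset.prod_ite_eq' Finset.univ j (fun i => φ (x i))]
    simp
  simp_rw [h1]
  rw [cube_prod_integral (fun i t => if i = j then φ t else 1)]
  have h2 : ∀ i : Fin d, (∫ t in II, if i = j then φ t else 1)
      = if i = j then ∫ t in II, φ t else 1 := by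
    intro i
    by_cases h : i = j <;> simp [h, II, Real.volume_Icc] <;> norm_num
  rw [Finset.prod_congr rfl (fun i _ => h2 i),
    Finset.prod_ite_eq' Finset.univ j (fun _ => ∫ t in II, φ t)]
  simp

lemma cube_integral_coord2 (j l : Fin d) (hjl : j ≠ l) (φ ψ : ℝ → ℝ) :
    ∫ x in cube d, φ (x j) * ψ (x l) = (∫ t in II, φ t) * ∫ t in II, ψ t := by
  have h1 : ∀ x : Fin d → ℝ, φ (x j) * ψ (x l)
      = ∏ i, ((if i = j then φ (x i) else 1) * (if i = l then ψ (x i) else 1)) := by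
    intro x
    rw [Finset.prod_mul_distrib, Finset.prod_ite_eq' Finset.univ j (fun i => φ (x i)),
      Finset.prod_ite_eq' Finset.univ l (fun i => ψ (x i))]
    simp
  simp_rw [h1]
  rw [cube_prod_integral (fun i t => (if i = j then φ t else 1) * (if i = l then ψ t else 1))]
  have h2 : ∀ i : Fin d, (∫ t in II, (if i = j then φ t else 1) * (if i = l then ψ t else 1))
      = (if i = j then ∫ t in II, φ t else 1) * (if i = l then ∫ t in II, ψ t else 1) := by
    intro i
    by_cases h : i = j
    · subst h
      simp [hjl, II, Real.volume_Icc]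
    · by_cases h' : i = l
      · subst h'
        simp [h, II, Real.volume_Icc]
      · simp [h, h', II, Real.volume_Icc]
        norm_num
  rw [Finset.prod_congr rfl (fun i _ => h2 i), Finset.prod_mul_distrib,
    Finset.prod_ite_eq' Finset.univ j (fun _ => ∫ t in II, φ t),
    Finset.prod_ite_eq' Finset.univ l (fun _ => ∫ t in II, ψ t)]
  simp


def S (i₀ : Fin d) : (Fin d → ℝ) → ℝ := fun x => sgn (x i₀)

lemma S_meas (i₀ : Fin d) : Measurable (S i₀) := sgn_meas.comp (measurable_pi_apply i₀)

lemma S_vals (i₀ : Fin d) (x : Fin d → ℝ) : S i₀ x = 1 ∨ S i₀ x = -1 := sgn_vals _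

lemma intA (i : Fin d) : ∫ x in cube d, x i = 0 := by
  rw [cube_integral_coord i (fun t => t)]; exact J2

lemma intC (i₀ : Fin d) : ∫ x in cube d, S i₀ x = 0 := by
  rw [show (fun x : Fin d → ℝ => S i₀ x) = fun x => sgn (x i₀) from rfl,
    cube_integral_coord i₀ sgn]
  exact J3

lemma intB (i₀ i : Fin d) :
    ∫ x in cube d, x i * S i₀ x = if i = i₀ then (1/4 : ℝ) else 0 := by
  by_cases h : i = i₀
  · subst h
    rw [if_pos rfl, show (fun x : Fin d → ℝ => x i * S i x) = fun x => (fun t => t * sgn t) (x i) from rfl,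
      cube_integral_coord i (fun t => t * sgn t)]
    exact J4
  · rw [if_neg h, show (fun x : Fin d → ℝ => x i * S i₀ x) = fun x => (fun t => t) (x i) * sgn (x i₀) from rfl,
      cube_integral_coord2 i i₀ h (fun t => t) sgn, J2]
    ring

lemma intOnCube_coord (i : Fin d) : IntegrableOn (fun x : Fin d → ℝ => x i) (cube d) := by
  refine Measure.integrableOn_of_bounded (M := 1/2) (by rw [cube_volume]; simp)
    (measurable_pi_apply i).aestronglyMeasurable ?_
  filter_upwards [ae_restrict_mem cube_meas] with x hx
  exact abs_le.2 ⟨hx.1 i, hx.2 i⟩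

lemma intOnCube_S (i₀ : Fin d) : IntegrableOn (S i₀) (cube d) := by
  refine Measure.integrableOn_of_bounded (M := 1) (by rw [cube_volume]; simp)
    (S_meas i₀).aestronglyMeasurable (ae_of_all _ fun x => norm_sgn _)

lemma intOnCube_coord_S (i₀ i : Fin d) :
    IntegrableOn (fun x : Fin d → ℝ => x i * S i₀ x) (cube d) := by
  refine Measure.integrableOn_of_bounded (M := 1/2) (by rw [cube_volume]; simp)
    ((measurable_pi_apply i).mul (S_meas i₀)).aestronglyMeasurable ?_
  filter_upwards [ae_restrict_mem cube_meas] with x hx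
  calc ‖x i * S i₀ x‖ = ‖x i‖ * ‖S i₀ x‖ := norm_mul _ _
    _ ≤ (1/2) * 1 :=
        mul_le_mul (abs_le.2 ⟨hx.1 i, hx.2 i⟩) (norm_sgn _) (norm_nonneg _) (by norm_num)
    _ = 1/2 := by norm_num

lemma marg (i₀ : Fin d) (c u : ℝ) : ∫ y in cube d, (c - u * S i₀ y) = c := by
  rw [integral_sub (integrableOn_const (μ := volume) (s := cube d) (C := c) (by rw [cube_volume]; exact ENNReal.one_ne_top))
    ((intOnCube_S i₀).const_mul u)]
  rw [integral_const_mul, intC, setIntegral_const, measureReal_def, cube_volume]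
  simp

lemma costEval (i₀ : Fin d) (c a : ℝ) :
    ∫ p in cube d ×ˢ cube d, (∑ i, p.1 i * p.2 i) * (c - a * S i₀ p.1 * S i₀ p.2)
      = -(a/16) := by
  have hset : ∀ p : (Fin d → ℝ) × (Fin d → ℝ),
      (∑ i, p.1 i * p.2 i) * (c - a * S i₀ p.1 * S i₀ p.2)
      = ∑ i, (c * ((fun x => x i) p.1 * (fun y => y i) p.2)
          - a * ((fun x => x i * S i₀ x) p.1 * (fun y => y i * S i₀ y) p.2)) := by
    intro p
    rw [Finset.sum_mul]
    exact Finset.sum_congr rfl fun i _ => by ring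
  simp_rw [hset]
  rw [show (volume : Measure ((Fin d → ℝ) × (Fin d → ℝ)))
      = (volume : Measure (Fin d → ℝ)).prod volume from Measure.volume_eq_prod _ _,
    ← Measure.prod_restrict]
  have hint1 : ∀ i : Fin d, Integrable
      (fun p : (Fin d → ℝ) × (Fin d → ℝ) =>
        c * (p.1 i * p.2 i) - a * ((p.1 i * S i₀ p.1) * (p.2 i * S i₀ p.2)))
      ((volume.restrict (cube d)).prod (volume.restrict (cube d))) := fun i =>
    (((intOnCube_coord i).mul_prod (intOnCube_coord i)).const_mul c).sub
      (((intOnCube_coord_S i₀ i).mul_prod (intOnCube_coord_S i₀ i)).const_mul a)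
  rw [integral_finset_sum _ (fun i _ => hint1 i)]
  have hterm : ∀ i : Fin d,
      (∫ p : (Fin d → ℝ) × (Fin d → ℝ),
        (c * ((fun x => x i) p.1 * (fun y => y i) p.2)
          - a * ((fun x => x i * S i₀ x) p.1 * (fun y => y i * S i₀ y) p.2))
        ∂((volume.restrict (cube d)).prod (volume.restrict (cube d))))
      = if i = i₀ then -(a/16) else 0 := by
    intro i
    rw [integral_sub (((intOnCube_coord i).mul_prod (intOnCube_coord i)).const_mul c)
      (((intOnCube_coord_S i₀ i).mul_prod (intOnCube_coord_S i₀ i)).const_mul a),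
      integral_const_mul, integral_const_mul,
      integral_prod_mul (f := fun x : Fin d → ℝ => x i) (g := fun y : Fin d → ℝ => y i),
      integral_prod_mul (f := fun x : Fin d → ℝ => x i * S i₀ x)
        (g := fun y : Fin d → ℝ => y i * S i₀ y)]
    show c * ((∫ x in cube d, x i) * (∫ x in cube d, x i))
      - a * ((∫ x in cube d, x i * S i₀ x) * (∫ x in cube d, x i * S i₀ x)) = _
    rw [intA, intB]
    by_cases h : i = i₀ <;> simp [h] <;> ring
  rw [Finset.sum_congr rfl fun i _ => hterm i, Finset.sum_ite_eq' Finset.univ i₀]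
  simp


lemma lebPoint_ae {E : Type*} [NormedAddCommGroup E] [NormedSpace ℝ E]
    [FiniteDimensional ℝ E] [Nontrivial E] [MeasurableSpace E] [BorelSpace E]
    (μ : Measure E) [μ.IsAddHaarMeasure] {k : E → ℝ} (hk : LocallyIntegrable k μ) :
    ∀ᵐ z ∂μ, LebPoint μ k z := by
  filter_upwards [IsUnifLocDoublingMeasure.ae_tendsto_average_norm_sub (μ := μ) hk 1] with z hz
  have h2 : Tendsto (fun r : ℝ => ⨍ w in Metric.closedBall z r, |k w - k z| ∂μ)
      (𝓝[>] (0:ℝ)) (𝓝 0) := by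
    have h3 := hz (fun _ : ℝ => z) (fun r => r) tendsto_id ?_
    · simpa [Real.norm_eq_abs] using h3
    · filter_upwards [self_mem_nhdsWithin] with r hr
      have hr' : (0:ℝ) < r := hr
      exact Metric.mem_closedBall_self (by linarith)
  have heq : ∀ᶠ r in 𝓝[>] (0:ℝ),
      (⨍ w in Metric.closedBall z r, |k w - k z| ∂μ)
        = ⨍ w in Metric.ball z r, |k w - k z| ∂μ := by
    filter_upwards [self_mem_nhdsWithin] with r _
    have hae : Metric.closedBall z r =ᵐ[μ] Metric.ball z r := by
      refine (MeasureTheory.ae_eq_set).2 ⟨?_, ?_⟩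
      · rw [Metric.closedBall_diff_ball]
        exact Measure.addHaar_sphere μ z r
      · rw [Set.diff_eq_empty.2 Metric.ball_subset_closedBall]
        exact measure_empty
    rw [Measure.restrict_congr_set hae]
  exact Tendsto.congr' heq h2

end GeomAux

/-- **A necessary condition for optimality of the blow-ups implies geometric extremality**
(Corollary 6.3): if `h ∈ Γ(f,g)^h̄` and, at almost every common Lebesgue point `z` of `h` and
`h̄`, the constant `h z` minimizes `k ↦ ∫_Q x·y k(x,y) dx dy` among nonnegative `k ∈ L¹(Q)`
with constant marginals `h z` and `k ≤ h̄ z` a.e. on `Q`, then `h` is geometrically extreme: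
`h = h̄·1_W` a.e. for some measurable `W`. -/
theorem blowup_optimality_implies_geometrically_extreme (d : ℕ) (hd : 0 < d)
    (hbar : ((Fin d → ℝ) × (Fin d → ℝ)) → ℝ)
    (hbar_meas : Measurable hbar) (hbar_nonneg : ∀ p, 0 ≤ hbar p)
    (hbar_bdd : ∃ M, ∀ᵐ p ∂volume, hbar p ≤ M)
    (hbar_supp : HasCompactSupport hbar)
    (f g : (Fin d → ℝ) → ℝ)
    (hf_int : Integrable f volume) (hg_int : Integrable g volume)
    (hf_nonneg : ∀ x, 0 ≤ f x) (hg_nonneg : ∀ y, 0 ≤ g y)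
    (hf_supp : HasCompactSupport f) (hg_supp : HasCompactSupport g)
    (hmass : ∫ x, f x = ∫ y, g y)
    (h : ((Fin d → ℝ) × (Fin d → ℝ)) → ℝ)
    (hmem : InGammaBar f g hbar h)
    (hopt : ∀ᵐ z ∂volume, (LebPoint volume h z ∧ LebPoint volume hbar z) →
      ∀ k : ((Fin d → ℝ) × (Fin d → ℝ)) → ℝ,
        IntegrableOn k (cube d ×ˢ cube d) volume →
        (∀ᵐ p ∂volume.restrict (cube d ×ˢ cube d), 0 ≤ k p) →
        (∀ᵐ x ∂volume.restrict (cube d), (∫ y in cube d, k (x, y)) = h z) →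
        (∀ᵐ y ∂volume.restrict (cube d), (∫ x in cube d, k (x, y)) = h z) →
        (∀ᵐ p ∂volume.restrict (cube d ×ˢ cube d), k p ≤ hbar z) →
        (∫ p in cube d ×ˢ cube d, (∑ i, p.1 i * p.2 i) * h z) ≤
          ∫ p in cube d ×ˢ cube d, (∑ i, p.1 i * p.2 i) * k p) :
    ∃ W : Set ((Fin d → ℝ) × (Fin d → ℝ)), MeasurableSet W ∧
      h =ᵐ[volume] W.indicator hbar := by
  classical
  obtain ⟨⟨h_int, h_nn, _hm1, _hm2⟩, h_le⟩ := hmem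
  haveI : Nonempty (Fin d) := ⟨⟨0, hd⟩⟩
  haveI : Nontrivial ((Fin d → ℝ) × (Fin d → ℝ)) := by
    refine ⟨⟨(fun _ => 0, fun _ => 0), (fun _ => 1, fun _ => 1), fun hcon => ?_⟩⟩
    have := congrFun (congrArg Prod.fst hcon) ⟨0, hd⟩
    norm_num at this
  haveI hHaar : Measure.IsAddHaarMeasure (volume : Measure ((Fin d → ℝ) × (Fin d → ℝ))) := by
    rw [Measure.volume_eq_prod (Fin d → ℝ) (Fin d → ℝ)]
    exact Measure.prod.instIsAddHaarMeasure volume volume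
  have hbar_loc : LocallyIntegrable hbar volume := by
    obtain ⟨M, hM⟩ := hbar_bdd
    have hint : Integrable hbar volume := by
      have h1 : IntegrableOn hbar (tsupport hbar) volume :=
        Measure.integrableOn_of_bounded (M := max M 0)
          hbar_supp.isCompact.measure_lt_top.ne hbar_meas.aestronglyMeasurable
          (ae_restrict_of_ae (hM.mono fun p hp => by
            rw [Real.norm_eq_abs, abs_of_nonneg (hbar_nonneg p)]
            exact le_max_of_le_left hp))
      rw [← Set.indicator_eq_self.2 (subset_tsupport hbar)]
      exact (integrable_indicator_iff (isClosed_tsupport hbar).measurableSet).2 h1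
    exact hint.locallyIntegrable
  have hLh := GeomAux.lebPoint_ae (volume : Measure ((Fin d → ℝ) × (Fin d → ℝ))) h_int.locallyIntegrable
  have hLb := GeomAux.lebPoint_ae (volume : Measure ((Fin d → ℝ) × (Fin d → ℝ))) hbar_loc
  have key : ∀ᵐ z ∂(volume : Measure ((Fin d → ℝ) × (Fin d → ℝ))),
      h z = 0 ∨ h z = hbar z := by
    filter_upwards [hLh, hLb, hopt, h_nn, h_le] with z hz1 hz2 hz3 hz4 hz5
    by_contra hcon
    push_neg at hcon
    obtain ⟨hne0, hneb⟩ := hcon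
    have hc : 0 < h z := lt_of_le_of_ne hz4 (Ne.symm hne0)
    have hb : h z < hbar z := lt_of_le_of_ne hz5 hneb
    set i₀ : Fin d := ⟨0, hd⟩ with hi₀
    set a := min (h z) (hbar z - h z) with ha
    have hapos : 0 < a := lt_min hc (by linarith)
    have ha1 : a ≤ h z := min_le_left _ _
    have ha2 : a ≤ hbar z - h z := min_le_right _ _
    set k : ((Fin d → ℝ) × (Fin d → ℝ)) → ℝ :=
      fun p => h z - a * GeomAux.S i₀ p.1 * GeomAux.S i₀ p.2 with hk
    have hkb : ∀ p, 0 ≤ k p ∧ k p ≤ hbar z := by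
      intro p
      simp only [hk]
      rcases GeomAux.S_vals i₀ p.1 with h1 | h1 <;> rcases GeomAux.S_vals i₀ p.2 with h2 | h2 <;>
        rw [h1, h2] <;> constructor <;> nlinarith
    have hk_meas : Measurable k :=
      measurable_const.sub ((measurable_const.mul
        ((GeomAux.S_meas i₀).comp measurable_fst)).mul
        ((GeomAux.S_meas i₀).comp measurable_snd))
    have hQ : volume (cube d ×ˢ cube d) ≠ ⊤ := by
      have hcc : IsCompact (cube d) := isCompact_Icc
      exact (hcc.prod hcc).measure_lt_top.ne
    have hk_int : IntegrableOn k (cube d ×ˢ cube d) volume :=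
      Measure.integrableOn_of_bounded (M := hbar z) hQ hk_meas.aestronglyMeasurable
        (ae_of_all _ fun p => by
          rw [Real.norm_eq_abs, abs_of_nonneg (hkb p).1]
          exact (hkb p).2)
    have hmarg1 : ∀ x : Fin d → ℝ, (∫ y in cube d, k (x, y)) = h z :=
      fun x => GeomAux.marg i₀ (h z) (a * GeomAux.S i₀ x)
    have hmarg2 : ∀ y : Fin d → ℝ, (∫ x in cube d, k (x, y)) = h z := by
      intro y
      have hfe : (fun x : Fin d → ℝ => k (x, y))
          = fun x => h z - (a * GeomAux.S i₀ y) * GeomAux.S i₀ x := by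
        funext x; simp only [hk]; ring
      rw [hfe]
      exact GeomAux.marg i₀ (h z) (a * GeomAux.S i₀ y)
    have H := hz3 ⟨hz1, hz2⟩ k hk_int
      (ae_of_all _ fun p => (hkb p).1)
      (ae_of_all _ fun x => hmarg1 x)
      (ae_of_all _ fun y => hmarg2 y)
      (ae_of_all _ fun p => (hkb p).2)
    have e1 : (∫ p in cube d ×ˢ cube d, (∑ i, p.1 i * p.2 i) * h z) = 0 := by
      have hfe : (fun p : (Fin d → ℝ) × (Fin d → ℝ) => (∑ i, p.1 i * p.2 i) * h z)
          = fun p => (∑ i, p.1 i * p.2 i)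
              * (h z - 0 * GeomAux.S i₀ p.1 * GeomAux.S i₀ p.2) := by
        funext p; ring
      rw [hfe, GeomAux.costEval i₀ (h z) 0]
      norm_num
    have e2 : (∫ p in cube d ×ˢ cube d, (∑ i, p.1 i * p.2 i) * k p) = -(a/16) :=
      GeomAux.costEval i₀ (h z) a
    rw [e1, e2] at H
    linarith
  obtain ⟨h', h'_meas, h'_ae⟩ : ∃ h' : ((Fin d → ℝ) × (Fin d → ℝ)) → ℝ,
      StronglyMeasurable h' ∧ h =ᵐ[volume] h' :=
    ⟨h_int.aestronglyMeasurable.mk h, h_int.aestronglyMeasurable.stronglyMeasurable_mk,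
      h_int.aestronglyMeasurable.ae_eq_mk⟩
  refine ⟨{p | hbar p ≤ h' p}, measurableSet_le hbar_meas h'_meas.measurable, ?_⟩
  filter_upwards [key, h'_ae, h_le] with z hz heq hle
  by_cases hw : hbar z ≤ h' z
  · have hwmem : z ∈ {p : (Fin d → ℝ) × (Fin d → ℝ) | hbar p ≤ h' p} := hw
    rw [Set.indicator_of_mem hwmem hbar]
    exact le_antisymm hle (by rw [heq]; exact hw)
  · have hwnot : z ∉ {p : (Fin d → ℝ) × (Fin d → ℝ) | hbar p ≤ h' p} := hw
    rw [Set.indicator_of_notMem hwnot hbar]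
    rcases hz with h0 | hb
    · exact h0
    · exact absurd (le_of_eq (by rw [← heq, hb])) hw
end
end

section
/- Let d = 1, I = [-1/2,1/2] ⊂ ℝ, f = g = 1_I (the indicator function of I), h̄ = 2·1_{I×I}, and c(x,y) = (1/2)|x−y|². Define h : ℝ × ℝ → ℝ by h(x,y) = 2 if (x,y) ∈ ([-1/2,0]×[-1/2,0]) ∪ ([0,1/2]×[0,1/2]) and h(x,y) = 0 otherwise. Then h ∈ Γ(f,g)^h̄ and h minimizes I_c over Γ(f,g)^h̄: for every k ∈ Γ(f,g)^h̄, I_c(h) ≤ I_c(k). -/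
open MeasureTheory Filter Set Topology

noncomputable section

/-- The transportation cost `I_c(h) = ∫∫ c(x,y) h(x,y) dx dy` on `ℝ × ℝ`. -/
def Icost1 (c h : ℝ × ℝ → ℝ) : ℝ :=
  ∫ p, c p * h p

/-- `h ∈ Γ(f,g)`: `h` is a nonnegative integrable joint density on `ℝ × ℝ`
with marginals `f` and `g`. -/
def InGamma1 (f g : ℝ → ℝ) (h : ℝ × ℝ → ℝ) : Prop :=
  Integrable h volume ∧ (∀ᵐ p ∂volume, 0 ≤ h p) ∧
    (∀ᵐ x ∂volume, (∫ y, h (x, y)) = f x) ∧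
    (∀ᵐ y ∂volume, (∫ x, h (x, y)) = g y)

/-- `h ∈ Γ(f,g)^h̄`: `h ∈ Γ(f,g)` and `h` is dominated by `h̄` a.e. -/
def InGammaBar1 (f g : ℝ → ℝ) (hbar h : ℝ × ℝ → ℝ) : Prop :=
  InGamma1 f g h ∧ ∀ᵐ p ∂volume, h p ≤ hbar p

private def II : Set ℝ := Set.Icc (-(1/2)) (1/2)
private def SS : Set (ℝ × ℝ) :=
  (Set.Icc (-(1/2):ℝ) 0 ×ˢ Set.Icc (-(1/2):ℝ) 0) ∪
    (Set.Icc (0:ℝ) (1/2) ×ˢ Set.Icc (0:ℝ) (1/2))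

private lemma measSS : MeasurableSet SS :=
  ((measurableSet_Icc.prod measurableSet_Icc).union
    (measurableSet_Icc.prod measurableSet_Icc))

private lemma mem_SS_iff {x y : ℝ} : (x, y) ∈ SS ↔
    ((-(1/2) ≤ x ∧ x ≤ 0) ∧ (-(1/2) ≤ y ∧ y ≤ 0)) ∨ ((0 ≤ x ∧ x ≤ 1/2) ∧ (0 ≤ y ∧ y ≤ 1/2)) := by
  simp only [SS, mem_union, mem_prod, mem_Icc]

private lemma SS_sub : SS ⊆ II ×ˢ II := by
  rintro ⟨x, y⟩ h
  rw [mem_SS_iff] at h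
  simp only [II, mem_prod, mem_Icc]
  rcases h with ⟨⟨h1, h2⟩, h3, h4⟩ | ⟨⟨h1, h2⟩, h3, h4⟩ <;>
    exact ⟨⟨by linarith, by linarith⟩, by linarith, by linarith⟩

private lemma SS_swap {x y : ℝ} : (x, y) ∈ SS ↔ (y, x) ∈ SS := by
  rw [mem_SS_iff, mem_SS_iff]; tauto

private lemma slice_int (t : ℝ) (ht : t ≠ 0) :
    (∫ u, SS.indicator (fun _ => (2:ℝ)) (t, u)) = II.indicator (fun _ => (1:ℝ)) t := by
  by_cases h1 : t ∈ Icc (-(1/2):ℝ) 0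
  · rw [mem_Icc] at h1
    have ht2 : ¬ (0 ≤ t ∧ t ≤ 1/2) := fun h => ht (le_antisymm h1.2 h.1)
    have heq : (fun u => SS.indicator (fun _ => (2:ℝ)) (t, u))
        = (Icc (-(1/2):ℝ) 0).indicator (fun _ => (2:ℝ)) := by
      funext u
      by_cases hu : u ∈ Icc (-(1/2):ℝ) 0
      · rw [mem_Icc] at hu
        rw [indicator_of_mem (mem_SS_iff.2 (Or.inl ⟨h1, hu⟩)),
          indicator_of_mem (mem_Icc.2 hu)]
      · rw [indicator_of_notMem hu, indicator_of_notMem]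
        rw [mem_Icc] at hu
        rw [mem_SS_iff]
        rintro (⟨_, h⟩ | ⟨h, _⟩) <;> [exact hu h; exact ht2 h]
    rw [heq, integral_indicator_const _ measurableSet_Icc]
    have htI : t ∈ II := by
      simp only [II, mem_Icc]; exact ⟨h1.1, by linarith [h1.2]⟩
    rw [indicator_of_mem htI, Real.volume_real_Icc]
    norm_num
  · by_cases h2 : t ∈ Icc (0:ℝ) (1/2)
    · rw [mem_Icc] at h1 h2
      have ht1 : ¬ (-(1/2) ≤ t ∧ t ≤ 0) := h1
      have heq : (fun u => SS.indicator (fun _ => (2:ℝ)) (t, u))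
          = (Icc (0:ℝ) (1/2)).indicator (fun _ => (2:ℝ)) := by
        funext u
        by_cases hu : u ∈ Icc (0:ℝ) (1/2)
        · rw [mem_Icc] at hu
          rw [indicator_of_mem (mem_SS_iff.2 (Or.inr ⟨h2, hu⟩)),
            indicator_of_mem (mem_Icc.2 hu)]
        · rw [indicator_of_notMem hu, indicator_of_notMem]
          rw [mem_Icc] at hu
          rw [mem_SS_iff]
          rintro (⟨h, _⟩ | ⟨_, h⟩) <;> [exact ht1 h; exact hu h]
      rw [heq, integral_indicator_const _ measurableSet_Icc]
      have htI : t ∈ II := by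
        simp only [II, mem_Icc]; exact ⟨by linarith [h2.1], h2.2⟩
      rw [indicator_of_mem htI, Real.volume_real_Icc]
      norm_num
    · rw [mem_Icc] at h1 h2
      have hnot : t ∉ II := by
        simp only [II, mem_Icc]
        rintro ⟨ha, hb⟩
        rcases le_or_gt t 0 with hc | hc
        · exact h1 ⟨ha, hc⟩
        · exact h2 ⟨hc.le, hb⟩
      have heq : (fun u => SS.indicator (fun _ => (2:ℝ)) (t, u)) = fun _ => (0:ℝ) := by
        funext u
        rw [indicator_of_notMem]
        rw [mem_SS_iff]
        rintro (⟨h, _⟩ | ⟨h, _⟩) <;> [exact h1 h; exact h2 h]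
      rw [heq, indicator_of_notMem hnot, integral_zero]

private lemma measII : MeasurableSet (II ×ˢ II) := (measurableSet_Icc.prod measurableSet_Icc)

private lemma integrable_bnd : Integrable ((II ×ˢ II).indicator (fun _ => (2:ℝ))) volume := by
  rw [integrable_indicator_iff measII]
  exact integrableOn_const (isCompact_Icc.prod isCompact_Icc).measure_lt_top.ne

private lemma integrable_mul_of_le {k : ℝ × ℝ → ℝ} (hk : AEStronglyMeasurable k volume)
    (h0 : ∀ᵐ p ∂volume, 0 ≤ k p)
    (hle : ∀ᵐ p ∂volume, k p ≤ (II ×ˢ II).indicator (fun _ => (2:ℝ)) p)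
    {φ : ℝ × ℝ → ℝ} (hφc : Continuous φ) (hφ : ∀ p ∈ II ×ˢ II, |φ p| ≤ 1) :
    Integrable (fun p => φ p * k p) volume := by
  refine integrable_bnd.mono (hφc.aestronglyMeasurable.mul hk) ?_
  filter_upwards [h0, hle] with p hp0 hple
  by_cases hp : p ∈ II ×ˢ II
  · rw [indicator_of_mem hp] at hple ⊢
    rw [Real.norm_eq_abs, Real.norm_eq_abs, abs_mul, abs_of_nonneg (by norm_num : (0:ℝ) ≤ 2)]
    calc |φ p| * |k p| ≤ 1 * 2 :=
          mul_le_mul (hφ p hp) (by rw [abs_of_nonneg hp0]; exact hple) (abs_nonneg _) zero_le_one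
      _ = 2 := by norm_num
  · rw [indicator_of_notMem hp] at hple ⊢
    have hz : k p = 0 := le_antisymm hple hp0
    simp [hz]

private lemma marg_fst {k : ℝ × ℝ → ℝ} {f : ℝ → ℝ} {φ : ℝ → ℝ}
    (hint : Integrable (fun p => φ p.1 * k p) volume)
    (hm : ∀ᵐ x ∂(volume : Measure ℝ), (∫ y, k (x, y)) = f x) :
    ∫ p, φ p.1 * k p = ∫ x, φ x * f x := by
  rw [Measure.volume_eq_prod] at hint ⊢
  rw [integral_prod _ hint]
  refine integral_congr_ae (hm.mono fun x hx => ?_)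
  simp only
  rw [integral_const_mul, hx]

private lemma marg_snd {k : ℝ × ℝ → ℝ} {g : ℝ → ℝ} {φ : ℝ → ℝ}
    (hint : Integrable (fun p => φ p.2 * k p) volume)
    (hm : ∀ᵐ y ∂(volume : Measure ℝ), (∫ x, k (x, y)) = g y) :
    ∫ p, φ p.2 * k p = ∫ y, φ y * g y := by
  rw [Measure.volume_eq_prod] at hint ⊢
  rw [integral_prod_symm _ hint]
  refine integral_congr_ae (hm.mono fun y hy => ?_)
  simp only
  rw [integral_const_mul, hy]

private lemma h_nonneg : ∀ p : ℝ × ℝ, 0 ≤ SS.indicator (fun _ => (2:ℝ)) p :=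
  fun p => indicator_nonneg (fun _ _ => by norm_num) p

private lemma h_le_hbar : ∀ p : ℝ × ℝ,
    SS.indicator (fun _ => (2:ℝ)) p ≤ (II ×ˢ II).indicator (fun _ => (2:ℝ)) p := by
  intro p
  by_cases hp : p ∈ SS
  · rw [indicator_of_mem hp, indicator_of_mem (SS_sub hp)]
  · rw [indicator_of_notMem hp]
    exact indicator_nonneg (fun _ _ => by norm_num) p

private lemma integrable_h : Integrable (SS.indicator (fun _ => (2:ℝ))) volume := by
  rw [integrable_indicator_iff measSS]
  exact integrableOn_const
    (lt_of_le_of_lt (measure_mono SS_sub) (isCompact_Icc.prod isCompact_Icc).measure_lt_top).ne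

private lemma ae_ne_zero : ∀ᵐ x : ℝ ∂volume, x ≠ 0 := by
  rw [ae_iff]
  have : {x : ℝ | ¬ x ≠ 0} = {0} := by ext x; simp
  rw [this]
  exact measure_singleton 0

private lemma h_marg_fst :
    ∀ᵐ x : ℝ ∂volume, (∫ y, SS.indicator (fun _ => (2:ℝ)) (x, y)) = II.indicator (fun _ => (1:ℝ)) x := by
  filter_upwards [ae_ne_zero] with x hx
  exact slice_int x hx

private lemma h_marg_snd :
    ∀ᵐ y : ℝ ∂volume, (∫ x, SS.indicator (fun _ => (2:ℝ)) (x, y)) = II.indicator (fun _ => (1:ℝ)) y := by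
  filter_upwards [ae_ne_zero] with y hy
  have heq : (fun x => SS.indicator (fun _ => (2:ℝ)) (x, y))
      = fun x => SS.indicator (fun _ => (2:ℝ)) (y, x) := by
    funext x
    by_cases h : (x, y) ∈ SS
    · rw [indicator_of_mem h, indicator_of_mem (SS_swap.1 h)]
    · rw [indicator_of_notMem h, indicator_of_notMem (fun hc => h (SS_swap.2 hc))]
  rw [heq]
  exact slice_int y hy

private lemma h_inGammaBar :
    InGammaBar1 (II.indicator fun _ => 1) (II.indicator fun _ => 1)
      ((II ×ˢ II).indicator fun _ => 2) (SS.indicator fun _ => 2) :=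
  ⟨⟨integrable_h, Eventually.of_forall h_nonneg, h_marg_fst, h_marg_snd⟩,
    Eventually.of_forall h_le_hbar⟩

private lemma phi1_bound : ∀ p ∈ II ×ˢ II, |p.1 ^ 2 / 2| ≤ 1 := by
  rintro ⟨x, y⟩ hp
  have hx := mem_Icc.1 hp.1
  have : x ^ 2 ≤ (1/2 : ℝ) ^ 2 := sq_le_sq' hx.1 hx.2
  rw [abs_of_nonneg (by positivity)]
  nlinarith

private lemma phi2_bound : ∀ p ∈ II ×ˢ II, |p.2 ^ 2 / 2| ≤ 1 := by
  rintro ⟨x, y⟩ hp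
  have hy := mem_Icc.1 hp.2
  have : y ^ 2 ≤ (1/2 : ℝ) ^ 2 := sq_le_sq' hy.1 hy.2
  rw [abs_of_nonneg (by positivity)]
  nlinarith

private lemma q_bound : ∀ p ∈ II ×ˢ II, |p.1 * p.2| ≤ 1 := by
  rintro ⟨x, y⟩ hp
  have hx := mem_Icc.1 hp.1
  have hy := mem_Icc.1 hp.2
  rw [abs_mul]
  have h1 : |x| ≤ 1/2 := abs_le.2 ⟨hx.1, hx.2⟩
  have h2 : |y| ≤ 1/2 := abs_le.2 ⟨hy.1, hy.2⟩
  nlinarith [abs_nonneg x, abs_nonneg y]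

/-- Core computation: `I_c(m) = A + B - ∫ q m` for an admissible `m`. -/
private lemma cost_decomp {m : ℝ × ℝ → ℝ} (hmi : Integrable m volume)
    (h0 : ∀ᵐ p ∂volume, 0 ≤ m p)
    (hle : ∀ᵐ p ∂volume, m p ≤ (II ×ˢ II).indicator (fun _ => (2:ℝ)) p)
    (hm1 : ∀ᵐ x ∂(volume : Measure ℝ), (∫ y, m (x, y)) = II.indicator (fun _ => (1:ℝ)) x)
    (hm2 : ∀ᵐ y ∂(volume : Measure ℝ), (∫ x, m (x, y)) = II.indicator (fun _ => (1:ℝ)) y) :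
    Icost1 (fun p => (1/2) * |p.1 - p.2| ^ 2) m =
      (∫ x : ℝ, (x ^ 2 / 2) * II.indicator (fun _ => (1:ℝ)) x)
        + (∫ y : ℝ, (y ^ 2 / 2) * II.indicator (fun _ => (1:ℝ)) y)
        - ∫ p : ℝ × ℝ, (p.1 * p.2) * m p := by
  have hmeas := hmi.aestronglyMeasurable
  have hi1 : Integrable (fun p : ℝ × ℝ => (p.1 ^ 2 / 2) * m p) volume :=
    integrable_mul_of_le hmeas h0 hle
      (by continuity) phi1_bound
  have hi2 : Integrable (fun p : ℝ × ℝ => (p.2 ^ 2 / 2) * m p) volume :=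
    integrable_mul_of_le hmeas h0 hle
      (by continuity) phi2_bound
  have hiq : Integrable (fun p : ℝ × ℝ => (p.1 * p.2) * m p) volume :=
    integrable_mul_of_le hmeas h0 hle
      (continuous_fst.mul continuous_snd) q_bound
  have hfun : (fun p : ℝ × ℝ => ((1/2) * |p.1 - p.2| ^ 2) * m p)
      = fun p => ((p.1 ^ 2 / 2) * m p + (p.2 ^ 2 / 2) * m p) - (p.1 * p.2) * m p := by
    funext p
    rw [sq_abs]
    ring
  have hadd : Integrable (fun p : ℝ × ℝ => p.1 ^ 2 / 2 * m p + p.2 ^ 2 / 2 * m p) volume :=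
    hi1.add hi2
  have e1 : (∫ p : ℝ × ℝ, (p.1 ^ 2 / 2 * m p + p.2 ^ 2 / 2 * m p - p.1 * p.2 * m p))
      = (∫ p : ℝ × ℝ, (p.1 ^ 2 / 2 * m p + p.2 ^ 2 / 2 * m p)) - ∫ p : ℝ × ℝ, p.1 * p.2 * m p :=
    integral_sub hadd hiq
  have e2 : (∫ p : ℝ × ℝ, (p.1 ^ 2 / 2 * m p + p.2 ^ 2 / 2 * m p))
      = (∫ p : ℝ × ℝ, p.1 ^ 2 / 2 * m p) + ∫ p : ℝ × ℝ, p.2 ^ 2 / 2 * m p :=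
    integral_add hi1 hi2
  unfold Icost1
  rw [hfun, e1, e2]
  rw [marg_fst (φ := fun x => x ^ 2 / 2) hi1 hm1, marg_snd (φ := fun y => y ^ 2 / 2) hi2 hm2]

/-- **Example 1.1**: on `I = [-1/2,1/2]` with `f = g = 1_I`, capacity bound `h̄ = 2·1_{I×I}`
and cost `c(x,y) = |x-y|²/2`, the density equal to `2` on the two diagonal squares
`[-1/2,0]² ∪ [0,1/2]²` and `0` elsewhere belongs to `Γ(f,g)^h̄` and minimizes `I_c` there. -/
theorem checkerboard_optimal :
    InGammaBar1 ((Set.Icc (-(1/2) : ℝ) (1/2)).indicator fun _ => 1)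
      ((Set.Icc (-(1/2) : ℝ) (1/2)).indicator fun _ => 1)
      ((Set.Icc (-(1/2) : ℝ) (1/2) ×ˢ Set.Icc (-(1/2) : ℝ) (1/2)).indicator fun _ => 2)
      (((Set.Icc (-(1/2) : ℝ) 0 ×ˢ Set.Icc (-(1/2) : ℝ) 0) ∪
        (Set.Icc (0 : ℝ) (1/2) ×ˢ Set.Icc (0 : ℝ) (1/2))).indicator fun _ => 2) ∧
    ∀ k, InGammaBar1 ((Set.Icc (-(1/2) : ℝ) (1/2)).indicator fun _ => 1)
        ((Set.Icc (-(1/2) : ℝ) (1/2)).indicator fun _ => 1)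
        ((Set.Icc (-(1/2) : ℝ) (1/2) ×ˢ Set.Icc (-(1/2) : ℝ) (1/2)).indicator fun _ => 2) k →
      Icost1 (fun p => (1/2) * |p.1 - p.2| ^ 2)
        ((((Set.Icc (-(1/2) : ℝ) 0 ×ˢ Set.Icc (-(1/2) : ℝ) 0) ∪
          (Set.Icc (0 : ℝ) (1/2) ×ˢ Set.Icc (0 : ℝ) (1/2))).indicator fun _ => 2)) ≤
        Icost1 (fun p => (1/2) * |p.1 - p.2| ^ 2) k := by
  constructor
  · exact h_inGammaBar
  · intro k hk
    obtain ⟨⟨hkint, hk0, hkm1, hkm2⟩, hkle⟩ := hk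
    have hkle' : ∀ᵐ p ∂volume, k p ≤ (II ×ˢ II).indicator (fun _ => (2:ℝ)) p := hkle
    have hkm1' : ∀ᵐ x ∂(volume : Measure ℝ), (∫ y, k (x, y)) = II.indicator (fun _ => (1:ℝ)) x := hkm1
    have hkm2' : ∀ᵐ y ∂(volume : Measure ℝ), (∫ x, k (x, y)) = II.indicator (fun _ => (1:ℝ)) y := hkm2
    have hdk := cost_decomp hkint hk0 hkle' hkm1' hkm2'
    have hdh := cost_decomp integrable_h (Eventually.of_forall h_nonneg)
      (Eventually.of_forall h_le_hbar) h_marg_fst h_marg_snd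
    -- integrability of q·k and q·h
    have hiqk : Integrable (fun p : ℝ × ℝ => (p.1 * p.2) * k p) volume :=
      integrable_mul_of_le hkint.aestronglyMeasurable hk0 hkle'
        (continuous_fst.mul continuous_snd) q_bound
    have hiqh : Integrable (fun p : ℝ × ℝ => (p.1 * p.2) * SS.indicator (fun _ => (2:ℝ)) p) volume :=
      integrable_mul_of_le integrable_h.aestronglyMeasurable (Eventually.of_forall h_nonneg)
        (Eventually.of_forall h_le_hbar) (continuous_fst.mul continuous_snd) q_bound
    -- pointwise a.e. inequality q·k ≤ q·h
    have hq : ∀ᵐ p ∂(volume : Measure (ℝ × ℝ)),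
        (p.1 * p.2) * k p ≤ (p.1 * p.2) * SS.indicator (fun _ => (2:ℝ)) p := by
      filter_upwards [hk0, hkle'] with p hp0 hple
      by_cases hp : p ∈ II ×ˢ II
      · have hpx := mem_Icc.1 hp.1
        have hpy := mem_Icc.1 hp.2
        by_cases hq0 : 0 ≤ p.1 * p.2
        · have hmem : p ∈ SS := by
            rcases mul_nonneg_iff.1 hq0 with ⟨ha, hb⟩ | ⟨ha, hb⟩
            · exact mem_SS_iff.2 (Or.inr ⟨⟨ha, hpx.2⟩, hb, hpy.2⟩)
            · exact mem_SS_iff.2 (Or.inl ⟨⟨hpx.1, ha⟩, hpy.1, hb⟩)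
          rw [indicator_of_mem hmem]
          rw [indicator_of_mem hp] at hple
          exact mul_le_mul_of_nonneg_left hple hq0
        · push_neg at hq0
          have hnot : p ∉ SS := by
            intro hmem
            rcases mem_SS_iff.1 hmem with ⟨⟨_, ha⟩, _, hb⟩ | ⟨⟨ha, _⟩, hb, _⟩
            · exact absurd (mul_nonneg_iff.2 (Or.inr ⟨ha, hb⟩)) (not_le.2 hq0)
            · exact absurd (mul_nonneg_iff.2 (Or.inl ⟨ha, hb⟩)) (not_le.2 hq0)
          rw [indicator_of_notMem hnot, mul_zero]
          exact mul_nonpos_iff.2 (Or.inr ⟨hq0.le, hp0⟩)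
      · rw [indicator_of_notMem hp] at hple
        have hz : k p = 0 := le_antisymm hple hp0
        have hnot : p ∉ SS := fun hc => hp (SS_sub hc)
        rw [hz, indicator_of_notMem hnot, mul_zero]
    have hQ : (∫ p : ℝ × ℝ, (p.1 * p.2) * k p)
        ≤ ∫ p : ℝ × ℝ, (p.1 * p.2) * SS.indicator (fun _ => (2:ℝ)) p :=
      integral_mono_ae hiqk hiqh hq
    have goal_eq :
        Icost1 (fun p => (1/2) * |p.1 - p.2| ^ 2)
          ((((Set.Icc (-(1/2) : ℝ) 0 ×ˢ Set.Icc (-(1/2) : ℝ) 0) ∪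
            (Set.Icc (0 : ℝ) (1/2) ×ˢ Set.Icc (0 : ℝ) (1/2))).indicator fun _ => 2))
          = Icost1 (fun p => (1/2) * |p.1 - p.2| ^ 2) (SS.indicator fun _ => (2:ℝ)) := rfl
    rw [goal_eq, hdh, hdk]
    linarith
end
end

section
/- Let d = 1, I = [-1/2,1/2] ⊂ ℝ, f = g = 1_I, h̄ = 4·1_{I×I}, and c(x,y) = (1/2)|x−y|². Define S := ([-1/2,-1/4]×[-1/2,-1/4]) ∪ ([-1/4,0]×[-1/4,0]) ∪ ([0,1/4]×[0,1/4]) ∪ ([1/4,1/2]×[1/4,1/2]) and h := 4·1_S. Then h ∈ Γ(f,g)^h̄, but h does NOT minimize I_c over Γ(f,g)^h̄: there exists k ∈ Γ(f,g)^h̄ with I_c(k) < I_c(h). -/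
open MeasureTheory Filter Set Topology

noncomputable section

/-- step function on [a, b) -/
def stp (a b x : ℝ) : ℝ := if a ≤ x ∧ x < b then 1 else 0

lemma stp_eq_indicator (a b : ℝ) : stp a b = (Set.Ico a b).indicator (fun _ => (1:ℝ)) := by
  funext x
  simp [stp, Set.indicator_apply, Set.mem_Ico]

lemma stp_nonneg (a b x : ℝ) : 0 ≤ stp a b x := by
  simp only [stp]; split_ifs <;> norm_num

lemma stp_le_one (a b x : ℝ) : stp a b x ≤ 1 := by
  simp only [stp]; split_ifs <;> norm_num

lemma stp_fold {a b c : ℝ} (hab : a ≤ b) (hbc : b ≤ c) (x : ℝ) :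
    stp a b x + stp b c x = stp a c x := by
  simp only [stp]
  rcases le_or_gt a x with h1|h1 <;> rcases lt_or_ge x b with h2|h2 <;>
    rcases le_or_gt b x with h3|h3 <;> rcases lt_or_ge x c with h4|h4 <;>
    split_ifs <;> simp_all <;> linarith

lemma measurable_stp (a b : ℝ) : Measurable (stp a b) := by
  rw [stp_eq_indicator]
  exact measurable_const.indicator measurableSet_Ico

lemma integrable_pow_stp (n : ℕ) (a b : ℝ) :
    Integrable (fun x => x ^ n * stp a b x) volume := by
  have : (fun x => x ^ n * stp a b x) = (Set.Ico a b).indicator (fun x => x ^ n) := by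
    funext x
    simp [stp, Set.indicator_apply, Set.mem_Ico, mul_ite]
  rw [this, integrable_indicator_iff measurableSet_Ico]
  exact ((continuous_pow n).integrableOn_Icc (a := a) (b := b)).mono_set Set.Ico_subset_Icc_self

lemma integrable_stp (a b : ℝ) : Integrable (fun x => stp a b x) volume := by
  have := integrable_pow_stp 0 a b
  simpa using this

lemma integral_pow_stp {a b : ℝ} (hab : a ≤ b) (n : ℕ) :
    ∫ x, x ^ n * stp a b x = (b ^ (n+1) - a ^ (n+1)) / (n+1) := by
  have h1 : (fun x => x ^ n * stp a b x) = (Set.Ico a b).indicator (fun x => x ^ n) := by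
    funext x
    simp [stp, Set.indicator_apply, Set.mem_Ico, mul_ite]
  rw [h1, integral_indicator measurableSet_Ico, integral_Ico_eq_integral_Ioo,
    ← integral_Ioc_eq_integral_Ioo, ← intervalIntegral.integral_of_le hab,
    integral_pow]

lemma integral_stp {a b : ℝ} (hab : a ≤ b) : ∫ x, stp a b x = b - a := by
  have := integral_pow_stp hab 0
  simpa using this

lemma costRect {v a b c d : ℝ} (hab : a ≤ b) (hcd : c ≤ d) :
    ∫ p : ℝ × ℝ, (1/2 * |p.1 - p.2| ^ 2) * (v * (stp a b p.1 * stp c d p.2)) =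
      v * ((b-c)^4 - (a-c)^4 - (b-d)^4 + (a-d)^4) / 24 := by
  have hfun : (fun p : ℝ × ℝ => (1/2 * |p.1 - p.2| ^ 2) * (v * (stp a b p.1 * stp c d p.2)))
      = fun p => (v/2) * ((p.1 ^ 2 * stp a b p.1) * stp c d p.2)
        + (v/2) * (stp a b p.1 * (p.2 ^ 2 * stp c d p.2))
        - v * ((p.1 ^ 1 * stp a b p.1) * (p.2 ^ 1 * stp c d p.2)) := by
    funext p
    rw [sq_abs]
    ring
  rw [hfun, Measure.volume_eq_prod]
  have h2 : Integrable (fun p : ℝ × ℝ => (p.1 ^ 2 * stp a b p.1) * stp c d p.2)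
      ((volume : Measure ℝ).prod volume) :=
    (integrable_pow_stp 2 a b).mul_prod (integrable_stp c d)
  have h2' : Integrable (fun p : ℝ × ℝ => stp a b p.1 * (p.2 ^ 2 * stp c d p.2))
      ((volume : Measure ℝ).prod volume) :=
    (integrable_stp a b).mul_prod (integrable_pow_stp 2 c d)
  have h1 : Integrable (fun p : ℝ × ℝ => (p.1 ^ 1 * stp a b p.1) * (p.2 ^ 1 * stp c d p.2))
      ((volume : Measure ℝ).prod volume) :=
    (integrable_pow_stp 1 a b).mul_prod (integrable_pow_stp 1 c d)
  have hA : Integrable (fun p : ℝ × ℝ => (v/2) * ((p.1 ^ 2 * stp a b p.1) * stp c d p.2)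
      + (v/2) * (stp a b p.1 * (p.2 ^ 2 * stp c d p.2))) ((volume : Measure ℝ).prod volume) :=
    (h2.const_mul _).add (h2'.const_mul _)
  rw [integral_sub hA (h1.const_mul _)]
  rw [integral_add (h2.const_mul _) (h2'.const_mul _),
    integral_const_mul, integral_const_mul, integral_const_mul,
    integral_prod_mul (fun x => x ^ 2 * stp a b x) (fun y => stp c d y),
    integral_prod_mul (fun x => stp a b x) (fun y => y ^ 2 * stp c d y),
    integral_prod_mul (fun x => x ^ 1 * stp a b x) (fun y => y ^ 1 * stp c d y),
    integral_pow_stp hab 2, integral_pow_stp hcd 2, integral_pow_stp hab 1,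
    integral_pow_stp hcd 1, integral_stp hab, integral_stp hcd]
  push_cast
  ring

lemma integrable_stp_prod (a b c d : ℝ) :
    Integrable (fun p : ℝ × ℝ => stp a b p.1 * stp c d p.2) volume := by
  rw [Measure.volume_eq_prod]
  exact (integrable_stp a b).mul_prod (integrable_stp c d)

lemma costRectIntegrable (v a b c d : ℝ) :
    Integrable (fun p : ℝ × ℝ => (1/2 * |p.1 - p.2| ^ 2) * (v * (stp a b p.1 * stp c d p.2)))
      volume := by
  have hfun : (fun p : ℝ × ℝ => (1/2 * |p.1 - p.2| ^ 2) * (v * (stp a b p.1 * stp c d p.2)))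
      = fun p => (v/2) * ((p.1 ^ 2 * stp a b p.1) * stp c d p.2)
        + (v/2) * (stp a b p.1 * (p.2 ^ 2 * stp c d p.2))
        - v * ((p.1 ^ 1 * stp a b p.1) * (p.2 ^ 1 * stp c d p.2)) := by
    funext p; rw [sq_abs]; ring
  rw [hfun, Measure.volume_eq_prod]
  exact ((((integrable_pow_stp 2 a b).mul_prod (integrable_stp c d)).const_mul _).add
    (((integrable_stp a b).mul_prod (integrable_pow_stp 2 c d)).const_mul _)).sub
    (((integrable_pow_stp 1 a b).mul_prod (integrable_pow_stp 1 c d)).const_mul _)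

lemma ae_ne (c : ℝ) : ∀ᵐ x : ℝ ∂volume, x ≠ c := by
  have : {x : ℝ | ¬ x ≠ c} = {c} := by ext x; simp
  rw [MeasureTheory.ae_iff, this]
  exact measure_singleton c

lemma ae_fst_ne (c : ℝ) : ∀ᵐ p : ℝ × ℝ ∂volume, p.1 ≠ c := by
  have : {p : ℝ × ℝ | ¬ p.1 ≠ c} = ({c} : Set ℝ) ×ˢ (Set.univ : Set ℝ) := by
    ext p; simp only [Set.mem_setOf_eq, not_not, Set.mem_prod, Set.mem_singleton_iff,
      Set.mem_univ, and_true]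
  rw [MeasureTheory.ae_iff, this, Measure.volume_eq_prod, Measure.prod_prod]
  simp

lemma ae_snd_ne (c : ℝ) : ∀ᵐ p : ℝ × ℝ ∂volume, p.2 ≠ c := by
  have : {p : ℝ × ℝ | ¬ p.2 ≠ c} = (Set.univ : Set ℝ) ×ˢ ({c} : Set ℝ) := by
    ext p; simp only [Set.mem_setOf_eq, not_not, Set.mem_prod, Set.mem_singleton_iff,
      Set.mem_univ, true_and]
  rw [MeasureTheory.ae_iff, this, Measure.volume_eq_prod, Measure.prod_prod]
  simp

lemma icc_ind_eq_stp {B : ℝ} (A v : ℝ) {x : ℝ} (hx : x ≠ B) :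
    (Set.Icc A B).indicator (fun _ => v) x = v * stp A B x := by
  by_cases hm : x ∈ Set.Icc A B
  · rw [Set.indicator_of_mem hm]
    rw [Set.mem_Icc] at hm
    have : stp A B x = 1 := by simp [stp, hm.1, lt_of_le_of_ne hm.2 hx]
    rw [this, mul_one]
  · rw [Set.indicator_of_notMem hm]
    have : stp A B x = 0 := by
      simp only [stp, ite_eq_right_iff]
      intro h
      exact absurd (Set.mem_Icc.2 ⟨h.1, h.2.le⟩) hm
    rw [this, mul_zero]

lemma ind_const_mul (S : Set ℝ) (v y : ℝ) :
    S.indicator (fun _ => v) y = v * S.indicator (fun _ => (1:ℝ)) y := by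
  by_cases h : y ∈ S <;> simp [h]

lemma icc_prod_ind_apply (A B v : ℝ) (p : ℝ × ℝ) :
    (Set.Icc A B ×ˢ Set.Icc A B).indicator (fun _ => v) p
      = (Set.Icc A B).indicator (fun _ => (1:ℝ)) p.1
        * (Set.Icc A B).indicator (fun _ => v) p.2 := by
  by_cases h1 : p.1 ∈ Set.Icc A B <;> by_cases h2 : p.2 ∈ Set.Icc A B <;>
    simp only [Set.indicator_apply, Set.mem_prod, h1, h2, if_true, if_false,
      true_and, false_and, and_true, and_false, one_mul, mul_zero, zero_mul, mul_one,
      if_neg (not_false), ite_true, ite_false]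

lemma icc_prod_eq_stp {A B v : ℝ} {p : ℝ × ℝ} (h1 : p.1 ≠ B) (h2 : p.2 ≠ B) :
    (Set.Icc A B ×ˢ Set.Icc A B).indicator (fun _ => v) p
      = v * (stp A B p.1 * stp A B p.2) := by
  rw [icc_prod_ind_apply, icc_ind_eq_stp A 1 h1, icc_ind_eq_stp A v h2]
  ring

lemma icc_fold (v : ℝ) {a b c x : ℝ} (hab : a ≤ b) (hbc : b ≤ c) (hx : x ≠ b) :
    (Set.Icc a b).indicator (fun _ => v) x + (Set.Icc b c).indicator (fun _ => v) x
      = (Set.Icc a c).indicator (fun _ => v) x := by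
  simp only [Set.indicator_apply, Set.mem_Icc]
  rcases lt_or_gt_of_ne hx with h|h <;> split_ifs <;> simp_all <;> linarith

lemma integrable_icc_prod_ind (A B v : ℝ) :
    Integrable ((Set.Icc A B ×ˢ Set.Icc A B).indicator (fun _ => v)) volume := by
  rw [integrable_indicator_iff (measurableSet_Icc.prod measurableSet_Icc)]
  refine integrableOn_const ?_
  rw [Measure.volume_eq_prod, Measure.prod_prod]
  exact (ENNReal.mul_lt_top measure_Icc_lt_top measure_Icc_lt_top).ne

lemma integral_icc_ind {A B : ℝ} (v : ℝ) (hAB : A ≤ B) :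
    ∫ y, (Set.Icc A B).indicator (fun _ => v) y = (B - A) * v := by
  rw [integral_indicator_const v measurableSet_Icc, measureReal_def, Real.volume_Icc,
    ENNReal.toReal_ofReal (by linarith), smul_eq_mul]

/-! ### The four-squares density `hh` from the statement -/

def S1 : Set (ℝ × ℝ) := Set.Icc (-(1/2) : ℝ) (-(1/4)) ×ˢ Set.Icc (-(1/2) : ℝ) (-(1/4))
def S2 : Set (ℝ × ℝ) := Set.Icc (-(1/4) : ℝ) 0 ×ˢ Set.Icc (-(1/4) : ℝ) 0
def S3 : Set (ℝ × ℝ) := Set.Icc (0 : ℝ) (1/4) ×ˢ Set.Icc (0 : ℝ) (1/4)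
def S4 : Set (ℝ × ℝ) := Set.Icc (1/4 : ℝ) (1/2) ×ˢ Set.Icc (1/4 : ℝ) (1/2)

def hh : ℝ × ℝ → ℝ := (S1 ∪ S2 ∪ S3 ∪ S4).indicator fun _ => 4

lemma hdecomp (p : ℝ × ℝ) (h3 : p.1 ≠ -(1/4)) (h6 : p.1 ≠ 0) (h9 : p.1 ≠ 1/4) :
    hh p = S1.indicator (fun _ => (4:ℝ)) p + S2.indicator (fun _ => (4:ℝ)) p
      + S3.indicator (fun _ => (4:ℝ)) p + S4.indicator (fun _ => (4:ℝ)) p := by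
  have d1 : p ∉ (S1 ∪ S2 ∪ S3) ∩ S4 := by
    rintro ⟨(h | h) | h, h4⟩ <;>
      · simp only [S1, S2, S3, S4, Set.mem_prod, Set.mem_Icc] at h h4
        rcases h with ⟨⟨u1, u2⟩, -⟩
        rcases h4 with ⟨⟨w1, w2⟩, -⟩
        exact h9 (le_antisymm (by linarith) (by linarith))
  have d2 : p ∉ (S1 ∪ S2) ∩ S3 := by
    rintro ⟨h | h, h4⟩ <;>
      · simp only [S1, S2, S3, Set.mem_prod, Set.mem_Icc] at h h4
        rcases h with ⟨⟨u1, u2⟩, -⟩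
        rcases h4 with ⟨⟨w1, w2⟩, -⟩
        exact h6 (le_antisymm (by linarith) (by linarith))
  have d3 : p ∉ S1 ∩ S2 := by
    rintro ⟨h, h4⟩
    simp only [S1, S2, Set.mem_prod, Set.mem_Icc] at h h4
    exact h3 (le_antisymm (by linarith [h.1.2]) (by linarith [h4.1.1]))
  rw [hh, Set.indicator_union_of_notMem_inter d1,
    Set.indicator_union_of_notMem_inter d2, Set.indicator_union_of_notMem_inter d3]

lemma integrable_icc_ind (A B v : ℝ) :
    Integrable ((Set.Icc A B).indicator fun _ => v) volume := by
  rw [integrable_indicator_iff measurableSet_Icc]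
  exact integrableOn_const measure_Icc_lt_top.ne

lemma hh_integrable : Integrable hh volume := by
  have hsum : Integrable (fun p => S1.indicator (fun _ => (4:ℝ)) p
      + S2.indicator (fun _ => (4:ℝ)) p + S3.indicator (fun _ => (4:ℝ)) p
      + S4.indicator (fun _ => (4:ℝ)) p) volume :=
    (((integrable_icc_prod_ind _ _ 4).add (integrable_icc_prod_ind _ _ 4)).add
      (integrable_icc_prod_ind _ _ 4)).add (integrable_icc_prod_ind _ _ 4)
  refine hsum.congr ?_
  filter_upwards [ae_fst_ne (-(1/4) : ℝ), ae_fst_ne (0 : ℝ), ae_fst_ne (1/4 : ℝ)]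
    with p u1 u2 u3
  exact (hdecomp p u1 u2 u3).symm

lemma hh_nonneg : ∀ᵐ p : ℝ × ℝ ∂volume, 0 ≤ hh p :=
  Filter.Eventually.of_forall fun p => Set.indicator_nonneg (fun _ _ => by norm_num) p

def hbar : ℝ × ℝ → ℝ :=
  (Set.Icc (-(1/2) : ℝ) (1/2) ×ˢ Set.Icc (-(1/2) : ℝ) (1/2)).indicator fun _ => 4

lemma hh_le_hbar : ∀ᵐ p : ℝ × ℝ ∂volume, hh p ≤ hbar p := by
  refine Filter.Eventually.of_forall fun p => ?_
  by_cases hm : p ∈ S1 ∪ S2 ∪ S3 ∪ S4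
  · rw [hh, Set.indicator_of_mem hm]
    have hsub : p ∈ Set.Icc (-(1/2) : ℝ) (1/2) ×ˢ Set.Icc (-(1/2) : ℝ) (1/2) := by
      rcases hm with  ((h | h) | h) | h <;>
        · simp only [S1, S2, S3, S4, Set.mem_prod, Set.mem_Icc] at h ⊢
          exact ⟨⟨by linarith [h.1.1, h.1.2], by linarith [h.1.1, h.1.2]⟩,
            ⟨by linarith [h.2.1, h.2.2], by linarith [h.2.1, h.2.2]⟩⟩
    rw [hbar, Set.indicator_of_mem hsub]
  · rw [hh, Set.indicator_of_notMem hm]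
    exact Set.indicator_nonneg (fun _ _ => by norm_num) p


lemma integral_add4 {α : Type*} [MeasureSpace α] {t1 t2 t3 t4 : α → ℝ} (h1 : Integrable t1 volume) (h2 : Integrable t2 volume) (h3 : Integrable t3 volume) (h4 : Integrable t4 volume) :
    ∫ y, (t1 y + t2 y + t3 y + t4 y) = (∫ y, t1 y) + (∫ y, t2 y) + (∫ y, t3 y) + (∫ y, t4 y) := by
  have a2 : Integrable (fun y => t1 y + t2 y) volume := by exact h1.add h2
  have a3 : Integrable (fun y => t1 y + t2 y + t3 y) volume := by exact a2.add h3
  rw [integral_add a3 h4, integral_add a2 h3, integral_add h1 h2]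

lemma integral_add10 {α : Type*} [MeasureSpace α] {t1 t2 t3 t4 t5 t6 t7 t8 t9 t10 : α → ℝ} (h1 : Integrable t1 volume) (h2 : Integrable t2 volume) (h3 : Integrable t3 volume) (h4 : Integrable t4 volume) (h5 : Integrable t5 volume) (h6 : Integrable t6 volume) (h7 : Integrable t7 volume) (h8 : Integrable t8 volume) (h9 : Integrable t9 volume) (h10 : Integrable t10 volume) :
    ∫ y, (t1 y + t2 y + t3 y + t4 y + t5 y + t6 y + t7 y + t8 y + t9 y + t10 y) = (∫ y, t1 y) + (∫ y, t2 y) + (∫ y, t3 y) + (∫ y, t4 y) + (∫ y, t5 y) + (∫ y, t6 y) + (∫ y, t7 y) + (∫ y, t8 y) + (∫ y, t9 y) + (∫ y, t10 y) := by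
  have a2 : Integrable (fun y => t1 y + t2 y) volume := by exact h1.add h2
  have a3 : Integrable (fun y => t1 y + t2 y + t3 y) volume := by exact a2.add h3
  have a4 : Integrable (fun y => t1 y + t2 y + t3 y + t4 y) volume := by exact a3.add h4
  have a5 : Integrable (fun y => t1 y + t2 y + t3 y + t4 y + t5 y) volume := by exact a4.add h5
  have a6 : Integrable (fun y => t1 y + t2 y + t3 y + t4 y + t5 y + t6 y) volume := by exact a5.add h6
  have a7 : Integrable (fun y => t1 y + t2 y + t3 y + t4 y + t5 y + t6 y + t7 y) volume := by exact a6.add h7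
  have a8 : Integrable (fun y => t1 y + t2 y + t3 y + t4 y + t5 y + t6 y + t7 y + t8 y) volume := by exact a7.add h8
  have a9 : Integrable (fun y => t1 y + t2 y + t3 y + t4 y + t5 y + t6 y + t7 y + t8 y + t9 y) volume := by exact a8.add h9
  rw [integral_add a9 h10, integral_add a8 h9, integral_add a7 h8, integral_add a6 h7, integral_add a5 h6, integral_add a4 h5, integral_add a3 h4, integral_add a2 h3, integral_add h1 h2]

lemma integral_add12 {α : Type*} [MeasureSpace α] {t1 t2 t3 t4 t5 t6 t7 t8 t9 t10 t11 t12 : α → ℝ} (h1 : Integrable t1 volume) (h2 : Integrable t2 volume) (h3 : Integrable t3 volume) (h4 : Integrable t4 volume) (h5 : Integrable t5 volume) (h6 : Integrable t6 volume) (h7 : Integrable t7 volume) (h8 : Integrable t8 volume) (h9 : Integrable t9 volume) (h10 : Integrable t10 volume) (h11 : Integrable t11 volume) (h12 : Integrable t12 volume) :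
    ∫ y, (t1 y + t2 y + t3 y + t4 y + t5 y + t6 y + t7 y + t8 y + t9 y + t10 y + t11 y + t12 y) = (∫ y, t1 y) + (∫ y, t2 y) + (∫ y, t3 y) + (∫ y, t4 y) + (∫ y, t5 y) + (∫ y, t6 y) + (∫ y, t7 y) + (∫ y, t8 y) + (∫ y, t9 y) + (∫ y, t10 y) + (∫ y, t11 y) + (∫ y, t12 y) := by
  have a2 : Integrable (fun y => t1 y + t2 y) volume := by exact h1.add h2
  have a3 : Integrable (fun y => t1 y + t2 y + t3 y) volume := by exact a2.add h3
  have a4 : Integrable (fun y => t1 y + t2 y + t3 y + t4 y) volume := by exact a3.add h4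
  have a5 : Integrable (fun y => t1 y + t2 y + t3 y + t4 y + t5 y) volume := by exact a4.add h5
  have a6 : Integrable (fun y => t1 y + t2 y + t3 y + t4 y + t5 y + t6 y) volume := by exact a5.add h6
  have a7 : Integrable (fun y => t1 y + t2 y + t3 y + t4 y + t5 y + t6 y + t7 y) volume := by exact a6.add h7
  have a8 : Integrable (fun y => t1 y + t2 y + t3 y + t4 y + t5 y + t6 y + t7 y + t8 y) volume := by exact a7.add h8
  have a9 : Integrable (fun y => t1 y + t2 y + t3 y + t4 y + t5 y + t6 y + t7 y + t8 y + t9 y) volume := by exact a8.add h9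
  have a10 : Integrable (fun y => t1 y + t2 y + t3 y + t4 y + t5 y + t6 y + t7 y + t8 y + t9 y + t10 y) volume := by exact a9.add h10
  have a11 : Integrable (fun y => t1 y + t2 y + t3 y + t4 y + t5 y + t6 y + t7 y + t8 y + t9 y + t10 y + t11 y) volume := by exact a10.add h11
  rw [integral_add a11 h12, integral_add a10 h11, integral_add a9 h10, integral_add a8 h9, integral_add a7 h8, integral_add a6 h7, integral_add a5 h6, integral_add a4 h5, integral_add a3 h4, integral_add a2 h3, integral_add h1 h2]

lemma hh_marg_y : ∀ᵐ x : ℝ ∂volume,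
    (∫ y, hh (x, y)) = (Set.Icc (-(1/2) : ℝ) (1/2)).indicator (fun _ => 1) x := by
  filter_upwards [ae_ne (-(1/4) : ℝ), ae_ne (0 : ℝ), ae_ne (1/4 : ℝ)] with x h3 h6 h9
  have hcongr : (fun y => hh (x, y)) = fun y =>
      (Set.Icc (-(1/2) : ℝ) (-(1/4))).indicator (fun _ => (1:ℝ)) x
        * (Set.Icc (-(1/2) : ℝ) (-(1/4))).indicator (fun _ => (4:ℝ)) y
      + (Set.Icc (-(1/4) : ℝ) 0).indicator (fun _ => (1:ℝ)) x
        * (Set.Icc (-(1/4) : ℝ) 0).indicator (fun _ => (4:ℝ)) y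
      + (Set.Icc (0 : ℝ) (1/4)).indicator (fun _ => (1:ℝ)) x
        * (Set.Icc (0 : ℝ) (1/4)).indicator (fun _ => (4:ℝ)) y
      + (Set.Icc (1/4 : ℝ) (1/2)).indicator (fun _ => (1:ℝ)) x
        * (Set.Icc (1/4 : ℝ) (1/2)).indicator (fun _ => (4:ℝ)) y := by
    funext y
    rw [hdecomp (x, y) h3 h6 h9, S1, S2, S3, S4,
      icc_prod_ind_apply, icc_prod_ind_apply, icc_prod_ind_apply, icc_prod_ind_apply]
  rw [hcongr]
  rw [integral_add4 ((integrable_icc_ind _ _ 4).const_mul _)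
        ((integrable_icc_ind _ _ 4).const_mul _) ((integrable_icc_ind _ _ 4).const_mul _)
        ((integrable_icc_ind _ _ 4).const_mul _),
      integral_const_mul, integral_const_mul, integral_const_mul, integral_const_mul,
      integral_icc_ind 4 (by norm_num), integral_icc_ind 4 (by norm_num),
      integral_icc_ind 4 (by norm_num), integral_icc_ind 4 (by norm_num)]
  have f1 := icc_fold (x := x) 1 (by norm_num : (-(1/2):ℝ) ≤ -(1/4))
    (by norm_num : (-(1/4):ℝ) ≤ 0) h3
  have f2 := icc_fold (x := x) 1 (by norm_num : (-(1/2):ℝ) ≤ 0)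
    (by norm_num : (0:ℝ) ≤ 1/4) h6
  have f3 := icc_fold (x := x) 1 (by norm_num : (-(1/2):ℝ) ≤ 1/4)
    (by norm_num : (1/4:ℝ) ≤ 1/2) h9
  linear_combination f1 + f2 + f3

lemma hh_marg_x : ∀ᵐ y : ℝ ∂volume,
    (∫ x, hh (x, y)) = (Set.Icc (-(1/2) : ℝ) (1/2)).indicator (fun _ => 1) y := by
  filter_upwards [ae_ne (-(1/4) : ℝ), ae_ne (0 : ℝ), ae_ne (1/4 : ℝ)] with y h3 h6 h9
  have hcongr : (fun x => hh (x, y)) =ᵐ[volume] fun x =>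
      (Set.Icc (-(1/2) : ℝ) (-(1/4))).indicator (fun _ => (1:ℝ)) x
        * (Set.Icc (-(1/2) : ℝ) (-(1/4))).indicator (fun _ => (4:ℝ)) y
      + (Set.Icc (-(1/4) : ℝ) 0).indicator (fun _ => (1:ℝ)) x
        * (Set.Icc (-(1/4) : ℝ) 0).indicator (fun _ => (4:ℝ)) y
      + (Set.Icc (0 : ℝ) (1/4)).indicator (fun _ => (1:ℝ)) x
        * (Set.Icc (0 : ℝ) (1/4)).indicator (fun _ => (4:ℝ)) y
      + (Set.Icc (1/4 : ℝ) (1/2)).indicator (fun _ => (1:ℝ)) x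
        * (Set.Icc (1/4 : ℝ) (1/2)).indicator (fun _ => (4:ℝ)) y := by
    filter_upwards [ae_ne (-(1/4) : ℝ), ae_ne (0 : ℝ), ae_ne (1/4 : ℝ)] with x g3 g6 g9
    rw [hdecomp (x, y) g3 g6 g9, S1, S2, S3, S4,
      icc_prod_ind_apply, icc_prod_ind_apply, icc_prod_ind_apply, icc_prod_ind_apply]
  rw [integral_congr_ae hcongr]
  rw [integral_add4 ((integrable_icc_ind _ _ 1).mul_const _)
        ((integrable_icc_ind _ _ 1).mul_const _) ((integrable_icc_ind _ _ 1).mul_const _)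
        ((integrable_icc_ind _ _ 1).mul_const _),
      integral_mul_const, integral_mul_const, integral_mul_const, integral_mul_const,
      integral_icc_ind 1 (by norm_num), integral_icc_ind 1 (by norm_num),
      integral_icc_ind 1 (by norm_num), integral_icc_ind 1 (by norm_num),
      ind_const_mul (Set.Icc (-(1/2) : ℝ) (-(1/4))) 4 y,
      ind_const_mul (Set.Icc (-(1/4) : ℝ) 0) 4 y,
      ind_const_mul (Set.Icc (0 : ℝ) (1/4)) 4 y,
      ind_const_mul (Set.Icc (1/4 : ℝ) (1/2)) 4 y]
  have f1 := icc_fold (x := y) 1 (by norm_num : (-(1/2):ℝ) ≤ -(1/4))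
    (by norm_num : (-(1/4):ℝ) ≤ 0) h3
  have f2 := icc_fold (x := y) 1 (by norm_num : (-(1/2):ℝ) ≤ 0)
    (by norm_num : (0:ℝ) ≤ 1/4) h6
  have f3 := icc_fold (x := y) 1 (by norm_num : (-(1/2):ℝ) ≤ 1/4)
    (by norm_num : (1/4:ℝ) ≤ 1/2) h9
  linear_combination f1 + f2 + f3

lemma hh_cost : Icost1 (fun p => (1/2) * |p.1 - p.2| ^ 2) hh = 1/192 := by
  have hae : (fun p : ℝ × ℝ => (1/2 * |p.1 - p.2| ^ 2) * hh p) =ᵐ[volume] fun p =>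
      (1/2 * |p.1 - p.2| ^ 2) * (4 * (stp (-(1/2)) (-(1/4)) p.1 * stp (-(1/2)) (-(1/4)) p.2))
      + (1/2 * |p.1 - p.2| ^ 2) * (4 * (stp (-(1/4)) 0 p.1 * stp (-(1/4)) 0 p.2))
      + (1/2 * |p.1 - p.2| ^ 2) * (4 * (stp 0 (1/4) p.1 * stp 0 (1/4) p.2))
      + (1/2 * |p.1 - p.2| ^ 2) * (4 * (stp (1/4) (1/2) p.1 * stp (1/4) (1/2) p.2)) := by
    filter_upwards [ae_fst_ne (-(1/4) : ℝ), ae_fst_ne (0 : ℝ), ae_fst_ne (1/4 : ℝ),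
      ae_fst_ne (1/2 : ℝ), ae_snd_ne (-(1/4) : ℝ), ae_snd_ne (0 : ℝ), ae_snd_ne (1/4 : ℝ),
      ae_snd_ne (1/2 : ℝ)] with p u3 u6 u9 u12 w3 w6 w9 w12
    rw [hdecomp p u3 u6 u9, S1, S2, S3, S4, icc_prod_eq_stp u3 w3, icc_prod_eq_stp u6 w6,
      icc_prod_eq_stp u9 w9, icc_prod_eq_stp u12 w12]
    ring
  rw [Icost1, integral_congr_ae hae,
    integral_add4 (costRectIntegrable 4 _ _ _ _) (costRectIntegrable 4 _ _ _ _)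
      (costRectIntegrable 4 _ _ _ _) (costRectIntegrable 4 _ _ _ _),
    costRect (by norm_num) (by norm_num), costRect (by norm_num) (by norm_num),
    costRect (by norm_num) (by norm_num), costRect (by norm_num) (by norm_num)]
  norm_num

/-! ### The competitor density `kk` -/

def kk : ℝ × ℝ → ℝ := fun p =>
  4 * (stp (-(1/2)) (-(1/3)) p.1 * stp (-(1/2)) (-(1/4)) p.2
    + stp (-(1/3)) (-(1/4)) p.1 * (stp (-(1/2)) (-(1/3)) p.2 + stp (-(1/4)) (-(1/6)) p.2)
    + stp (-(1/4)) (-(1/6)) p.1 * stp (-(1/3)) (-(1/12)) p.2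
    + stp (-(1/6)) (-(1/12)) p.1 * stp (-(1/4)) (0) p.2
    + stp (-(1/12)) (0) p.1 * stp (-(1/6)) (1/12) p.2
    + stp (0) (1/12) p.1 * stp (-(1/12)) (1/6) p.2
    + stp (1/12) (1/6) p.1 * stp (0) (1/4) p.2
    + stp (1/6) (1/4) p.1 * stp (1/12) (1/3) p.2
    + stp (1/4) (1/3) p.1 * (stp (1/6) (1/4) p.2 + stp (1/3) (1/2) p.2)
    + stp (1/3) (1/2) p.1 * stp (1/4) (1/2) p.2)

lemma kk_integrable : Integrable kk volume := by
  unfold kk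
  apply Integrable.const_mul
  rw [Measure.volume_eq_prod]
  exact (((((((((((integrable_stp (-(1/2)) (-(1/3))).mul_prod (integrable_stp (-(1/2)) (-(1/4)))).add
    ((integrable_stp (-(1/3)) (-(1/4))).mul_prod ((integrable_stp (-(1/2)) (-(1/3))).add (integrable_stp (-(1/4)) (-(1/6)))))).add
    ((integrable_stp (-(1/4)) (-(1/6))).mul_prod (integrable_stp (-(1/3)) (-(1/12))))).add
    ((integrable_stp (-(1/6)) (-(1/12))).mul_prod (integrable_stp (-(1/4)) (0)))).add
    ((integrable_stp (-(1/12)) (0)).mul_prod (integrable_stp (-(1/6)) (1/12)))).add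
    ((integrable_stp (0) (1/12)).mul_prod (integrable_stp (-(1/12)) (1/6)))).add
    ((integrable_stp (1/12) (1/6)).mul_prod (integrable_stp (0) (1/4)))).add
    ((integrable_stp (1/6) (1/4)).mul_prod (integrable_stp (1/12) (1/3)))).add
    ((integrable_stp (1/4) (1/3)).mul_prod ((integrable_stp (1/6) (1/4)).add (integrable_stp (1/3) (1/2))))).add
    ((integrable_stp (1/3) (1/2)).mul_prod (integrable_stp (1/4) (1/2))))



lemma kk_nonneg : ∀ᵐ p : ℝ × ℝ ∂volume, 0 ≤ kk p := by
  refine Filter.Eventually.of_forall fun p => ?_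
  unfold kk
  refine mul_nonneg (by norm_num) ?_
  repeat' first
    | apply add_nonneg
    | apply mul_nonneg
    | exact stp_nonneg _ _ _

lemma kk_marg_y : ∀ᵐ x : ℝ ∂volume,
    (∫ y, kk (x, y)) = (Set.Icc (-(1/2) : ℝ) (1/2)).indicator (fun _ => 1) x := by
  filter_upwards [ae_ne (1/2 : ℝ)] with x hx
  simp only [kk]
  rw [integral_const_mul]
  rw [integral_add10 ((integrable_stp (-(1/2)) (-(1/4))).const_mul _)
    ((show Integrable (fun y => stp (-(1/2)) (-(1/3)) y + stp (-(1/4)) (-(1/6)) y) volume from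
      (integrable_stp _ _).add (integrable_stp _ _)).const_mul _)
    ((integrable_stp (-(1/3)) (-(1/12))).const_mul _)
    ((integrable_stp (-(1/4)) (0)).const_mul _)
    ((integrable_stp (-(1/6)) (1/12)).const_mul _)
    ((integrable_stp (-(1/12)) (1/6)).const_mul _)
    ((integrable_stp (0) (1/4)).const_mul _)
    ((integrable_stp (1/12) (1/3)).const_mul _)
    ((show Integrable (fun y => stp (1/6) (1/4) y + stp (1/3) (1/2) y) volume from
      (integrable_stp _ _).add (integrable_stp _ _)).const_mul _)
    ((integrable_stp (1/4) (1/2)).const_mul _)]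
  simp only [integral_const_mul]
  rw [integral_add (integrable_stp (-(1/2)) (-(1/3))) (integrable_stp (-(1/4)) (-(1/6))),
    integral_add (integrable_stp (1/6) (1/4)) (integrable_stp (1/3) (1/2))]
  rw [integral_stp (show (-(1/2):ℝ) ≤ -(1/4) by norm_num),
    integral_stp (show (-(1/2):ℝ) ≤ -(1/3) by norm_num),
    integral_stp (show (-(1/4):ℝ) ≤ -(1/6) by norm_num),
    integral_stp (show (-(1/3):ℝ) ≤ -(1/12) by norm_num),
    integral_stp (show (-(1/4):ℝ) ≤ 0 by norm_num),
    integral_stp (show (-(1/6):ℝ) ≤ 1/12 by norm_num),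
    integral_stp (show (-(1/12):ℝ) ≤ 1/6 by norm_num),
    integral_stp (show (0:ℝ) ≤ 1/4 by norm_num),
    integral_stp (show (1/12:ℝ) ≤ 1/3 by norm_num),
    integral_stp (show (1/6:ℝ) ≤ 1/4 by norm_num),
    integral_stp (show (1/3:ℝ) ≤ 1/2 by norm_num),
    integral_stp (show (1/4:ℝ) ≤ 1/2 by norm_num)]
  rw [icc_ind_eq_stp (-(1/2)) 1 hx]
  have F : stp (-(1/2)) (-(1/3)) x + stp (-(1/3)) (-(1/4)) x + stp (-(1/4)) (-(1/6)) x + stp (-(1/6)) (-(1/12)) x + stp (-(1/12)) (0) x + stp (0) (1/12) x + stp (1/12) (1/6) x + stp (1/6) (1/4) x + stp (1/4) (1/3) x + stp (1/3) (1/2) x = stp (-(1/2)) (1/2) x := by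
    rw [stp_fold (show (-(1/2):ℝ) ≤ -(1/3) by norm_num) (show (-(1/3):ℝ) ≤ -(1/4) by norm_num) x,
      stp_fold (show (-(1/2):ℝ) ≤ -(1/4) by norm_num) (show (-(1/4):ℝ) ≤ -(1/6) by norm_num) x,
      stp_fold (show (-(1/2):ℝ) ≤ -(1/6) by norm_num) (show (-(1/6):ℝ) ≤ -(1/12) by norm_num) x,
      stp_fold (show (-(1/2):ℝ) ≤ -(1/12) by norm_num) (show (-(1/12):ℝ) ≤ 0 by norm_num) x,
      stp_fold (show (-(1/2):ℝ) ≤ 0 by norm_num) (show (0:ℝ) ≤ 1/12 by norm_num) x,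
      stp_fold (show (-(1/2):ℝ) ≤ 1/12 by norm_num) (show (1/12:ℝ) ≤ 1/6 by norm_num) x,
      stp_fold (show (-(1/2):ℝ) ≤ 1/6 by norm_num) (show (1/6:ℝ) ≤ 1/4 by norm_num) x,
      stp_fold (show (-(1/2):ℝ) ≤ 1/4 by norm_num) (show (1/4:ℝ) ≤ 1/3 by norm_num) x,
      stp_fold (show (-(1/2):ℝ) ≤ 1/3 by norm_num) (show (1/3:ℝ) ≤ 1/2 by norm_num) x]
  linear_combination F

lemma kk_marg_x : ∀ᵐ y : ℝ ∂volume,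
    (∫ x, kk (x, y)) = (Set.Icc (-(1/2) : ℝ) (1/2)).indicator (fun _ => 1) y := by
  filter_upwards [ae_ne (1/2 : ℝ)] with y hy
  simp only [kk]
  rw [integral_const_mul]
  rw [integral_add10 ((integrable_stp (-(1/2)) (-(1/3))).mul_const _)
    ((integrable_stp (-(1/3)) (-(1/4))).mul_const _)
    ((integrable_stp (-(1/4)) (-(1/6))).mul_const _)
    ((integrable_stp (-(1/6)) (-(1/12))).mul_const _)
    ((integrable_stp (-(1/12)) (0)).mul_const _)
    ((integrable_stp (0) (1/12)).mul_const _)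
    ((integrable_stp (1/12) (1/6)).mul_const _)
    ((integrable_stp (1/6) (1/4)).mul_const _)
    ((integrable_stp (1/4) (1/3)).mul_const _)
    ((integrable_stp (1/3) (1/2)).mul_const _)]
  simp only [integral_mul_const]
  rw [integral_stp (show (-(1/2):ℝ) ≤ -(1/3) by norm_num),
    integral_stp (show (-(1/3):ℝ) ≤ -(1/4) by norm_num),
    integral_stp (show (-(1/4):ℝ) ≤ -(1/6) by norm_num),
    integral_stp (show (-(1/6):ℝ) ≤ -(1/12) by norm_num),
    integral_stp (show (-(1/12):ℝ) ≤ 0 by norm_num),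
    integral_stp (show (0:ℝ) ≤ 1/12 by norm_num),
    integral_stp (show (1/12:ℝ) ≤ 1/6 by norm_num),
    integral_stp (show (1/6:ℝ) ≤ 1/4 by norm_num),
    integral_stp (show (1/4:ℝ) ≤ 1/3 by norm_num),
    integral_stp (show (1/3:ℝ) ≤ 1/2 by norm_num)]
  rw [icc_ind_eq_stp (-(1/2)) 1 hy]
  have w1 : stp (-(1/2)) (-(1/4)) y = stp (-(1/2)) (-(1/3)) y + stp (-(1/3)) (-(1/4)) y := by
    rw [stp_fold (show (-(1/2):ℝ) ≤ -(1/3) by norm_num) (show (-(1/3):ℝ) ≤ -(1/4) by norm_num) y]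
  have w2 : stp (-(1/3)) (-(1/12)) y = stp (-(1/3)) (-(1/4)) y + stp (-(1/4)) (-(1/6)) y + stp (-(1/6)) (-(1/12)) y := by
    rw [stp_fold (show (-(1/3):ℝ) ≤ -(1/4) by norm_num) (show (-(1/4):ℝ) ≤ -(1/6) by norm_num) y, stp_fold (show (-(1/3):ℝ) ≤ -(1/6) by norm_num) (show (-(1/6):ℝ) ≤ -(1/12) by norm_num) y]
  have w3 : stp (-(1/4)) (0) y = stp (-(1/4)) (-(1/6)) y + stp (-(1/6)) (-(1/12)) y + stp (-(1/12)) (0) y := by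
    rw [stp_fold (show (-(1/4):ℝ) ≤ -(1/6) by norm_num) (show (-(1/6):ℝ) ≤ -(1/12) by norm_num) y, stp_fold (show (-(1/4):ℝ) ≤ -(1/12) by norm_num) (show (-(1/12):ℝ) ≤ 0 by norm_num) y]
  have w4 : stp (-(1/6)) (1/12) y = stp (-(1/6)) (-(1/12)) y + stp (-(1/12)) (0) y + stp (0) (1/12) y := by
    rw [stp_fold (show (-(1/6):ℝ) ≤ -(1/12) by norm_num) (show (-(1/12):ℝ) ≤ 0 by norm_num) y, stp_fold (show (-(1/6):ℝ) ≤ 0 by norm_num) (show (0:ℝ) ≤ 1/12 by norm_num) y]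
  have w5 : stp (-(1/12)) (1/6) y = stp (-(1/12)) (0) y + stp (0) (1/12) y + stp (1/12) (1/6) y := by
    rw [stp_fold (show (-(1/12):ℝ) ≤ 0 by norm_num) (show (0:ℝ) ≤ 1/12 by norm_num) y, stp_fold (show (-(1/12):ℝ) ≤ 1/12 by norm_num) (show (1/12:ℝ) ≤ 1/6 by norm_num) y]
  have w6 : stp (0) (1/4) y = stp (0) (1/12) y + stp (1/12) (1/6) y + stp (1/6) (1/4) y := by
    rw [stp_fold (show (0:ℝ) ≤ 1/12 by norm_num) (show (1/12:ℝ) ≤ 1/6 by norm_num) y, stp_fold (show (0:ℝ) ≤ 1/6 by norm_num) (show (1/6:ℝ) ≤ 1/4 by norm_num) y]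
  have w7 : stp (1/12) (1/3) y = stp (1/12) (1/6) y + stp (1/6) (1/4) y + stp (1/4) (1/3) y := by
    rw [stp_fold (show (1/12:ℝ) ≤ 1/6 by norm_num) (show (1/6:ℝ) ≤ 1/4 by norm_num) y, stp_fold (show (1/12:ℝ) ≤ 1/4 by norm_num) (show (1/4:ℝ) ≤ 1/3 by norm_num) y]
  have w8 : stp (1/4) (1/2) y = stp (1/4) (1/3) y + stp (1/3) (1/2) y := by
    rw [stp_fold (show (1/4:ℝ) ≤ 1/3 by norm_num) (show (1/3:ℝ) ≤ 1/2 by norm_num) y]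
  have F : stp (-(1/2)) (-(1/3)) y + stp (-(1/3)) (-(1/4)) y + stp (-(1/4)) (-(1/6)) y + stp (-(1/6)) (-(1/12)) y + stp (-(1/12)) (0) y + stp (0) (1/12) y + stp (1/12) (1/6) y + stp (1/6) (1/4) y + stp (1/4) (1/3) y + stp (1/3) (1/2) y = stp (-(1/2)) (1/2) y := by
    rw [stp_fold (show (-(1/2):ℝ) ≤ -(1/3) by norm_num) (show (-(1/3):ℝ) ≤ -(1/4) by norm_num) y,
      stp_fold (show (-(1/2):ℝ) ≤ -(1/4) by norm_num) (show (-(1/4):ℝ) ≤ -(1/6) by norm_num) y,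
      stp_fold (show (-(1/2):ℝ) ≤ -(1/6) by norm_num) (show (-(1/6):ℝ) ≤ -(1/12) by norm_num) y,
      stp_fold (show (-(1/2):ℝ) ≤ -(1/12) by norm_num) (show (-(1/12):ℝ) ≤ 0 by norm_num) y,
      stp_fold (show (-(1/2):ℝ) ≤ 0 by norm_num) (show (0:ℝ) ≤ 1/12 by norm_num) y,
      stp_fold (show (-(1/2):ℝ) ≤ 1/12 by norm_num) (show (1/12:ℝ) ≤ 1/6 by norm_num) y,
      stp_fold (show (-(1/2):ℝ) ≤ 1/6 by norm_num) (show (1/6:ℝ) ≤ 1/4 by norm_num) y,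
      stp_fold (show (-(1/2):ℝ) ≤ 1/4 by norm_num) (show (1/4:ℝ) ≤ 1/3 by norm_num) y,
      stp_fold (show (-(1/2):ℝ) ≤ 1/3 by norm_num) (show (1/3:ℝ) ≤ 1/2 by norm_num) y]
  linear_combination (2/3) * w1 + (1/3) * w2 + (1/3) * w3 + (1/3) * w4 + (1/3) * w5 + (1/3) * w6 + (1/3) * w7 + (2/3) * w8 + F

lemma stp_le_stp {A B a b : ℝ} (h1 : A ≤ a) (h2 : b ≤ B) (x : ℝ) :
    stp a b x ≤ stp A B x := by
  by_cases h : a ≤ x ∧ x < b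
  · have hx : A ≤ x ∧ x < B := ⟨h1.trans h.1, h.2.trans_le h2⟩
    simp only [stp, if_pos h, if_pos hx]
    exact le_rfl
  · have : stp a b x = 0 := by simp [stp, h]
    rw [this]
    exact stp_nonneg A B x

lemma stp_add_le {A B a b c d : ℝ} (hab : a ≤ b) (hcd : c ≤ d) (h1 : A ≤ a) (h2 : b ≤ c)
    (h3 : d ≤ B) (x : ℝ) : stp a b x + stp c d x ≤ stp A B x := by
  by_cases u : a ≤ x ∧ x < b
  · have v : ¬ (c ≤ x ∧ x < d) := by rintro ⟨v1, v2⟩; linarith [u.2]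
    have hx : A ≤ x ∧ x < B := ⟨h1.trans u.1, by linarith [u.2]⟩
    simp only [stp, if_pos u, if_neg v, if_pos hx]
    norm_num
  · by_cases v : c ≤ x ∧ x < d
    · have hx : A ≤ x ∧ x < B := ⟨by linarith [v.1], by linarith [v.2]⟩
      simp only [stp, if_neg u, if_pos v, if_pos hx]
      norm_num
    · simp only [stp, if_neg u, if_neg v]
      have := stp_nonneg A B x
      simp only [stp] at this
      linarith

lemma stp_eq_zero_of_not_mem {A B x : ℝ} (h : x ∉ Set.Icc A B) : stp A B x = 0 := by
  simp only [stp, ite_eq_right_iff]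
  rintro ⟨u1, u2⟩
  exact ((h (Set.mem_Icc.2 ⟨u1, u2.le⟩)).elim)

lemma kk_le_hbar : ∀ᵐ p : ℝ × ℝ ∂volume, kk p ≤ hbar p := by
  refine Filter.Eventually.of_forall fun p => ?_
  have SI := stp_nonneg (-(1/2)) (1/2) p.2
  have B1 : stp (-(1/2)) (-(1/4)) p.2 ≤ stp (-(1/2)) (1/2) p.2 :=
    stp_le_stp (show (-(1/2):ℝ) ≤ -(1/2) by norm_num) (show (-(1/4):ℝ) ≤ 1/2 by norm_num) p.2
  have B2 : stp (-(1/2)) (-(1/3)) p.2 + stp (-(1/4)) (-(1/6)) p.2 ≤ stp (-(1/2)) (1/2) p.2 :=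
    stp_add_le (show (-(1/2):ℝ) ≤ -(1/3) by norm_num) (show (-(1/4):ℝ) ≤ -(1/6) by norm_num) (show (-(1/2):ℝ) ≤ -(1/2) by norm_num) (show (-(1/3):ℝ) ≤ -(1/4) by norm_num) (show (-(1/6):ℝ) ≤ 1/2 by norm_num) p.2
  have B3 : stp (-(1/3)) (-(1/12)) p.2 ≤ stp (-(1/2)) (1/2) p.2 :=
    stp_le_stp (show (-(1/2):ℝ) ≤ -(1/3) by norm_num) (show (-(1/12):ℝ) ≤ 1/2 by norm_num) p.2
  have B4 : stp (-(1/4)) (0) p.2 ≤ stp (-(1/2)) (1/2) p.2 :=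
    stp_le_stp (show (-(1/2):ℝ) ≤ -(1/4) by norm_num) (show (0:ℝ) ≤ 1/2 by norm_num) p.2
  have B5 : stp (-(1/6)) (1/12) p.2 ≤ stp (-(1/2)) (1/2) p.2 :=
    stp_le_stp (show (-(1/2):ℝ) ≤ -(1/6) by norm_num) (show (1/12:ℝ) ≤ 1/2 by norm_num) p.2
  have B6 : stp (-(1/12)) (1/6) p.2 ≤ stp (-(1/2)) (1/2) p.2 :=
    stp_le_stp (show (-(1/2):ℝ) ≤ -(1/12) by norm_num) (show (1/6:ℝ) ≤ 1/2 by norm_num) p.2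
  have B7 : stp (0) (1/4) p.2 ≤ stp (-(1/2)) (1/2) p.2 :=
    stp_le_stp (show (-(1/2):ℝ) ≤ 0 by norm_num) (show (1/4:ℝ) ≤ 1/2 by norm_num) p.2
  have B8 : stp (1/12) (1/3) p.2 ≤ stp (-(1/2)) (1/2) p.2 :=
    stp_le_stp (show (-(1/2):ℝ) ≤ 1/12 by norm_num) (show (1/3:ℝ) ≤ 1/2 by norm_num) p.2
  have B9 : stp (1/6) (1/4) p.2 + stp (1/3) (1/2) p.2 ≤ stp (-(1/2)) (1/2) p.2 :=
    stp_add_le (show (1/6:ℝ) ≤ 1/4 by norm_num) (show (1/3:ℝ) ≤ 1/2 by norm_num) (show (-(1/2):ℝ) ≤ 1/6 by norm_num) (show (1/4:ℝ) ≤ 1/3 by norm_num) (show (1/2:ℝ) ≤ 1/2 by norm_num) p.2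
  have B10 : stp (1/4) (1/2) p.2 ≤ stp (-(1/2)) (1/2) p.2 :=
    stp_le_stp (show (-(1/2):ℝ) ≤ 1/4 by norm_num) (show (1/2:ℝ) ≤ 1/2 by norm_num) p.2
  have F : stp (-(1/2)) (-(1/3)) p.1 + stp (-(1/3)) (-(1/4)) p.1 + stp (-(1/4)) (-(1/6)) p.1 + stp (-(1/6)) (-(1/12)) p.1 + stp (-(1/12)) (0) p.1 + stp (0) (1/12) p.1 + stp (1/12) (1/6) p.1 + stp (1/6) (1/4) p.1 + stp (1/4) (1/3) p.1 + stp (1/3) (1/2) p.1 = stp (-(1/2)) (1/2) p.1 := by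
    rw [stp_fold (show (-(1/2):ℝ) ≤ -(1/3) by norm_num) (show (-(1/3):ℝ) ≤ -(1/4) by norm_num) p.1,
      stp_fold (show (-(1/2):ℝ) ≤ -(1/4) by norm_num) (show (-(1/4):ℝ) ≤ -(1/6) by norm_num) p.1,
      stp_fold (show (-(1/2):ℝ) ≤ -(1/6) by norm_num) (show (-(1/6):ℝ) ≤ -(1/12) by norm_num) p.1,
      stp_fold (show (-(1/2):ℝ) ≤ -(1/12) by norm_num) (show (-(1/12):ℝ) ≤ 0 by norm_num) p.1,
      stp_fold (show (-(1/2):ℝ) ≤ 0 by norm_num) (show (0:ℝ) ≤ 1/12 by norm_num) p.1,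
      stp_fold (show (-(1/2):ℝ) ≤ 1/12 by norm_num) (show (1/12:ℝ) ≤ 1/6 by norm_num) p.1,
      stp_fold (show (-(1/2):ℝ) ≤ 1/6 by norm_num) (show (1/6:ℝ) ≤ 1/4 by norm_num) p.1,
      stp_fold (show (-(1/2):ℝ) ≤ 1/4 by norm_num) (show (1/4:ℝ) ≤ 1/3 by norm_num) p.1,
      stp_fold (show (-(1/2):ℝ) ≤ 1/3 by norm_num) (show (1/3:ℝ) ≤ 1/2 by norm_num) p.1]
  have step : kk p ≤ 4 * (stp (-(1/2)) (1/2) p.1 * stp (-(1/2)) (1/2) p.2) := by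
    unfold kk
    have sum_le : 
        stp (-(1/2)) (-(1/3)) p.1 * stp (-(1/2)) (-(1/4)) p.2
        + stp (-(1/3)) (-(1/4)) p.1 * (stp (-(1/2)) (-(1/3)) p.2 + stp (-(1/4)) (-(1/6)) p.2)
        + stp (-(1/4)) (-(1/6)) p.1 * stp (-(1/3)) (-(1/12)) p.2
        + stp (-(1/6)) (-(1/12)) p.1 * stp (-(1/4)) (0) p.2
        + stp (-(1/12)) (0) p.1 * stp (-(1/6)) (1/12) p.2
        + stp (0) (1/12) p.1 * stp (-(1/12)) (1/6) p.2
        + stp (1/12) (1/6) p.1 * stp (0) (1/4) p.2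
        + stp (1/6) (1/4) p.1 * stp (1/12) (1/3) p.2
        + stp (1/4) (1/3) p.1 * (stp (1/6) (1/4) p.2 + stp (1/3) (1/2) p.2)
        + stp (1/3) (1/2) p.1 * stp (1/4) (1/2) p.2
        ≤ stp (-(1/2)) (-(1/3)) p.1 * stp (-(1/2)) (1/2) p.2 + stp (-(1/3)) (-(1/4)) p.1 * stp (-(1/2)) (1/2) p.2 + stp (-(1/4)) (-(1/6)) p.1 * stp (-(1/2)) (1/2) p.2 + stp (-(1/6)) (-(1/12)) p.1 * stp (-(1/2)) (1/2) p.2 + stp (-(1/12)) (0) p.1 * stp (-(1/2)) (1/2) p.2 + stp (0) (1/12) p.1 * stp (-(1/2)) (1/2) p.2 + stp (1/12) (1/6) p.1 * stp (-(1/2)) (1/2) p.2 + stp (1/6) (1/4) p.1 * stp (-(1/2)) (1/2) p.2 + stp (1/4) (1/3) p.1 * stp (-(1/2)) (1/2) p.2 + stp (1/3) (1/2) p.1 * stp (-(1/2)) (1/2) p.2 := by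
      exact (add_le_add (add_le_add (add_le_add (add_le_add (add_le_add (add_le_add (add_le_add (add_le_add (add_le_add (mul_le_mul_of_nonneg_left B1 (stp_nonneg _ _ _)) (mul_le_mul_of_nonneg_left B2 (stp_nonneg _ _ _))) (mul_le_mul_of_nonneg_left B3 (stp_nonneg _ _ _))) (mul_le_mul_of_nonneg_left B4 (stp_nonneg _ _ _))) (mul_le_mul_of_nonneg_left B5 (stp_nonneg _ _ _))) (mul_le_mul_of_nonneg_left B6 (stp_nonneg _ _ _))) (mul_le_mul_of_nonneg_left B7 (stp_nonneg _ _ _))) (mul_le_mul_of_nonneg_left B8 (stp_nonneg _ _ _))) (mul_le_mul_of_nonneg_left B9 (stp_nonneg _ _ _))) (mul_le_mul_of_nonneg_left B10 (stp_nonneg _ _ _)))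
    calc 4 * (stp (-(1/2)) (-(1/3)) p.1 * stp (-(1/2)) (-(1/4)) p.2
        + stp (-(1/3)) (-(1/4)) p.1 * (stp (-(1/2)) (-(1/3)) p.2 + stp (-(1/4)) (-(1/6)) p.2)
        + stp (-(1/4)) (-(1/6)) p.1 * stp (-(1/3)) (-(1/12)) p.2
        + stp (-(1/6)) (-(1/12)) p.1 * stp (-(1/4)) (0) p.2
        + stp (-(1/12)) (0) p.1 * stp (-(1/6)) (1/12) p.2
        + stp (0) (1/12) p.1 * stp (-(1/12)) (1/6) p.2
        + stp (1/12) (1/6) p.1 * stp (0) (1/4) p.2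
        + stp (1/6) (1/4) p.1 * stp (1/12) (1/3) p.2
        + stp (1/4) (1/3) p.1 * (stp (1/6) (1/4) p.2 + stp (1/3) (1/2) p.2)
        + stp (1/3) (1/2) p.1 * stp (1/4) (1/2) p.2)
        ≤ 4 * (stp (-(1/2)) (-(1/3)) p.1 * stp (-(1/2)) (1/2) p.2 + stp (-(1/3)) (-(1/4)) p.1 * stp (-(1/2)) (1/2) p.2 + stp (-(1/4)) (-(1/6)) p.1 * stp (-(1/2)) (1/2) p.2 + stp (-(1/6)) (-(1/12)) p.1 * stp (-(1/2)) (1/2) p.2 + stp (-(1/12)) (0) p.1 * stp (-(1/2)) (1/2) p.2 + stp (0) (1/12) p.1 * stp (-(1/2)) (1/2) p.2 + stp (1/12) (1/6) p.1 * stp (-(1/2)) (1/2) p.2 + stp (1/6) (1/4) p.1 * stp (-(1/2)) (1/2) p.2 + stp (1/4) (1/3) p.1 * stp (-(1/2)) (1/2) p.2 + stp (1/3) (1/2) p.1 * stp (-(1/2)) (1/2) p.2) := by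
          linarith [sum_le]
      _ = 4 * (stp (-(1/2)) (1/2) p.1 * stp (-(1/2)) (1/2) p.2) := by
          linear_combination (4 * stp (-(1/2)) (1/2) p.2) * F
  refine step.trans ?_
  by_cases hm : p ∈ Set.Icc (-(1/2) : ℝ) (1/2) ×ˢ Set.Icc (-(1/2) : ℝ) (1/2)
  · rw [hbar, Set.indicator_of_mem hm]
    nlinarith [stp_nonneg (-(1/2)) (1/2) p.1, stp_le_one (-(1/2)) (1/2) p.1,
      stp_nonneg (-(1/2)) (1/2) p.2, stp_le_one (-(1/2)) (1/2) p.2]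
  · rw [hbar, Set.indicator_of_notMem hm]
    rw [Set.mem_prod, not_and_or] at hm
    rcases hm with hm | hm
    · rw [stp_eq_zero_of_not_mem hm]
      norm_num
    · rw [stp_eq_zero_of_not_mem hm]
      norm_num

lemma kk_cost : Icost1 (fun p => (1/2) * |p.1 - p.2| ^ 2) kk = 11/2592 := by
  have hfun : (fun p : ℝ × ℝ => (1/2 * |p.1 - p.2| ^ 2) * kk p) = fun p =>
      (1/2 * |p.1 - p.2| ^ 2) * (4 * (stp (-(1/2)) (-(1/3)) p.1 * stp (-(1/2)) (-(1/4)) p.2))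
      + (1/2 * |p.1 - p.2| ^ 2) * (4 * (stp (-(1/3)) (-(1/4)) p.1 * stp (-(1/2)) (-(1/3)) p.2))
      + (1/2 * |p.1 - p.2| ^ 2) * (4 * (stp (-(1/3)) (-(1/4)) p.1 * stp (-(1/4)) (-(1/6)) p.2))
      + (1/2 * |p.1 - p.2| ^ 2) * (4 * (stp (-(1/4)) (-(1/6)) p.1 * stp (-(1/3)) (-(1/12)) p.2))
      + (1/2 * |p.1 - p.2| ^ 2) * (4 * (stp (-(1/6)) (-(1/12)) p.1 * stp (-(1/4)) (0) p.2))
      + (1/2 * |p.1 - p.2| ^ 2) * (4 * (stp (-(1/12)) (0) p.1 * stp (-(1/6)) (1/12) p.2))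
      + (1/2 * |p.1 - p.2| ^ 2) * (4 * (stp (0) (1/12) p.1 * stp (-(1/12)) (1/6) p.2))
      + (1/2 * |p.1 - p.2| ^ 2) * (4 * (stp (1/12) (1/6) p.1 * stp (0) (1/4) p.2))
      + (1/2 * |p.1 - p.2| ^ 2) * (4 * (stp (1/6) (1/4) p.1 * stp (1/12) (1/3) p.2))
      + (1/2 * |p.1 - p.2| ^ 2) * (4 * (stp (1/4) (1/3) p.1 * stp (1/6) (1/4) p.2))
      + (1/2 * |p.1 - p.2| ^ 2) * (4 * (stp (1/4) (1/3) p.1 * stp (1/3) (1/2) p.2))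
      + (1/2 * |p.1 - p.2| ^ 2) * (4 * (stp (1/3) (1/2) p.1 * stp (1/4) (1/2) p.2)) := by
    funext p
    unfold kk
    ring
  rw [Icost1, hfun]
  rw [integral_add12 (costRectIntegrable 4 _ _ _ _)
    (costRectIntegrable 4 _ _ _ _)
    (costRectIntegrable 4 _ _ _ _)
    (costRectIntegrable 4 _ _ _ _)
    (costRectIntegrable 4 _ _ _ _)
    (costRectIntegrable 4 _ _ _ _)
    (costRectIntegrable 4 _ _ _ _)
    (costRectIntegrable 4 _ _ _ _)
    (costRectIntegrable 4 _ _ _ _)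
    (costRectIntegrable 4 _ _ _ _)
    (costRectIntegrable 4 _ _ _ _)
    (costRectIntegrable 4 _ _ _ _)]
  rw [costRect (show (-(1/2):ℝ) ≤ -(1/3) by norm_num) (show (-(1/2):ℝ) ≤ -(1/4) by norm_num),
    costRect (show (-(1/3):ℝ) ≤ -(1/4) by norm_num) (show (-(1/2):ℝ) ≤ -(1/3) by norm_num),
    costRect (show (-(1/3):ℝ) ≤ -(1/4) by norm_num) (show (-(1/4):ℝ) ≤ -(1/6) by norm_num),
    costRect (show (-(1/4):ℝ) ≤ -(1/6) by norm_num) (show (-(1/3):ℝ) ≤ -(1/12) by norm_num),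
    costRect (show (-(1/6):ℝ) ≤ -(1/12) by norm_num) (show (-(1/4):ℝ) ≤ 0 by norm_num),
    costRect (show (-(1/12):ℝ) ≤ 0 by norm_num) (show (-(1/6):ℝ) ≤ 1/12 by norm_num),
    costRect (show (0:ℝ) ≤ 1/12 by norm_num) (show (-(1/12):ℝ) ≤ 1/6 by norm_num),
    costRect (show (1/12:ℝ) ≤ 1/6 by norm_num) (show (0:ℝ) ≤ 1/4 by norm_num),
    costRect (show (1/6:ℝ) ≤ 1/4 by norm_num) (show (1/12:ℝ) ≤ 1/3 by norm_num),
    costRect (show (1/4:ℝ) ≤ 1/3 by norm_num) (show (1/6:ℝ) ≤ 1/4 by norm_num),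
    costRect (show (1/4:ℝ) ≤ 1/3 by norm_num) (show (1/3:ℝ) ≤ 1/2 by norm_num),
    costRect (show (1/3:ℝ) ≤ 1/2 by norm_num) (show (1/4:ℝ) ≤ 1/2 by norm_num)]
  norm_num


/-- **Example 1.2 (the open problem)**: on `I = [-1/2,1/2]` with `f = g = 1_I`, capacity
bound `h̄ = 4·1_{I×I}` and cost `c(x,y) = |x-y|²/2`, the density equal to `4` on the four
diagonal squares of side `1/4` belongs to `Γ(f,g)^h̄` but does NOT minimize `I_c` there. -/
theorem four_squares_not_optimal :
    InGammaBar1 ((Set.Icc (-(1/2) : ℝ) (1/2)).indicator fun _ => 1)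
      ((Set.Icc (-(1/2) : ℝ) (1/2)).indicator fun _ => 1)
      ((Set.Icc (-(1/2) : ℝ) (1/2) ×ˢ Set.Icc (-(1/2) : ℝ) (1/2)).indicator fun _ => 4)
      (((Set.Icc (-(1/2) : ℝ) (-(1/4)) ×ˢ Set.Icc (-(1/2) : ℝ) (-(1/4))) ∪
        (Set.Icc (-(1/4) : ℝ) 0 ×ˢ Set.Icc (-(1/4) : ℝ) 0) ∪
        (Set.Icc (0 : ℝ) (1/4) ×ˢ Set.Icc (0 : ℝ) (1/4)) ∪
        (Set.Icc (1/4 : ℝ) (1/2) ×ˢ Set.Icc (1/4 : ℝ) (1/2))).indicator fun _ => 4) ∧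
    ∃ k, InGammaBar1 ((Set.Icc (-(1/2) : ℝ) (1/2)).indicator fun _ => 1)
        ((Set.Icc (-(1/2) : ℝ) (1/2)).indicator fun _ => 1)
        ((Set.Icc (-(1/2) : ℝ) (1/2) ×ˢ Set.Icc (-(1/2) : ℝ) (1/2)).indicator fun _ => 4) k ∧
      Icost1 (fun p => (1/2) * |p.1 - p.2| ^ 2) k <
        Icost1 (fun p => (1/2) * |p.1 - p.2| ^ 2)
          ((((Set.Icc (-(1/2) : ℝ) (-(1/4)) ×ˢ Set.Icc (-(1/2) : ℝ) (-(1/4))) ∪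
            (Set.Icc (-(1/4) : ℝ) 0 ×ˢ Set.Icc (-(1/4) : ℝ) 0) ∪
            (Set.Icc (0 : ℝ) (1/4) ×ˢ Set.Icc (0 : ℝ) (1/4)) ∪
            (Set.Icc (1/4 : ℝ) (1/2) ×ˢ Set.Icc (1/4 : ℝ) (1/2))).indicator fun _ => 4)) := by
  constructor
  · exact ⟨⟨hh_integrable, hh_nonneg, hh_marg_y, hh_marg_x⟩, hh_le_hbar⟩
  · refine ⟨kk, ⟨⟨kk_integrable, kk_nonneg, kk_marg_y, kk_marg_x⟩, kk_le_hbar⟩, ?_⟩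
    show Icost1 (fun p => (1/2) * |p.1 - p.2| ^ 2) kk <
      Icost1 (fun p => (1/2) * |p.1 - p.2| ^ 2) hh
    rw [kk_cost, hh_cost]
    norm_num
end
end
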